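/- arXiv:2003.04520 — 7 statements merged into one kernel-verified Lean document; each statement's English description precedes it below -/
import Mathlib

section
/- Let A ∈ M_m(M_n) be positive semidefinite. Then (tr A)·I_{mn} + A ≥ I_m ⊗ (tr₁A) + (tr₂A) ⊗ I_n in the Löwner order. -/
open Matrix BigOperators Kronecker ComplexOrder

/-- First partial trace: sum of the diagonal blocks. -/
noncomputable def ptrace1 {n k : ℕ} (H : Matrix (Fin n × Fin k) (Fin n × Fin k) ℂ) :
    Matrix (Fin k) (Fin k) ℂ :=
  Matrix.of fun l m => ∑ i : Fin n, H (i, l) (i, m)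

/-- Second partial trace: matrix of traces of the blocks. -/
noncomputable def ptrace2 {n k : ℕ} (H : Matrix (Fin n × Fin k) (Fin n × Fin k) ℂ) :
    Matrix (Fin n) (Fin n) ℂ :=
  Matrix.of fun i j => ∑ l : Fin k, H (i, l) (j, l)

open Complex Finset


section helpers
variable {ι : Type*} [Fintype ι]

noncomputable def ip (u v : ι → ℂ) : ℂ := ∑ i, (starRingEnd ℂ) (u i) * v i

noncomputable def nsum (u : ι → ℂ) : ℝ := ∑ i, Complex.normSq (u i)

lemma nsum_nonneg (u : ι → ℂ) : 0 ≤ nsum u := Finset.sum_nonneg fun i _ => normSq_nonneg _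

lemma ip_self (u : ι → ℂ) : ip u u = (nsum u : ℂ) := by
  simp [ip, nsum, ← normSq_eq_conj_mul_self]

lemma ip_comm (u v : ι → ℂ) : ip u v = (starRingEnd ℂ) (ip v u) := by
  simp only [ip, map_sum, _root_.map_mul, Complex.conj_conj]
  exact Finset.sum_congr rfl fun i _ => mul_comm _ _

lemma ip_expand (p q q' : ι → ℂ) (α β γ : ℂ) :
    ip (fun i => α * p i - β * q i - γ * q' i) (fun i => α * p i - β * q i - γ * q' i)
      = (starRingEnd ℂ) α * α * ip p p + (starRingEnd ℂ) β * β * ip q q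
        + (starRingEnd ℂ) γ * γ * ip q' q'
        - (starRingEnd ℂ) α * β * ip p q - (starRingEnd ℂ) α * γ * ip p q'
        - (starRingEnd ℂ) β * α * ip q p + (starRingEnd ℂ) β * γ * ip q q'
        - (starRingEnd ℂ) γ * α * ip q' p + (starRingEnd ℂ) γ * β * ip q' q := by
  simp only [ip, Finset.mul_sum, ← Finset.sum_add_distrib, ← Finset.sum_sub_distrib]
  exact Finset.sum_congr rfl fun i _ => by simp only [map_sub, _root_.map_mul]; ring

end helpers

section pairsec
variable {ι : Type*} [Fintype ι]

lemma nsum_eq_zero {u : ι → ℂ} (h : nsum u = 0) (i : ι) : u i = 0 := by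
  have := (Finset.sum_eq_zero_iff_of_nonneg (fun j _ => normSq_nonneg (u j))).mp h i (Finset.mem_univ i)
  exact normSq_eq_zero.mp this

lemma expand_re (p q q' : ι → ℂ) (α : ℝ) (β γ : ℂ) (h : ip q q' = 0) :
    0 ≤ α^2 * nsum p + normSq β * nsum q + normSq γ * nsum q'
        - 2*α*(β * (starRingEnd ℂ) (ip q p)).re - 2*α*(γ * (starRingEnd ℂ) (ip q' p)).re := by
  have h' : ip q' q = 0 := by rw [ip_comm, h, map_zero]
  have e := ip_expand p q q' (α : ℂ) β γ
  rw [ip_self] at e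
  rw [ip_self p, ip_self q, ip_self q', h, h', ip_comm p q, ip_comm p q'] at e
  have e2 := congrArg Complex.re e
  rw [Complex.ofReal_re] at e2
  have hw := nsum_nonneg (fun i => (α:ℂ) * p i - β * q i - γ * q' i)
  rw [e2] at hw
  refine le_trans hw (le_of_eq ?_)
  simp only [Complex.conj_ofReal, mul_zero, zero_mul, add_zero, sub_zero,
    Complex.add_re, Complex.sub_re, Complex.mul_re, Complex.mul_im, Complex.ofReal_re, Complex.ofReal_im,
    Complex.conj_re, Complex.conj_im, Complex.normSq_apply]
  ring

lemma cs_mul (q p : ι → ℂ) : normSq (ip q p) ≤ nsum q * nsum p := by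
  rcases eq_or_lt_of_le (nsum_nonneg q) with hd | hd
  · have hz : ip q p = 0 := by
      simp [ip]
      exact Finset.sum_eq_zero fun i _ => by rw [nsum_eq_zero hd.symm i]; simp
    rw [hz, ← hd]
    simp
  · have h := expand_re p q (fun _ => 0) (nsum q) (ip q p) 0 (by simp [ip])
    rw [Complex.mul_conj] at h
    simp only [Complex.ofReal_re, map_zero, zero_mul, mul_zero, normSq_zero, add_zero,
      sub_zero, Complex.zero_re] at h
    nlinarith [h, hd]

lemma bessel_mul {q q' : ι → ℂ} (p : ι → ℂ) (horth : ip q q' = 0)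
    (hd : 0 < nsum q) (hd' : 0 < nsum q') :
    nsum q' * normSq (ip q p) + nsum q * normSq (ip q' p) ≤ (nsum q * nsum q') * nsum p := by
  set d := nsum q with hdd
  set d' := nsum q' with hdd'
  have h := expand_re p q q' (d * d') ((d':ℂ) * ip q p) ((d:ℂ) * ip q' p) horth
  have r1 : (((d':ℂ) * ip q p) * (starRingEnd ℂ) (ip q p)).re = d' * normSq (ip q p) := by
    rw [mul_assoc, Complex.mul_conj]
    simp
  have r2 : (((d:ℂ) * ip q' p) * (starRingEnd ℂ) (ip q' p)).re = d * normSq (ip q' p) := by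
    rw [mul_assoc, Complex.mul_conj]
    simp
  rw [r1, r2] at h
  simp only [Complex.normSq_mul, Complex.normSq_ofReal] at h
  nlinarith [h, mul_pos hd hd', hd, hd', normSq_nonneg (ip q p), normSq_nonneg (ip q' p)]

lemma pair {q q' : ι → ℂ} (p p' : ι → ℂ) (horth : ip q q' = 0) :
    normSq (ip q p') + normSq (ip q' p)
      ≤ nsum q * nsum p' + nsum q' * nsum p + 2 * (ip q p * (starRingEnd ℂ) (ip q' p')).re := by
  rcases eq_or_lt_of_le (nsum_nonneg q) with hd | hd
  · have hz : ∀ v : ι → ℂ, ip q v = 0 := fun v => by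
      simp only [ip]
      exact Finset.sum_eq_zero fun i _ => by rw [nsum_eq_zero hd.symm i]; simp
    rw [hz p', hz p]
    simp only [map_zero, normSq_zero, zero_add, zero_mul, mul_zero, Complex.zero_re, add_zero]
    nlinarith [cs_mul q' p, mul_nonneg (nsum_nonneg q) (nsum_nonneg p')]
  rcases eq_or_lt_of_le (nsum_nonneg q') with hd' | hd'
  · have hz : ∀ v : ι → ℂ, ip q' v = 0 := fun v => by
      simp only [ip]
      exact Finset.sum_eq_zero fun i _ => by rw [nsum_eq_zero hd'.symm i]; simp
    rw [hz p, hz p']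
    simp only [map_zero, normSq_zero, add_zero, zero_mul, mul_zero, Complex.zero_re]
    nlinarith [cs_mul q p', mul_nonneg (nsum_nonneg q') (nsum_nonneg p)]
  · have b1 := bessel_mul p horth hd hd'
    have b2 := bessel_mul p' horth hd hd'
    rw [← Complex.sq_norm, ← Complex.sq_norm] at b1 b2 ⊢
    have habs : -(‖ip q p‖ * ‖ip q' p'‖) ≤ (ip q p * (starRingEnd ℂ) (ip q' p')).re := by
      have h1 := Complex.abs_re_le_norm (ip q p * (starRingEnd ℂ) (ip q' p'))
      rw [norm_mul, Complex.norm_conj] at h1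
      linarith [neg_abs_le ((ip q p * (starRingEnd ℂ) (ip q' p')).re), h1]
    have m1 := mul_le_mul_of_nonneg_left b2 hd.le
    have m2 := mul_le_mul_of_nonneg_left b1 hd'.le
    nlinarith [m1, m2, habs, mul_pos hd hd',
      sq_nonneg (nsum q' * ‖ip q p‖ - nsum q * ‖ip q' p'‖),
      norm_nonneg (ip q p), norm_nonneg (ip q' p')]

end pairsec

section orthsec
variable {α β : Type*} [Fintype α] [Fintype β] [DecidableEq β]

noncomputable def frob (M : Matrix α β ℂ) : ℝ := ∑ i, ∑ j, Complex.normSq (M i j)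

lemma sum_swap_factor {A B C C' : Type*} [Fintype A] [Fintype B] [Fintype C] [Fintype C']
    (F : A → C → C' → ℂ) (G : B → C → C' → ℂ) :
    ∑ i, ∑ j, ∑ c, ∑ c', F i c c' * G j c c'
      = ∑ c, ∑ c', (∑ i, F i c c') * (∑ j, G j c c') := by
  have h1 : ∀ i, ∑ j, ∑ c, ∑ c', F i c c' * G j c c'
      = ∑ c, ∑ c', F i c c' * ∑ j, G j c c' := fun i => by
    rw [Finset.sum_comm]
    refine Finset.sum_congr rfl fun cc _ => ?_
    rw [Finset.sum_comm]
    exact Finset.sum_congr rfl fun c' _ => by rw [← Finset.mul_sum]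
  simp_rw [h1]
  rw [Finset.sum_comm]
  refine Finset.sum_congr rfl fun cc _ => ?_
  rw [Finset.sum_comm]
  exact Finset.sum_congr rfl fun c' _ => by rw [← Finset.sum_mul]

lemma orth (P Q : Matrix α β ℂ)
    (horth : ∀ k l : β, k ≠ l → ip (fun i => Q i k) (fun i => Q i l) = 0) :
    frob (P * Qᴴ) + frob (Qᴴ * P) ≤ frob P * frob Q + Complex.normSq (Qᴴ * P).trace := by
  set c : β → β → ℂ := fun k l => ip (fun i => Q i k) (fun i => P i l) with hc
  set d : β → ℝ := fun k => nsum (fun i => Q i k) with hd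
  set e : β → ℝ := fun l => nsum (fun i => P i l) with he
  -- (1) frob (Qᴴ * P)
  have h1 : frob (Qᴴ * P) = ∑ k, ∑ l, Complex.normSq (c k l) := by
    simp [frob, Matrix.mul_apply, Matrix.conjTranspose_apply, hc, ip]
  -- (2) trace
  have h2 : (Qᴴ * P).trace = ∑ k, c k k := by
    simp [Matrix.trace, Matrix.diag, Matrix.mul_apply, Matrix.conjTranspose_apply, hc, ip]
  -- (3),(4)
  have h3 : frob P = ∑ l, e l := by
    rw [frob, Finset.sum_comm]; rfl
  have h4 : frob Q = ∑ k, d k := by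
    rw [frob, Finset.sum_comm]; rfl
  -- (5) frob (P * Qᴴ) = ∑ k, e k * d k
  have h5 : (frob (P * Qᴴ) : ℂ) = ∑ k, ((e k : ℂ) * (d k : ℂ)) := by
    have expand : ∀ (i j : α), ((Complex.normSq ((P * Qᴴ) i j) : ℂ))
        = ∑ k, ∑ k', ((starRingEnd ℂ) (P i k) * P i k')
            * ((starRingEnd ℂ) (Q j k') * Q j k) := by
      intro i j
      rw [normSq_eq_conj_mul_self]
      simp only [Matrix.mul_apply, Matrix.conjTranspose_apply, Complex.star_def, map_sum,
        _root_.map_mul, Complex.conj_conj]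
      rw [Finset.sum_mul_sum]
      exact Finset.sum_congr rfl fun k _ => Finset.sum_congr rfl fun k' _ => by ring
    calc (frob (P * Qᴴ) : ℂ) = ∑ i, ∑ j, ((Complex.normSq ((P * Qᴴ) i j)) : ℂ) := by
          push_cast [frob]; rfl
      _ = ∑ i, ∑ j, ∑ k, ∑ k', ((starRingEnd ℂ) (P i k) * P i k')
            * ((starRingEnd ℂ) (Q j k') * Q j k) := by simp_rw [expand]
      _ = ∑ k, ∑ k', (∑ i, (starRingEnd ℂ) (P i k) * P i k')
            * (∑ j, (starRingEnd ℂ) (Q j k') * Q j k) := sum_swap_factor _ _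
      _ = ∑ k, ((e k : ℂ) * (d k : ℂ)) := by
          refine Finset.sum_congr rfl fun k _ => ?_
          rw [Finset.sum_eq_single k]
          · have e1 : (∑ i, (starRingEnd ℂ) (P i k) * P i k) = (e k : ℂ) := ip_self _
            have e2 : (∑ j, (starRingEnd ℂ) (Q j k) * Q j k) = (d k : ℂ) := ip_self _
            rw [e1, e2]
          · intro k' _ hk'
            have : (∑ j, (starRingEnd ℂ) (Q j k') * Q j k) = 0 := horth k' k hk'
            rw [this, mul_zero]
          · intro h; exact absurd (Finset.mem_univ k) h
  have h5' : frob (P * Qᴴ) = ∑ k, e k * d k := by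
    have := h5
    push_cast at this
    exact_mod_cast this
  -- main assembly
  set F : β → β → ℝ := fun k l => d k * e l - Complex.normSq (c k l)
      + (c k k * (starRingEnd ℂ) (c l l)).re with hF
  have ha : Complex.normSq ((Qᴴ * P).trace) = ∑ k, ∑ l, (c k k * (starRingEnd ℂ) (c l l)).re := by
    rw [h2]
    calc Complex.normSq (∑ k, c k k)
        = ((∑ k, c k k) * (starRingEnd ℂ) (∑ k, c k k)).re := by
          rw [Complex.mul_conj, Complex.ofReal_re]
      _ = (∑ k, ∑ l, c k k * (starRingEnd ℂ) (c l l)).re := by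
          rw [map_sum, Finset.sum_mul_sum]
      _ = ∑ k, ∑ l, (c k k * (starRingEnd ℂ) (c l l)).re := by
          rw [Complex.re_sum]
          exact Finset.sum_congr rfl fun k _ => Complex.re_sum _ _
  have hb : (∑ l, e l) * (∑ k, d k) = ∑ k, ∑ l, d k * e l := by
    rw [Finset.sum_mul_sum]
    rw [Finset.sum_comm]
    exact Finset.sum_congr rfl fun k _ => Finset.sum_congr rfl fun l _ => mul_comm _ _
  -- symmetrized nonnegativity
  have hpair : ∀ k l : β, k ≠ l → 0 ≤ F k l + F l k := by
    intro k l hkl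
    have hp := pair (q := fun i => Q i k) (q' := fun i => Q i l)
      (fun i => P i k) (fun i => P i l) (horth k l hkl)
    have hre : (c l l * (starRingEnd ℂ) (c k k)).re = (c k k * (starRingEnd ℂ) (c l l)).re := by
      have : c l l * (starRingEnd ℂ) (c k k) = (starRingEnd ℂ) (c k k * (starRingEnd ℂ) (c l l)) := by
        rw [_root_.map_mul, Complex.conj_conj]; ring
      rw [this, Complex.conj_re]
    simp only [hF]
    rw [hre]
    -- hp : normSq (c k l) + normSq (c l k) ≤ d k * e l + d l * e k + 2 * (c k k * conj (c l l)).re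
    linarith [hp]
  have hnonneg : 0 ≤ ∑ k, ∑ l, (if k = l then 0 else F k l + F l k) := by
    refine Finset.sum_nonneg fun k _ => Finset.sum_nonneg fun l _ => ?_
    by_cases h : k = l
    · simp [h]
    · simpa [h] using hpair k l h
  have hsplit : ∀ (G : β → ℝ) (k : β), (∑ l, if k = l then 0 else G l) = (∑ l, G l) - G k := by
    intro G k
    have h : ∀ l, (if k = l then 0 else G l) = G l - (if k = l then G l else 0) := by
      intro l; by_cases h : k = l <;> simp [h]
    simp_rw [h]
    rw [Finset.sum_sub_distrib, Finset.sum_ite_eq]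
    simp
  have hFkk : ∀ k, F k k = d k * e k := fun k => by
    simp only [hF]
    rw [Complex.mul_conj, Complex.ofReal_re]
    ring
  have hsum2 : ∑ k, ∑ l, F l k = ∑ k, ∑ l, F k l := Finset.sum_comm
  have hFsum : ∑ k, ∑ l, F k l
      = (∑ k, ∑ l, d k * e l) - (∑ k, ∑ l, Complex.normSq (c k l))
        + ∑ k, ∑ l, (c k k * (starRingEnd ℂ) (c l l)).re := by
    rw [← Finset.sum_sub_distrib, ← Finset.sum_add_distrib]
    refine Finset.sum_congr rfl fun k _ => ?_
    rw [← Finset.sum_sub_distrib, ← Finset.sum_add_distrib]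
  have key2 : 0 ≤ (∑ k, ∑ l, F k l) - ∑ k, F k k := by
    have h0 := hnonneg
    have hr : ∑ k, ∑ l, (if k = l then 0 else F k l + F l k)
        = ∑ k, ((∑ l, (F k l + F l k)) - (F k k + F k k)) :=
      Finset.sum_congr rfl fun k _ => hsplit (fun l => F k l + F l k) k
    rw [hr] at h0
    rw [Finset.sum_sub_distrib] at h0
    have e1 : ∑ k, (∑ l, (F k l + F l k)) = (∑ k, ∑ l, F k l) + ∑ k, ∑ l, F l k := by
      rw [← Finset.sum_add_distrib]
      exact Finset.sum_congr rfl fun k _ => Finset.sum_add_distrib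
    rw [e1, hsum2] at h0
    have e2 : ∑ k, (F k k + F k k) = (∑ k, F k k) + ∑ k, F k k := Finset.sum_add_distrib
    rw [e2] at h0
    linarith [h0]
  have hdiag : ∑ k, e k * d k = ∑ k, F k k := by
    refine Finset.sum_congr rfl fun k _ => ?_
    rw [hFkk k, mul_comm]
  rw [h1, h3, h4, h5', ha]
  have hb' : (∑ l : β, e l) * (∑ k : β, d k) = ∑ k, ∑ l, d k * e l := hb
  rw [hb']
  rw [hdiag]
  linarith [key2, hFsum]
end orthsec

section matsec
variable {α β : Type*} [Fintype α] [Fintype β] [DecidableEq β]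

lemma frob_eq_trace (M : Matrix α β ℂ) : ((frob M : ℝ) : ℂ) = (Mᴴ * M).trace := by
  rw [frob]
  push_cast
  rw [Finset.sum_comm]
  simp only [Matrix.trace, Matrix.diag, Matrix.mul_apply, Matrix.conjTranspose_apply,
    normSq_eq_conj_mul_self, Complex.star_def]

lemma frob_mul_unitary (M : Matrix α β ℂ) (U : Matrix β β ℂ) (hU : U * Uᴴ = 1) :
    frob (M * U) = frob M := by
  have h : ((frob (M * U) : ℝ) : ℂ) = ((frob M : ℝ) : ℂ) := by
    rw [frob_eq_trace, frob_eq_trace, Matrix.conjTranspose_mul]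
    rw [show Uᴴ * Mᴴ * (M * U) = Uᴴ * ((Mᴴ * M) * U) by rw [Matrix.mul_assoc, Matrix.mul_assoc]]
    rw [Matrix.trace_mul_comm, Matrix.mul_assoc, hU, Matrix.mul_one]
  exact_mod_cast h

lemma frob_conj_unitary (N : Matrix β β ℂ) (U : Matrix β β ℂ) (hU : U * Uᴴ = 1)
    (hU' : Uᴴ * U = 1) : frob (Uᴴ * N * U) = frob N := by
  have h : ((frob (Uᴴ * N * U) : ℝ) : ℂ) = ((frob N : ℝ) : ℂ) := by
    rw [frob_eq_trace, frob_eq_trace]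
    rw [show (Uᴴ * N * U)ᴴ * (Uᴴ * N * U) = Uᴴ * (Nᴴ * ((U * Uᴴ) * (N * U))) by
      simp only [Matrix.conjTranspose_mul, Matrix.conjTranspose_conjTranspose, Matrix.mul_assoc]]
    rw [hU, Matrix.one_mul, Matrix.trace_mul_comm]
    rw [show Nᴴ * (N * U) * Uᴴ = Nᴴ * N * (U * Uᴴ) by simp only [Matrix.mul_assoc]]
    rw [hU, Matrix.mul_one]
  exact_mod_cast h

lemma mat (P Q : Matrix α β ℂ) :
    frob (P * Qᴴ) + frob (Qᴴ * P) ≤ frob P * frob Q + Complex.normSq (Qᴴ * P).trace := by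
  have hH : (Qᴴ * Q).IsHermitian := Matrix.isHermitian_conjTranspose_mul_self Q
  set U : Matrix β β ℂ := (Matrix.IsHermitian.eigenvectorUnitary hH : Matrix β β ℂ) with hUdef
  have hU1 : U * Uᴴ = 1 := by
    rw [← Matrix.star_eq_conjTranspose]
    exact (Matrix.mem_unitaryGroup_iff).mp (Matrix.IsHermitian.eigenvectorUnitary hH).2
  have hU2 : Uᴴ * U = 1 := by
    rw [← Matrix.star_eq_conjTranspose]
    exact (Matrix.mem_unitaryGroup_iff').mp (Matrix.IsHermitian.eigenvectorUnitary hH).2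
  have hdiag : (Q * U)ᴴ * (Q * U) = Matrix.diagonal (RCLike.ofReal ∘ hH.eigenvalues) := by
    rw [show (Q * U)ᴴ * (Q * U) = Uᴴ * (Qᴴ * Q) * U by
      simp only [Matrix.conjTranspose_mul, Matrix.mul_assoc]]
    rw [← Matrix.star_eq_conjTranspose]
    simpa using hH.conjStarAlgAut_star_eigenvectorUnitary
  have horth : ∀ k l : β, k ≠ l →
      ip (fun i => (Q * U) i k) (fun i => (Q * U) i l) = 0 := by
    intro k l hkl
    have hent : ((Q * U)ᴴ * (Q * U)) k l
        = ip (fun i => (Q * U) i k) (fun i => (Q * U) i l) := by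
      rw [Matrix.mul_apply]
      simp only [Matrix.conjTranspose_apply, ip, Complex.star_def]
    rw [← hent, hdiag]
    exact Matrix.diagonal_apply_ne _ hkl
  have key := orth (P * U) (Q * U) horth
  have e1 : (P * U) * (Q * U)ᴴ = P * Qᴴ := by
    rw [Matrix.conjTranspose_mul]
    rw [show P * U * (Uᴴ * Qᴴ) = P * ((U * Uᴴ) * Qᴴ) by simp only [Matrix.mul_assoc]]
    rw [hU1, Matrix.one_mul]
  have e2 : (Q * U)ᴴ * (P * U) = Uᴴ * (Qᴴ * P) * U := by
    simp only [Matrix.conjTranspose_mul, Matrix.mul_assoc]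
  have e3 : frob (Uᴴ * (Qᴴ * P) * U) = frob (Qᴴ * P) := frob_conj_unitary _ _ hU1 hU2
  have e4 : frob (P * U) = frob P := frob_mul_unitary _ _ hU1
  have e5 : frob (Q * U) = frob Q := frob_mul_unitary _ _ hU1
  have e6 : (Uᴴ * (Qᴴ * P) * U).trace = (Qᴴ * P).trace := by
    rw [Matrix.trace_mul_comm]
    rw [show U * (Uᴴ * (Qᴴ * P)) = (U * Uᴴ) * (Qᴴ * P) by simp only [Matrix.mul_assoc]]
    rw [hU1, Matrix.one_mul]
  rw [e1, e2, e3, e4, e5, e6] at key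
  exact key
end matsec

lemma key {ι κ : Type*} [Fintype ι] [Fintype κ] [DecidableEq κ] (V X : ι → κ → ℂ) :
    (∑ i, ∑ j, Complex.normSq (∑ l, V j l * X i l))
      + (∑ k, ∑ l, Complex.normSq (∑ j, V j l * X j k))
      ≤ (∑ j, ∑ l, Complex.normSq (V j l)) * (∑ i, ∑ k, Complex.normSq (X i k))
        + Complex.normSq (∑ j, ∑ l, V j l * X j l) := by
  have h := mat (Matrix.of X) (Matrix.of fun j l => (starRingEnd ℂ) (V j l))
  have hA : frob (Matrix.of X * (Matrix.of fun j l => (starRingEnd ℂ) (V j l))ᴴ)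
      = ∑ i, ∑ j, Complex.normSq (∑ l, V j l * X i l) := by
    simp only [frob, Matrix.mul_apply, Matrix.conjTranspose_apply, Matrix.of_apply,
      Complex.star_def, Complex.conj_conj]
    exact Finset.sum_congr rfl fun i _ => Finset.sum_congr rfl fun j _ =>
      congrArg Complex.normSq (Finset.sum_congr rfl fun l _ => mul_comm _ _)
  have hB : frob ((Matrix.of fun j l => (starRingEnd ℂ) (V j l))ᴴ * Matrix.of X)
      = ∑ k, ∑ l, Complex.normSq (∑ j, V j l * X j k) := by
    simp only [frob, Matrix.mul_apply, Matrix.conjTranspose_apply, Matrix.of_apply,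
      Complex.star_def, Complex.conj_conj]
    exact Finset.sum_comm
  have hC : frob (Matrix.of fun j l => (starRingEnd ℂ) (V j l)) = ∑ j, ∑ l, Complex.normSq (V j l) := by
    simp only [frob, Matrix.of_apply, Complex.normSq_conj]
  have hD : frob (Matrix.of X) = ∑ i, ∑ k, Complex.normSq (X i k) := by
    simp only [frob, Matrix.of_apply]
  have hE : ((Matrix.of fun j l => (starRingEnd ℂ) (V j l))ᴴ * Matrix.of X).trace
      = ∑ j, ∑ l, V j l * X j l := by
    simp only [Matrix.trace, Matrix.diag, Matrix.mul_apply, Matrix.conjTranspose_apply,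
      Matrix.of_apply, Complex.star_def, Complex.conj_conj]
    exact Finset.sum_comm
  rw [hA, hB, hC, hD, hE, mul_comm] at h
  exact h

lemma star_dot_self {ι : Type*} [Fintype ι] (v : ι → ℂ) :
    dotProduct (star v) v = ((∑ i, Complex.normSq (v i) : ℝ) : ℂ) := by
  rw [dotProduct]
  push_cast
  exact Finset.sum_congr rfl fun i _ => by
    rw [Pi.star_apply, Complex.star_def, ← normSq_eq_conj_mul_self]

lemma quadform {a b : Type*} [Fintype a] [Fintype b] (C : Matrix a b ℂ) (x : b → ℂ) :
    dotProduct (star x) ((Cᴴ * C) *ᵥ x)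
      = ((∑ q, Complex.normSq ((C *ᵥ x) q) : ℝ) : ℂ) := by
  rw [← Matrix.mulVec_mulVec, dotProduct_mulVec, ← Matrix.star_mulVec]
  exact star_dot_self _


/-- Ando: (tr A)·I_{mn} + A ≥ I_m ⊗ tr₁A + (tr₂A) ⊗ I_n. -/
theorem stmt11 {m n : ℕ}
    (A : Matrix (Fin m × Fin n) (Fin m × Fin n) ℂ) (hA : A.PosSemidef) :
    ((A.trace • (1 : Matrix (Fin m × Fin n) (Fin m × Fin n) ℂ) + A) -
      ((1 : Matrix (Fin m) (Fin m) ℂ) ⊗ₖ ptrace1 A +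
        ptrace2 A ⊗ₖ (1 : Matrix (Fin n) (Fin n) ℂ))).PosSemidef := by
  classical
  obtain ⟨B, hB⟩ : ∃ B : Matrix (Fin m × Fin n) (Fin m × Fin n) ℂ, A = Bᴴ * B := by
    open scoped MatrixOrder in
    obtain ⟨B, hB⟩ := CStarAlgebra.nonneg_iff_eq_star_mul_self.mp hA.nonneg
    exact ⟨B, hB⟩
  set C0 : Matrix ((Fin m × Fin n) × (Fin m × Fin n) × (Fin m × Fin n)) (Fin m × Fin n) ℂ :=
    Matrix.of fun q p => if p = q.2.2 then B q.1 q.2.1 else 0 with hC0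
  set C1 : Matrix ((Fin m × Fin n) × (Fin m × Fin m)) (Fin m × Fin n) ℂ :=
    Matrix.of fun q p => if p.1 = q.2.1 then B q.1 (q.2.2, p.2) else 0 with hC1
  set C2 : Matrix ((Fin m × Fin n) × (Fin n × Fin n)) (Fin m × Fin n) ℂ :=
    Matrix.of fun q p => if p.2 = q.2.2 then B q.1 (p.1, q.2.1) else 0 with hC2
  have hM0 : A.trace • (1 : Matrix (Fin m × Fin n) (Fin m × Fin n) ℂ) = C0ᴴ * C0 := by
    ext p p'
    rw [Matrix.mul_apply]
    have hq : ∀ q : (Fin m × Fin n) × (Fin m × Fin n) × (Fin m × Fin n),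
        (C0ᴴ) p q * C0 q p'
          = (if p' = q.2.2 then (if p = q.2.2 then
              (starRingEnd ℂ) (B q.1 q.2.1) * B q.1 q.2.1 else 0) else 0) := by
      intro q
      simp only [Matrix.conjTranspose_apply, hC0, Matrix.of_apply, apply_ite, star_zero,
        ite_mul, zero_mul, mul_ite, mul_zero, Complex.star_def]
      split_ifs <;> simp_all
    simp_rw [hq]
    rw [Fintype.sum_prod_type]
    by_cases h : p = p'
    · subst h
      simp only [Matrix.smul_apply, Matrix.one_apply_eq, smul_eq_mul, mul_one]
      rw [hB, Matrix.trace]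
      simp only [Matrix.diag, Matrix.mul_apply, Matrix.conjTranspose_apply, Complex.star_def]
      rw [Finset.sum_comm]
      refine Finset.sum_congr rfl fun r _ => ?_
      symm
      conv_lhs => rw [Fintype.sum_prod_type]
      refine Finset.sum_congr rfl fun (p'' : Fin m × Fin n) _ => ?_
      rw [Finset.sum_eq_single p]
      · simp
      · intro a _ ha; simp [Ne.symm ha]
      · intro hh; exact absurd (Finset.mem_univ _) hh
    · simp only [Matrix.smul_apply, Matrix.one_apply_ne h, smul_eq_mul, mul_zero]
      symm
      refine Finset.sum_eq_zero fun r _ => Finset.sum_eq_zero fun w _ => ?_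
      by_cases h1 : p' = w.2
      · rw [if_pos h1, if_neg (by rw [← h1]; exact h)]
      · rw [if_neg h1]
  have hM1 : (1 : Matrix (Fin m) (Fin m) ℂ) ⊗ₖ ptrace1 A = C1ᴴ * C1 := by
    ext ⟨i, k⟩ ⟨i', l⟩
    rw [Matrix.mul_apply]
    have hq : ∀ q : (Fin m × Fin n) × (Fin m × Fin m),
        (C1ᴴ) (i, k) q * C1 q (i', l)
          = (if i' = q.2.1 then (if i = q.2.1 then
              (starRingEnd ℂ) (B q.1 (q.2.2, k)) * B q.1 (q.2.2, l) else 0) else 0) := by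
      intro q
      simp only [Matrix.conjTranspose_apply, hC1, Matrix.of_apply, apply_ite, star_zero,
        ite_mul, zero_mul, mul_ite, mul_zero, Complex.star_def]
      split_ifs <;> simp_all
    simp_rw [hq]
    rw [Fintype.sum_prod_type]
    by_cases h : i = i'
    · subst h
      simp only [Matrix.kroneckerMap_apply, Matrix.one_apply_eq, one_mul, ptrace1,
        Matrix.of_apply, hB, Matrix.mul_apply, Matrix.conjTranspose_apply, Complex.star_def]
      rw [Finset.sum_comm]
      refine Finset.sum_congr rfl fun r _ => ?_
      rw [Fintype.sum_prod_type]
      symm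
      rw [Finset.sum_eq_single i]
      · simp
      · intro a _ ha; simp [Ne.symm ha]
      · intro hh; exact absurd (Finset.mem_univ _) hh
    · simp only [Matrix.kroneckerMap_apply, Matrix.one_apply_ne h, zero_mul]
      symm
      refine Finset.sum_eq_zero fun r _ => Finset.sum_eq_zero fun w _ => ?_
      by_cases h1 : i' = w.1
      · rw [if_pos h1, if_neg (by rw [← h1]; exact h)]
      · rw [if_neg h1]
  have hM2 : ptrace2 A ⊗ₖ (1 : Matrix (Fin n) (Fin n) ℂ) = C2ᴴ * C2 := by
    ext ⟨j, k⟩ ⟨j', k'⟩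
    rw [Matrix.mul_apply]
    have hq : ∀ q : (Fin m × Fin n) × (Fin n × Fin n),
        (C2ᴴ) (j, k) q * C2 q (j', k')
          = (if k' = q.2.2 then (if k = q.2.2 then
              (starRingEnd ℂ) (B q.1 (j, q.2.1)) * B q.1 (j', q.2.1) else 0) else 0) := by
      intro q
      simp only [Matrix.conjTranspose_apply, hC2, Matrix.of_apply, apply_ite, star_zero,
        ite_mul, zero_mul, mul_ite, mul_zero, Complex.star_def]
      split_ifs <;> simp_all
    simp_rw [hq]
    rw [Fintype.sum_prod_type]
    by_cases h : k = k'
    · subst h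
      simp only [Matrix.kroneckerMap_apply, Matrix.one_apply_eq, mul_one, ptrace2,
        Matrix.of_apply, hB, Matrix.mul_apply, Matrix.conjTranspose_apply, Complex.star_def]
      rw [Finset.sum_comm]
      refine Finset.sum_congr rfl fun r _ => ?_
      rw [Fintype.sum_prod_type]
      symm
      refine Finset.sum_congr rfl fun l _ => ?_
      rw [Finset.sum_eq_single k]
      · simp
      · intro a _ ha; simp [Ne.symm ha]
      · intro hh; exact absurd (Finset.mem_univ _) hh
    · simp only [Matrix.kroneckerMap_apply, Matrix.one_apply_ne h, mul_zero]
      symm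
      refine Finset.sum_eq_zero fun r _ => Finset.sum_eq_zero fun w _ => ?_
      by_cases h1 : k' = w.2
      · rw [if_pos h1, if_neg (by rw [← h1]; exact h)]
      · rw [if_neg h1]
  rw [hM0, hM1, hM2, hB]
  refine Matrix.PosSemidef.of_dotProduct_mulVec_nonneg ?_ ?_
  · exact (((Matrix.isHermitian_conjTranspose_mul_self C0).add
      (Matrix.isHermitian_conjTranspose_mul_self B)).sub
      ((Matrix.isHermitian_conjTranspose_mul_self C1).add
        (Matrix.isHermitian_conjTranspose_mul_self C2)))
  intro x
  rw [Matrix.sub_mulVec, Matrix.add_mulVec, Matrix.add_mulVec, dotProduct_sub,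
    dotProduct_add, dotProduct_add, quadform, quadform, quadform, quadform]
  rw [← Complex.ofReal_add, ← Complex.ofReal_add, ← Complex.ofReal_sub]
  rw [Complex.zero_le_real]
  -- per-entry evaluations
  have e0 : ∀ q, (C0 *ᵥ x) q = B q.1 q.2.1 * x q.2.2 := by
    intro q
    simp [Matrix.mulVec, dotProduct, hC0, ite_mul, zero_mul]
  have e1 : ∀ q, (C1 *ᵥ x) q = ∑ l, B q.1 (q.2.2, l) * x (q.2.1, l) := by
    intro q
    rw [Matrix.mulVec, show (dotProduct (C1 q) x) = ∑ p, C1 q p * x p from rfl]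
    rw [Fintype.sum_prod_type]
    rw [Finset.sum_eq_single q.2.1]
    · simp [hC1]
    · intro a _ ha
      simp [hC1, ha]
    · intro h; exact absurd (Finset.mem_univ _) h
  have e2 : ∀ q, (C2 *ᵥ x) q = ∑ j, B q.1 (j, q.2.1) * x (j, q.2.2) := by
    intro q
    rw [Matrix.mulVec, show (dotProduct (C2 q) x) = ∑ p, C2 q p * x p from rfl]
    rw [Fintype.sum_prod_type]
    refine Finset.sum_congr rfl fun j _ => ?_
    rw [Finset.sum_eq_single q.2.2]
    · simp [hC2]
    · intro a _ ha
      simp [hC2, ha]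
    · intro h; exact absurd (Finset.mem_univ _) h
  -- global sums
  have hS0 : ∑ q, Complex.normSq ((C0 *ᵥ x) q)
      = ∑ r, (∑ j, ∑ l, Complex.normSq (B r (j, l))) * (∑ i, ∑ k, Complex.normSq (x (i, k))) := by
    rw [Fintype.sum_prod_type]
    refine Finset.sum_congr rfl fun r _ => ?_
    rw [Fintype.sum_prod_type]
    simp_rw [e0, Complex.normSq_mul]
    rw [← Finset.sum_mul_sum]
    rw [Fintype.sum_prod_type, Fintype.sum_prod_type]
  have hSA : ∀ r, ((B *ᵥ x) r) = ∑ j, ∑ l, B r (j, l) * x (j, l) := by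
    intro r
    rw [Matrix.mulVec, show (dotProduct (B r) x) = ∑ p, B r p * x p from rfl,
      Fintype.sum_prod_type]
  have hS1 : ∑ q, Complex.normSq ((C1 *ᵥ x) q)
      = ∑ r, ∑ i, ∑ j, Complex.normSq (∑ l, B r (j, l) * x (i, l)) := by
    rw [Fintype.sum_prod_type]
    refine Finset.sum_congr rfl fun r _ => ?_
    rw [Fintype.sum_prod_type]
    exact Finset.sum_congr rfl fun i _ => Finset.sum_congr rfl fun j _ => by rw [e1]
  have hS2 : ∑ q, Complex.normSq ((C2 *ᵥ x) q)
      = ∑ r, ∑ k, ∑ l, Complex.normSq (∑ j, B r (j, l) * x (j, k)) := by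
    rw [Fintype.sum_prod_type]
    refine Finset.sum_congr rfl fun r _ => ?_
    rw [Fintype.sum_prod_type]
    rw [Finset.sum_comm]
    exact Finset.sum_congr rfl fun k _ => Finset.sum_congr rfl fun l _ => by rw [e2]
  rw [hS0, hS1, hS2]
  simp_rw [hSA]
  rw [← Finset.sum_add_distrib, ← Finset.sum_add_distrib, ← Finset.sum_sub_distrib]
  refine Finset.sum_nonneg fun r _ => ?_
  have := key (fun j l => B r (j, l)) (fun i k => x (i, k))
  linarith [this]
end

section
/- Let A ∈ M_m(M_n) be positive semidefinite. Then (tr A)·I_{mn} − (tr₂A) ⊗ I_n ≥ A − I_m ⊗ (tr₁A) in the Löwner order. -/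
open Matrix BigOperators Kronecker ComplexOrder
open Complex ComplexConjugate Finset

-- pull lemmas
lemma pull3 {α β γ M : Type*} [Fintype α] [Fintype β] [Fintype γ] [AddCommMonoid M]
    (f : α → β → γ → M) :
    (∑ a, ∑ b, ∑ k, f a b k) = ∑ k, ∑ a, ∑ b, f a b k := by
  calc (∑ a, ∑ b, ∑ k, f a b k) = ∑ a, ∑ k, ∑ b, f a b k :=
        Finset.sum_congr rfl fun _ _ => Finset.sum_comm
  _ = ∑ k, ∑ a, ∑ b, f a b k := Finset.sum_comm

lemma pull4 {α β γ δ M : Type*} [Fintype α] [Fintype β] [Fintype γ] [Fintype δ] [AddCommMonoid M]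
    (f : α → β → γ → δ → M) :
    (∑ a, ∑ b, ∑ c, ∑ k, f a b c k) = ∑ k, ∑ a, ∑ b, ∑ c, f a b c k := by
  calc (∑ a, ∑ b, ∑ c, ∑ k, f a b c k) = ∑ a, ∑ k, ∑ b, ∑ c, f a b c k :=
        Finset.sum_congr rfl fun _ _ => pull3 _
  _ = ∑ k, ∑ a, ∑ b, ∑ c, f a b c k := Finset.sum_comm

lemma pull5 {α β γ δ ε M : Type*} [Fintype α] [Fintype β] [Fintype γ] [Fintype δ] [Fintype ε]
    [AddCommMonoid M] (f : α → β → γ → δ → ε → M) :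
    (∑ a, ∑ b, ∑ c, ∑ d, ∑ k, f a b c d k) = ∑ k, ∑ a, ∑ b, ∑ c, ∑ d, f a b c d k := by
  calc (∑ a, ∑ b, ∑ c, ∑ d, ∑ k, f a b c d k) = ∑ a, ∑ k, ∑ b, ∑ c, ∑ d, f a b c d k :=
        Finset.sum_congr rfl fun _ _ => pull4 _
  _ = ∑ k, ∑ a, ∑ b, ∑ c, ∑ d, f a b c d k := Finset.sum_comm

-- Cauchy-Schwarz per entry
lemma cs_aux {k : ℕ} (f g : Fin k → ℂ) :
    normSq (∑ j, f j * g j) ≤ (∑ j, normSq (f j)) * (∑ j, normSq (g j)) := by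
  have h1 : ‖∑ j, f j * g j‖ ≤ ∑ j, ‖f j‖ * ‖g j‖ := by
    simpa [norm_mul] using norm_sum_le (E := ℂ) Finset.univ (fun j => f j * g j)
  calc normSq (∑ j, f j * g j) = ‖∑ j, f j * g j‖^2 := (Complex.sq_norm _).symm
    _ ≤ (∑ j, ‖f j‖ * ‖g j‖)^2 := by
        apply pow_le_pow_left₀ (norm_nonneg _) h1
    _ ≤ (∑ j, ‖f j‖^2) * (∑ j, ‖g j‖^2) :=
        Finset.sum_mul_sq_le_sq_mul_sq _ _ _
    _ = _ := by simp [Complex.sq_norm]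

lemma qbound {m n : ℕ} (b z : Fin m × Fin n → ℂ) :
    (∑ l : Fin n, ∑ r : Fin n, normSq (∑ j : Fin m, b (j, r) * z (j, l)))
      ≤ (∑ α, normSq (b α)) * (∑ α, normSq (z α)) := by
  have h1 : (∑ l : Fin n, ∑ r : Fin n, normSq (∑ j : Fin m, b (j, r) * z (j, l)))
      ≤ ∑ l : Fin n, ∑ r : Fin n,
          (∑ j : Fin m, normSq (b (j, r))) * (∑ j : Fin m, normSq (z (j, l))) := by
    refine Finset.sum_le_sum fun l _ => Finset.sum_le_sum fun r _ => ?_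
    exact cs_aux (fun j => b (j, r)) (fun j => z (j, l))
  refine h1.trans (le_of_eq ?_)
  have hb : (∑ α : Fin m × Fin n, normSq (b α)) = ∑ r : Fin n, ∑ j : Fin m, normSq (b (j, r)) := by
    rw [Fintype.sum_prod_type]; exact Finset.sum_comm
  have hz : (∑ α : Fin m × Fin n, normSq (z α)) = ∑ l : Fin n, ∑ j : Fin m, normSq (z (j, l)) := by
    rw [Fintype.sum_prod_type]; exact Finset.sum_comm
  rw [Finset.sum_comm, hb, hz, Finset.sum_mul]
  exact Finset.sum_congr rfl fun r _ => (Finset.mul_sum _ _ _).symm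

lemma expand_aux {ι : Type*} [Fintype ι] (a c : ℂ) (u v : ι → ℂ) :
    (∑ α, conj (a * u α - c * v α) * (a * u α - c * v α))
      = conj a * a * (∑ α, conj (u α) * u α) - conj a * c * (∑ α, conj (u α) * v α)
        - conj c * a * (∑ α, conj (v α) * u α) + conj c * c * (∑ α, conj (v α) * v α) := by
  have : ∀ α, conj (a * u α - c * v α) * (a * u α - c * v α)
      = conj a * a * (conj (u α) * u α) - conj a * c * (conj (u α) * v α)
        - conj c * a * (conj (v α) * u α) + conj c * c * (conj (v α) * v α) := by
    intro α; simp only [map_sub, _root_.map_mul]; ring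
  simp only [this, Finset.sum_add_distrib, Finset.sum_sub_distrib, Finset.mul_sum]

/-- the fundamental reindexing identity -/
lemma reindex_aux {m n : ℕ} (b x : Fin m × Fin n → ℂ) :
    (∑ i : Fin m, ∑ p : Fin m,
        (∑ q : Fin n, conj (b (p, q)) * b (i, q)) * (∑ q' : Fin n, b (p, q') * x (i, q')))
      = ∑ l : Fin n, ∑ r : Fin n,
        (∑ j : Fin m, conj (b (j, r)) * b (j, l)) * (∑ j' : Fin m, b (j', r) * x (j', l)) := by
  have lhs_eq : (∑ i : Fin m, ∑ p : Fin m,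
        (∑ q : Fin n, conj (b (p, q)) * b (i, q)) * (∑ q' : Fin n, b (p, q') * x (i, q')))
      = ∑ z : Fin m × Fin m × Fin n × Fin n,
          conj (b (z.2.1, z.2.2.1)) * b (z.1, z.2.2.1) * (b (z.2.1, z.2.2.2) * x (z.1, z.2.2.2)) := by
    rw [Fintype.sum_prod_type]
    refine Finset.sum_congr rfl fun i _ => ?_
    rw [Fintype.sum_prod_type]
    refine Finset.sum_congr rfl fun p _ => ?_
    rw [Fintype.sum_prod_type, Finset.sum_mul_sum]
  have rhs_eq : (∑ l : Fin n, ∑ r : Fin n,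
        (∑ j : Fin m, conj (b (j, r)) * b (j, l)) * (∑ j' : Fin m, b (j', r) * x (j', l)))
      = ∑ z : Fin n × Fin n × Fin m × Fin m,
          conj (b (z.2.2.1, z.2.1)) * b (z.2.2.1, z.1) * (b (z.2.2.2, z.2.1) * x (z.2.2.2, z.1)) := by
    rw [Fintype.sum_prod_type]
    refine Finset.sum_congr rfl fun l _ => ?_
    rw [Fintype.sum_prod_type]
    refine Finset.sum_congr rfl fun r _ => ?_
    rw [Fintype.sum_prod_type, Finset.sum_mul_sum]
  rw [lhs_eq, rhs_eq]
  refine Fintype.sum_equiv ⟨fun z => (z.2.2.2, z.2.2.1, z.2.1, z.1),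
    fun w => (w.2.2.2, w.2.2.1, w.2.1, w.1), fun z => rfl, fun w => rfl⟩ _ _ fun z => ?_
  obtain ⟨i, p, q, q'⟩ := z
  simp only [Equiv.coe_fn_mk]
  ring

lemma fuse {α β M : Type*} [Fintype α] [Fintype β] [AddCommMonoid M] (f : α → β → M) :
    (∑ a, ∑ b, f a b) = ∑ z : α × β, f z.1 z.2 :=
  (Fintype.sum_prod_type (f := fun z : α × β => f z.1 z.2)).symm

lemma nsum_s12 {ι : Type*} [Fintype ι] (z : ι → ℂ) :
    ((∑ α, normSq (z α) : ℝ) : ℂ) = ∑ α, conj (z α) * z α := by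
  push_cast
  exact Finset.sum_congr rfl fun α _ => Complex.normSq_eq_conj_mul_self

lemma key_s12 {m n : ℕ} (b x : Fin m × Fin n → ℂ) :
    (∑ w : Fin n × Fin n, normSq (∑ j : Fin m, b (j, w.2) * x (j, w.1)))
      + normSq (∑ α, b α * x α)
    ≤ (∑ α, normSq (b α)) * (∑ α, normSq (x α))
      + ∑ z : Fin m × Fin m, normSq (∑ q : Fin n, b (z.2, q) * x (z.1, q)) := by
  set t : ℝ := ∑ α, normSq (b α) with ht_def
  set s : ℝ := ∑ α, normSq (x α) with hs_def
  set S : ℂ := ∑ α, b α * x α with hS_def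
  have ht0 : 0 ≤ t := Finset.sum_nonneg fun _ _ => normSq_nonneg _
  rcases eq_or_lt_of_le ht0 with ht | ht
  · -- t = 0, so b = 0
    have hb0 : ∀ α, b α = 0 := by
      intro α
      have hsum : (∑ β, normSq (b β)) = 0 := by rw [← ht_def, ← ht]
      exact normSq_eq_zero.mp ((Finset.sum_eq_zero_iff_of_nonneg
        (fun β _ => normSq_nonneg (b β))).mp hsum α (Finset.mem_univ α))
    have hs0 : 0 ≤ s := Finset.sum_nonneg fun _ _ => normSq_nonneg _
    simp only [hS_def, hb0, zero_mul, Finset.sum_const_zero, normSq_zero, add_zero, zero_add]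
    exact mul_nonneg ht0 hs0
  · -- main case t > 0
    set TC : ℂ := ((t : ℝ) : ℂ) with hTC
    set yv : Fin m × Fin n → ℂ := fun α => TC * x α - S * conj (b α) with hyv
    set Px : Fin m × Fin m → ℂ := fun z => ∑ q, b (z.2, q) * x (z.1, q) with hPx
    set Qx : Fin n × Fin n → ℂ := fun w => ∑ j, b (j, w.2) * x (j, w.1) with hQx
    set Rm : Fin m × Fin m → ℂ := fun z => ∑ q, b (z.2, q) * conj (b (z.1, q)) with hRm
    set Wm : Fin n × Fin n → ℂ := fun w => ∑ j, b (j, w.2) * conj (b (j, w.1)) with hWm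
    set Py : Fin m × Fin m → ℂ := fun z => ∑ q, b (z.2, q) * yv (z.1, q) with hPy0
    set Qy : Fin n × Fin n → ℂ := fun w => ∑ j, b (j, w.2) * yv (j, w.1) with hQy0
    have hconjTC : conj TC = TC := Complex.conj_ofReal t
    have hPy : ∀ z, Py z = TC * Px z - S * Rm z := by
      intro z
      simp only [hPy0, hyv, hPx, hRm, Finset.mul_sum, ← Finset.sum_sub_distrib]
      exact Finset.sum_congr rfl fun q _ => by ring
    have hQy : ∀ w, Qy w = TC * Qx w - S * Wm w := by
      intro w
      simp only [hQy0, hyv, hQx, hWm, Finset.mul_sum, ← Finset.sum_sub_distrib]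
      exact Finset.sum_congr rfl fun j _ => by ring
    -- reindex identities
    have hRconj : ∀ z : Fin m × Fin m, conj (Rm z) = ∑ q, conj (b (z.2, q)) * b (z.1, q) := by
      intro z
      rw [hRm, map_sum]
      exact Finset.sum_congr rfl fun q _ => by rw [_root_.map_mul, Complex.conj_conj]
    have hWconj : ∀ w : Fin n × Fin n, conj (Wm w) = ∑ j, conj (b (j, w.2)) * b (j, w.1) := by
      intro w
      rw [hWm, map_sum]
      exact Finset.sum_congr rfl fun j _ => by rw [_root_.map_mul, Complex.conj_conj]
    have I1 : (∑ z : Fin m × Fin m, conj (Rm z) * Px z)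
        = ∑ w : Fin n × Fin n, conj (Wm w) * Qx w := by
      calc (∑ z : Fin m × Fin m, conj (Rm z) * Px z)
          = ∑ i : Fin m, ∑ p : Fin m,
              (∑ q : Fin n, conj (b (p, q)) * b (i, q)) * (∑ q' : Fin n, b (p, q') * x (i, q')) := by
            rw [fuse (fun i p => (∑ q : Fin n, conj (b (p, q)) * b (i, q)) *
              (∑ q' : Fin n, b (p, q') * x (i, q')))]
            exact Finset.sum_congr rfl fun z _ => by rw [hRconj, hPx]
        _ = ∑ l : Fin n, ∑ r : Fin n,
              (∑ j : Fin m, conj (b (j, r)) * b (j, l)) * (∑ j' : Fin m, b (j', r) * x (j', l)) :=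
            reindex_aux b x
        _ = ∑ w : Fin n × Fin n, conj (Wm w) * Qx w := by
            rw [fuse (fun l r => (∑ j : Fin m, conj (b (j, r)) * b (j, l)) *
              (∑ j' : Fin m, b (j', r) * x (j', l)))]
            exact Finset.sum_congr rfl fun w _ => by rw [hWconj, hQx]
    have I2 : (∑ z : Fin m × Fin m, conj (Rm z) * Rm z)
        = ∑ w : Fin n × Fin n, conj (Wm w) * Wm w := by
      calc (∑ z : Fin m × Fin m, conj (Rm z) * Rm z)
          = ∑ i : Fin m, ∑ p : Fin m,
              (∑ q : Fin n, conj (b (p, q)) * b (i, q)) *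
                (∑ q' : Fin n, b (p, q') * conj (b (i, q'))) := by
            rw [fuse (fun i p => (∑ q : Fin n, conj (b (p, q)) * b (i, q)) *
              (∑ q' : Fin n, b (p, q') * conj (b (i, q'))))]
            exact Finset.sum_congr rfl fun z _ => by rw [hRconj, hRm]
        _ = ∑ l : Fin n, ∑ r : Fin n,
              (∑ j : Fin m, conj (b (j, r)) * b (j, l)) *
                (∑ j' : Fin m, b (j', r) * conj (b (j', l))) :=
            reindex_aux b (fun α => conj (b α))
        _ = ∑ w : Fin n × Fin n, conj (Wm w) * Wm w := by
            rw [fuse (fun l r => (∑ j : Fin m, conj (b (j, r)) * b (j, l)) *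
              (∑ j' : Fin m, b (j', r) * conj (b (j', l))))]
            exact Finset.sum_congr rfl fun w _ => by rw [hWconj, hWm]
    have I1' : (∑ z : Fin m × Fin m, conj (Px z) * Rm z)
        = ∑ w : Fin n × Fin n, conj (Qx w) * Wm w := by
      have h := congrArg (starRingEnd ℂ) I1
      simp only [map_sum, _root_.map_mul, Complex.conj_conj] at h
      calc (∑ z : Fin m × Fin m, conj (Px z) * Rm z)
          = ∑ z : Fin m × Fin m, Rm z * conj (Px z) :=
            Finset.sum_congr rfl fun z _ => mul_comm _ _
        _ = ∑ w : Fin n × Fin n, Wm w * conj (Qx w) := h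
        _ = ∑ w : Fin n × Fin n, conj (Qx w) * Wm w :=
            Finset.sum_congr rfl fun w _ => mul_comm _ _
    -- expansions
    have h1x : (∑ α, conj (x α) * x α) = ((s:ℝ):ℂ) := by
      rw [hs_def]; exact (nsum_s12 x).symm
    have h2x : (∑ α, conj (x α) * conj (b α)) = conj S := by
      rw [hS_def, map_sum]
      exact Finset.sum_congr rfl fun α _ => by rw [_root_.map_mul]; ring
    have h3x : (∑ α, conj (conj (b α)) * x α) = S := by
      rw [hS_def]
      exact Finset.sum_congr rfl fun α _ => by rw [Complex.conj_conj]
    have h4x : (∑ α, conj (conj (b α)) * conj (b α)) = TC := by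
      have e : (∑ α, conj (conj (b α)) * conj (b α)) = ∑ α, conj (b α) * b α :=
        Finset.sum_congr rfl fun α _ => by rw [Complex.conj_conj]; ring
      rw [e, hTC, ht_def]; exact (nsum_s12 b).symm
    have hNy : (∑ α, conj (yv α) * yv α) = TC^2 * ((s:ℝ):ℂ) - TC * (conj S * S) := by
      calc (∑ α, conj (yv α) * yv α)
          = ∑ α, conj (TC * x α - S * conj (b α)) * (TC * x α - S * conj (b α)) := by
            simp only [hyv]
        _ = _ := by
            rw [expand_aux TC S x (fun α => conj (b α)), hconjTC, h1x, h2x, h3x, h4x]; ring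
    have hPP : (∑ z : Fin m × Fin m, conj (Py z) * Py z)
        = TC^2 * (∑ z : Fin m × Fin m, conj (Px z) * Px z)
          - TC * S * (∑ z : Fin m × Fin m, conj (Px z) * Rm z)
          - TC * conj S * (∑ z : Fin m × Fin m, conj (Rm z) * Px z)
          + conj S * S * (∑ z : Fin m × Fin m, conj (Rm z) * Rm z) := by
      calc (∑ z : Fin m × Fin m, conj (Py z) * Py z)
          = ∑ z : Fin m × Fin m, conj (TC * Px z - S * Rm z) * (TC * Px z - S * Rm z) :=
            Finset.sum_congr rfl fun z _ => by rw [hPy]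
        _ = _ := by rw [expand_aux TC S Px Rm, hconjTC]; ring
    have hQQ : (∑ w : Fin n × Fin n, conj (Qy w) * Qy w)
        = TC^2 * (∑ w : Fin n × Fin n, conj (Qx w) * Qx w)
          - TC * S * (∑ w : Fin n × Fin n, conj (Qx w) * Wm w)
          - TC * conj S * (∑ w : Fin n × Fin n, conj (Wm w) * Qx w)
          + conj S * S * (∑ w : Fin n × Fin n, conj (Wm w) * Wm w) := by
      calc (∑ w : Fin n × Fin n, conj (Qy w) * Qy w)
          = ∑ w : Fin n × Fin n, conj (TC * Qx w - S * Wm w) * (TC * Qx w - S * Wm w) :=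
            Finset.sum_congr rfl fun w _ => by rw [hQy]
        _ = _ := by rw [expand_aux TC S Qx Wm, hconjTC]; ring
    -- master identity (complex)
    have masterC : TC^2 * ((TC * ((s:ℝ):ℂ) + ((∑ z : Fin m × Fin m, normSq (Px z) : ℝ) : ℂ))
          - (((∑ w : Fin n × Fin n, normSq (Qx w) : ℝ) : ℂ) + ((normSq S : ℝ) : ℂ)))
        = TC * ((∑ α, normSq (yv α) : ℝ) : ℂ)
          + ((∑ z : Fin m × Fin m, normSq (Py z) : ℝ) : ℂ)
          - ((∑ w : Fin n × Fin n, normSq (Qy w) : ℝ) : ℂ) := by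
      rw [nsum_s12 Px, nsum_s12 Qx, nsum_s12 yv, nsum_s12 Py, nsum_s12 Qy, Complex.normSq_eq_conj_mul_self]
      rw [hNy, hPP, hQQ, I1, I1', I2]
      ring
    have masterR : t^2 * ((t * s + (∑ z : Fin m × Fin m, normSq (Px z)))
          - ((∑ w : Fin n × Fin n, normSq (Qx w)) + normSq S))
        = t * (∑ α, normSq (yv α)) + (∑ z : Fin m × Fin m, normSq (Py z))
          - (∑ w : Fin n × Fin n, normSq (Qy w)) := by
      have h := masterC
      rw [hTC] at h
      exact_mod_cast h
    -- positivity of the right-hand side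
    have hQle : (∑ w : Fin n × Fin n, normSq (Qy w)) ≤ t * (∑ α, normSq (yv α)) := by
      have e : (∑ w : Fin n × Fin n, normSq (Qy w))
          = ∑ l : Fin n, ∑ r : Fin n, normSq (∑ j : Fin m, b (j, r) * yv (j, l)) := by
        simp only [hQy0]
        exact (fuse fun l r => normSq (∑ j : Fin m, b (j, r) * yv (j, l))).symm
      rw [e]
      have h := qbound b yv
      rw [← ht_def] at h
      exact h
    have hP0 : (0:ℝ) ≤ ∑ z : Fin m × Fin m, normSq (Py z) :=
      Finset.sum_nonneg fun _ _ => normSq_nonneg _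
    have hmain : 0 ≤ t^2 * ((t * s + (∑ z : Fin m × Fin m, normSq (Px z)))
        - ((∑ w : Fin n × Fin n, normSq (Qx w)) + normSq S)) := by
      rw [masterR]; linarith
    have ht2 : (0:ℝ) < t^2 := pow_pos ht 2
    have hfinal : 0 ≤ (t * s + (∑ z : Fin m × Fin m, normSq (Px z)))
        - ((∑ w : Fin n × Fin n, normSq (Qx w)) + normSq S) := by
      nlinarith [hmain, ht2, sq_nonneg t]
    have e1 : (∑ w : Fin n × Fin n, normSq (∑ j : Fin m, b (j, w.2) * x (j, w.1)))
        = ∑ w : Fin n × Fin n, normSq (Qx w) := by simp only [hQx]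
    have e2 : (∑ z : Fin m × Fin m, normSq (∑ q : Fin n, b (z.2, q) * x (z.1, q)))
        = ∑ z : Fin m × Fin m, normSq (Px z) := by simp only [hPx]
    rw [e1, e2]
    linarith


lemma perm4 {α β γ δ M : Type*} [Fintype α] [Fintype β] [Fintype γ] [Fintype δ] [AddCommMonoid M]
    (f : α → β → γ → δ → M) :
    (∑ a, ∑ b, ∑ c, ∑ d, f a b c d) = ∑ b, ∑ d, ∑ a, ∑ c, f a b c d := by
  calc (∑ a, ∑ b, ∑ c, ∑ d, f a b c d) = ∑ b, ∑ a, ∑ c, ∑ d, f a b c d := Finset.sum_comm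
    _ = ∑ b, ∑ d, ∑ a, ∑ c, f a b c d :=
        Finset.sum_congr rfl fun b _ => pull3 (fun a c d => f a b c d)

lemma perm4' {α β γ δ M : Type*} [Fintype α] [Fintype β] [Fintype γ] [Fintype δ] [AddCommMonoid M]
    (f : α → β → γ → δ → M) :
    (∑ a, ∑ b, ∑ c, ∑ d, f a b c d) = ∑ a, ∑ d, ∑ b, ∑ c, f a b c d :=
  Finset.sum_congr rfl fun a _ => pull3 (fun b c d => f a b c d)


/-- Li–Liu–Huang: (tr A)·I_{mn} − (tr₂A) ⊗ I_n ≥ A − I_m ⊗ tr₁A. -/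
theorem stmt12 {m n : ℕ}
    (A : Matrix (Fin m × Fin n) (Fin m × Fin n) ℂ) (hA : A.PosSemidef) :
    ((A.trace • (1 : Matrix (Fin m × Fin n) (Fin m × Fin n) ℂ) -
        ptrace2 A ⊗ₖ (1 : Matrix (Fin n) (Fin n) ℂ)) -
      (A - (1 : Matrix (Fin m) (Fin m) ℂ) ⊗ₖ ptrace1 A)).PosSemidef := by
  have h2 : (ptrace2 A).IsHermitian := by
    ext i j
    rw [Matrix.conjTranspose_apply]
    show star (∑ l, A (j, l) (i, l)) = ∑ l, A (i, l) (j, l)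
    rw [star_sum]
    exact Finset.sum_congr rfl fun l _ => hA.1.apply _ _
  have h1p : (ptrace1 A).IsHermitian := by
    ext l q
    rw [Matrix.conjTranspose_apply]
    show star (∑ i, A (i, q) (i, l)) = ∑ i, A (i, l) (i, q)
    rw [star_sum]
    exact Finset.sum_congr rfl fun i _ => hA.1.apply _ _
  have ht : star A.trace = A.trace := by rw [← Matrix.trace_conjTranspose, hA.1]
  have h1 : (A.trace • (1 : Matrix (Fin m × Fin n) (Fin m × Fin n) ℂ)).IsHermitian := by
    show _ᴴ = _
    rw [Matrix.conjTranspose_smul, Matrix.conjTranspose_one, ht]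
  have one_star : ∀ {k : ℕ} (a c : Fin k),
      star ((1 : Matrix (Fin k) (Fin k) ℂ) a c) = (1 : Matrix (Fin k) (Fin k) ℂ) c a := by
    intro k a c
    by_cases h : a = c
    · subst h; simp
    · rw [Matrix.one_apply_ne h, Matrix.one_apply_ne (Ne.symm h), star_zero]
  have hker2 : (ptrace2 A ⊗ₖ (1 : Matrix (Fin n) (Fin n) ℂ)).IsHermitian := by
    ext α β
    rw [Matrix.conjTranspose_apply, Matrix.kroneckerMap_apply, Matrix.kroneckerMap_apply,
      star_mul', one_star]
    rw [show star (ptrace2 A β.1 α.1) = ptrace2 A α.1 β.1 from h2.apply _ _]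
  have hker1 : ((1 : Matrix (Fin m) (Fin m) ℂ) ⊗ₖ ptrace1 A).IsHermitian := by
    ext α β
    rw [Matrix.conjTranspose_apply, Matrix.kroneckerMap_apply, Matrix.kroneckerMap_apply,
      star_mul', one_star]
    rw [show star (ptrace1 A β.2 α.2) = ptrace1 A α.2 β.2 from h1p.apply _ _]
  refine Matrix.posSemidef_iff_dotProduct_mulVec.mpr ⟨(h1.sub hker2).sub (hA.1.sub hker1), ?_⟩
  intro x
  obtain ⟨B, hB⟩ : ∃ B : Matrix (Fin m × Fin n) (Fin m × Fin n) ℂ, A = Bᴴ * B := by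
    open scoped MatrixOrder in exact CStarAlgebra.nonneg_iff_eq_star_mul_self.mp hA.nonneg
  have hAent : ∀ α β, A α β = ∑ k, conj (B k α) * B k β := by
    intro α β
    rw [hB, Matrix.mul_apply]
    exact Finset.sum_congr rfl fun k _ => by rw [Matrix.conjTranspose_apply, Complex.star_def]
  rw [Matrix.sub_mulVec, dotProduct_sub, Matrix.sub_mulVec, dotProduct_sub,
    Matrix.sub_mulVec, dotProduct_sub]
  have hq1 : star x ⬝ᵥ ((A.trace • (1 : Matrix (Fin m × Fin n) (Fin m × Fin n) ℂ)) *ᵥ x)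
      = ∑ k, ((∑ α, conj (B k α) * B k α) * (∑ α, conj (x α) * x α)) := by
    rw [Matrix.smul_mulVec, Matrix.one_mulVec, dotProduct_smul]
    have htr : A.trace = ∑ k, ∑ α, conj (B k α) * B k α := by
      have h0 : A.trace = ∑ α, A α α := rfl
      rw [h0, show (∑ α, A α α) = ∑ α, ∑ k, conj (B k α) * B k α from
        Finset.sum_congr rfl fun α _ => hAent α α]
      exact Finset.sum_comm
    have hdp : star x ⬝ᵥ x = ∑ α, conj (x α) * x α := by
      simp only [dotProduct, Pi.star_apply, Complex.star_def]
    rw [smul_eq_mul, htr, hdp, Finset.sum_mul]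
  have hq3 : star x ⬝ᵥ (A *ᵥ x)
      = ∑ k, conj (∑ β, B k β * x β) * (∑ β, B k β * x β) := by
    calc star x ⬝ᵥ (A *ᵥ x) = ∑ α, conj (x α) * ∑ β, A α β * x β := by
          simp only [dotProduct, Matrix.mulVec, Pi.star_apply, Complex.star_def]
      _ = ∑ α, ∑ β, ∑ k, conj (x α) * (conj (B k α) * B k β * x β) := by
          refine Finset.sum_congr rfl fun α _ => ?_
          rw [Finset.mul_sum]
          refine Finset.sum_congr rfl fun β _ => ?_
          rw [hAent α β, Finset.sum_mul, Finset.mul_sum]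
      _ = ∑ k, ∑ α, ∑ β, conj (x α) * (conj (B k α) * B k β * x β) := pull3 _
      _ = ∑ k, conj (∑ β, B k β * x β) * (∑ β, B k β * x β) := by
          refine Finset.sum_congr rfl fun k _ => ?_
          rw [map_sum, Finset.sum_mul_sum]
          refine Finset.sum_congr rfl fun α _ => Finset.sum_congr rfl fun β _ => ?_
          rw [_root_.map_mul]
          ring
  have hq2 : star x ⬝ᵥ ((ptrace2 A ⊗ₖ (1 : Matrix (Fin n) (Fin n) ℂ)) *ᵥ x)
      = ∑ k, ∑ l, ∑ r, conj (∑ j, B k (j, r) * x (j, l)) * (∑ j, B k (j, r) * x (j, l)) := by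
    calc star x ⬝ᵥ ((ptrace2 A ⊗ₖ (1 : Matrix (Fin n) (Fin n) ℂ)) *ᵥ x)
        = ∑ α : Fin m × Fin n, conj (x α) *
            ∑ β : Fin m × Fin n, ptrace2 A α.1 β.1 * (1 : Matrix (Fin n) (Fin n) ℂ) α.2 β.2 * x β := by
          simp only [dotProduct, Matrix.mulVec, Pi.star_apply, Complex.star_def,
            Matrix.kroneckerMap_apply]
      _ = ∑ i, ∑ l, conj (x (i, l)) * ∑ j, ptrace2 A i j * x (j, l) := by
          rw [Fintype.sum_prod_type]
          refine Finset.sum_congr rfl fun i _ => Finset.sum_congr rfl fun l _ => ?_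
          congr 1
          rw [Fintype.sum_prod_type]
          refine Finset.sum_congr rfl fun j _ => ?_
          simp only [Matrix.one_apply, mul_ite, mul_one, mul_zero, ite_mul, zero_mul,
            Finset.sum_ite_eq, Finset.mem_univ, if_true]
      _ = ∑ i, ∑ l, ∑ j, ∑ r, ∑ k, conj (x (i, l)) * (conj (B k (i, r)) * B k (j, r) * x (j, l)) := by
          refine Finset.sum_congr rfl fun i _ => Finset.sum_congr rfl fun l _ => ?_
          rw [Finset.mul_sum]
          refine Finset.sum_congr rfl fun j _ => ?_
          have hp : ptrace2 A i j = ∑ r, ∑ k, conj (B k (i, r)) * B k (j, r) := by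
            show (∑ r, A (i, r) (j, r)) = _
            exact Finset.sum_congr rfl fun r _ => hAent _ _
          rw [hp, Finset.sum_mul, Finset.mul_sum]
          refine Finset.sum_congr rfl fun r _ => ?_
          rw [Finset.sum_mul, Finset.mul_sum]
      _ = ∑ k, ∑ i, ∑ l, ∑ j, ∑ r, conj (x (i, l)) * (conj (B k (i, r)) * B k (j, r) * x (j, l)) :=
          pull5 _
      _ = ∑ k, ∑ l, ∑ r, conj (∑ j, B k (j, r) * x (j, l)) * (∑ j, B k (j, r) * x (j, l)) := by
          refine Finset.sum_congr rfl fun k _ => ?_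
          rw [perm4 (fun i l j r => conj (x (i, l)) * (conj (B k (i, r)) * B k (j, r) * x (j, l)))]
          refine Finset.sum_congr rfl fun l _ => Finset.sum_congr rfl fun r _ => ?_
          rw [map_sum, Finset.sum_mul_sum]
          refine Finset.sum_congr rfl fun i _ => Finset.sum_congr rfl fun j _ => ?_
          rw [_root_.map_mul]
          ring
  have hq4 : star x ⬝ᵥ (((1 : Matrix (Fin m) (Fin m) ℂ) ⊗ₖ ptrace1 A) *ᵥ x)
      = ∑ k, ∑ i, ∑ p, conj (∑ q, B k (p, q) * x (i, q)) * (∑ q, B k (p, q) * x (i, q)) := by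
    calc star x ⬝ᵥ (((1 : Matrix (Fin m) (Fin m) ℂ) ⊗ₖ ptrace1 A) *ᵥ x)
        = ∑ α : Fin m × Fin n, conj (x α) *
            ∑ β : Fin m × Fin n, (1 : Matrix (Fin m) (Fin m) ℂ) α.1 β.1 * ptrace1 A α.2 β.2 * x β := by
          simp only [dotProduct, Matrix.mulVec, Pi.star_apply, Complex.star_def,
            Matrix.kroneckerMap_apply]
      _ = ∑ i, ∑ l, conj (x (i, l)) * ∑ q, ptrace1 A l q * x (i, q) := by
          rw [Fintype.sum_prod_type]
          refine Finset.sum_congr rfl fun i _ => Finset.sum_congr rfl fun l _ => ?_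
          congr 1
          rw [Fintype.sum_prod_type]
          rw [show (∑ j, ∑ q, (1 : Matrix (Fin m) (Fin m) ℂ) i j * ptrace1 A l q * x (j, q))
              = ∑ j, (1 : Matrix (Fin m) (Fin m) ℂ) i j * ∑ q, ptrace1 A l q * x (j, q) from
            Finset.sum_congr rfl fun j _ => by
              rw [Finset.mul_sum]; exact Finset.sum_congr rfl fun q _ => by ring]
          simp only [Matrix.one_apply, ite_mul, one_mul, zero_mul, Finset.sum_ite_eq,
            Finset.mem_univ, if_true]
      _ = ∑ i, ∑ l, ∑ q, ∑ p, ∑ k, conj (x (i, l)) * (conj (B k (p, l)) * B k (p, q) * x (i, q)) := by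
          refine Finset.sum_congr rfl fun i _ => Finset.sum_congr rfl fun l _ => ?_
          rw [Finset.mul_sum]
          refine Finset.sum_congr rfl fun q _ => ?_
          have hp : ptrace1 A l q = ∑ p, ∑ k, conj (B k (p, l)) * B k (p, q) := by
            show (∑ p, A (p, l) (p, q)) = _
            exact Finset.sum_congr rfl fun p _ => hAent _ _
          rw [hp, Finset.sum_mul, Finset.mul_sum]
          refine Finset.sum_congr rfl fun p _ => ?_
          rw [Finset.sum_mul, Finset.mul_sum]
      _ = ∑ k, ∑ i, ∑ l, ∑ q, ∑ p, conj (x (i, l)) * (conj (B k (p, l)) * B k (p, q) * x (i, q)) :=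
          pull5 _
      _ = ∑ k, ∑ i, ∑ p, conj (∑ q, B k (p, q) * x (i, q)) * (∑ q, B k (p, q) * x (i, q)) := by
          refine Finset.sum_congr rfl fun k _ => Finset.sum_congr rfl fun i _ => ?_
          rw [pull3 (fun l q p => conj (x (i, l)) * (conj (B k (p, l)) * B k (p, q) * x (i, q)))]
          refine Finset.sum_congr rfl fun p _ => ?_
          rw [map_sum, Finset.sum_mul_sum]
          refine Finset.sum_congr rfl fun l _ => Finset.sum_congr rfl fun q _ => ?_
          rw [_root_.map_mul]
          ring
  rw [hq1, hq2, hq3, hq4]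
  simp only [← Finset.sum_sub_distrib]
  refine Finset.sum_nonneg fun k _ => ?_
  have hb2 := key_s12 (fun α => B k α) x
  have ea : (∑ α, conj (B k α) * B k α) * (∑ α, conj (x α) * x α)
      = (((∑ α, normSq (B k α)) * (∑ α, normSq (x α)) : ℝ) : ℂ) := by
    rw [Complex.ofReal_mul, nsum_s12 (fun α => B k α), nsum_s12 x]
  have eb : (∑ l, ∑ r, conj (∑ j, B k (j, r) * x (j, l)) * (∑ j, B k (j, r) * x (j, l)))
      = (((∑ w : Fin n × Fin n, normSq (∑ j, B k (j, w.2) * x (j, w.1))) : ℝ) : ℂ) := by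
    rw [fuse (fun l r => conj (∑ j, B k (j, r) * x (j, l)) * (∑ j, B k (j, r) * x (j, l)))]
    exact (nsum_s12 fun w : Fin n × Fin n => ∑ j, B k (j, w.2) * x (j, w.1)).symm
  have ec : conj (∑ β, B k β * x β) * (∑ β, B k β * x β)
      = ((normSq (∑ β, B k β * x β) : ℝ) : ℂ) := Complex.normSq_eq_conj_mul_self.symm
  have ed : (∑ i, ∑ p, conj (∑ q, B k (p, q) * x (i, q)) * (∑ q, B k (p, q) * x (i, q)))
      = (((∑ z : Fin m × Fin m, normSq (∑ q, B k (z.2, q) * x (z.1, q))) : ℝ) : ℂ) := by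
    rw [fuse (fun i p => conj (∑ q, B k (p, q) * x (i, q)) * (∑ q, B k (p, q) * x (i, q)))]
    exact (nsum_s12 fun z : Fin m × Fin m => ∑ q, B k (z.2, q) * x (z.1, q)).symm
  rw [ea, eb, ec, ed, ← Complex.ofReal_sub, ← Complex.ofReal_sub, ← Complex.ofReal_sub,
    Complex.zero_le_real]
  linarith [hb2]
end

section
/- Let A ∈ M_m(M_n) be positive semidefinite. Then (tr A)·I_{mn} + (tr₂A) ⊗ I_n ≥ A + I_m ⊗ (tr₁A) in the Löwner order. -/
open Matrix BigOperators Kronecker ComplexOrder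
open Finset

private lemma cs_nsq {ι : Type*} [Fintype ι] (x w : ι → ℂ) :
    Complex.normSq (∑ i, (starRingEnd ℂ) (x i) * w i)
      ≤ (∑ i, Complex.normSq (x i)) * (∑ i, Complex.normSq (w i)) := by
  have h1 : norm (∑ i, (starRingEnd ℂ) (x i) * w i)
      ≤ ∑ i, norm (x i) * norm (w i) := by
    calc norm (∑ i, (starRingEnd ℂ) (x i) * w i)
        ≤ ∑ i, norm ((starRingEnd ℂ) (x i) * w i) := by
          simpa using
            norm_sum_le (Finset.univ) (fun i => (starRingEnd ℂ) (x i) * w i)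
      _ = ∑ i, norm (x i) * norm (w i) := by
          simp [norm_mul, Complex.norm_conj]
  have h2 : (∑ i, norm (x i) * norm (w i))^2
      ≤ (∑ i, norm (x i)^2) * (∑ i, norm (w i)^2) :=
    Finset.sum_mul_sq_le_sq_mul_sq _ _ _
  calc Complex.normSq (∑ i, (starRingEnd ℂ) (x i) * w i)
      = norm (∑ i, (starRingEnd ℂ) (x i) * w i) ^ 2 := (Complex.sq_norm _).symm
    _ ≤ (∑ i, norm (x i) * norm (w i))^2 := by
        exact pow_le_pow_left₀ (norm_nonneg _) h1 2
    _ ≤ (∑ i, norm (x i)^2) * (∑ i, norm (w i)^2) := h2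
    _ = _ := by simp [Complex.sq_norm]

private lemma core_orth {m n : ℕ} (x w : Fin m × Fin n → ℂ)
    (horth : ∀ l l' : Fin n, l ≠ l' →
      (∑ i : Fin m, (starRingEnd ℂ) (w (i,l)) * w (i,l')) = 0) :
    (∑ i : Fin m, ∑ j : Fin m,
        Complex.normSq (∑ l : Fin n, (starRingEnd ℂ) (x (i,l)) * w (j,l)))
      + Complex.normSq (∑ a : Fin m × Fin n, (starRingEnd ℂ) (x a) * w a)
    ≤ (∑ a : Fin m × Fin n, Complex.normSq (w a)) * (∑ a : Fin m × Fin n, Complex.normSq (x a))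
      + ∑ l : Fin n, ∑ l' : Fin n,
          Complex.normSq (∑ i : Fin m, (starRingEnd ℂ) (x (i,l)) * w (i,l')) := by
  classical
  set d : Fin n → ℝ := fun l => ∑ i, Complex.normSq (w (i,l)) with hd
  set q : Fin n → ℝ := fun l => ∑ i, Complex.normSq (x (i,l)) with hq
  set c : Fin n → Fin n → ℂ := fun l l' => ∑ i, (starRingEnd ℂ) (x (i,l)) * w (i,l') with hc
  have hd0 : ∀ l, 0 ≤ d l := fun l => Finset.sum_nonneg fun i _ => Complex.normSq_nonneg _
  have hq0 : ∀ l, 0 ≤ q l := fun l => Finset.sum_nonneg fun i _ => Complex.normSq_nonneg _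
  have hcs : ∀ l l', Complex.normSq (c l l') ≤ q l * d l' := fun l l' =>
    cs_nsq (fun i => x (i,l)) (fun i => w (i,l'))
  -- sums over the product type
  have hsum_d : (∑ a : Fin m × Fin n, Complex.normSq (w a)) = ∑ l, d l := by
    rw [Fintype.sum_prod_type]; exact Finset.sum_comm
  have hsum_q : (∑ a : Fin m × Fin n, Complex.normSq (x a)) = ∑ l, q l := by
    rw [Fintype.sum_prod_type]; exact Finset.sum_comm
  have ht : (∑ a : Fin m × Fin n, (starRingEnd ℂ) (x a) * w a) = ∑ l, c l l := by
    rw [Fintype.sum_prod_type]; exact Finset.sum_comm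
  -- the R-term identity
  have hR : (∑ i : Fin m, ∑ j : Fin m,
      Complex.normSq (∑ l : Fin n, (starRingEnd ℂ) (x (i,l)) * w (j,l))) = ∑ l, q l * d l := by
    have hC : (∑ i : Fin m, ∑ j : Fin m,
        (Complex.normSq (∑ l : Fin n, (starRingEnd ℂ) (x (i,l)) * w (j,l)) : ℂ))
        = ∑ l, (q l : ℂ) * (d l : ℂ) := by
      have step1 : ∀ i j : Fin m,
          (Complex.normSq (∑ l : Fin n, (starRingEnd ℂ) (x (i,l)) * w (j,l)) : ℂ)
          = ∑ l, ∑ l', ((starRingEnd ℂ) (x (i,l)) * x (i,l'))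
              * (w (j,l) * (starRingEnd ℂ) (w (j,l'))) := by
        intro i j
        rw [← Complex.mul_conj, map_sum, Finset.sum_mul_sum]
        refine Finset.sum_congr rfl fun l _ => Finset.sum_congr rfl fun l' _ => ?_
        simp only [_root_.map_mul, Complex.conj_conj]
        ring
      simp_rw [step1]
      have swap : (∑ i : Fin m, ∑ j : Fin m, ∑ l : Fin n, ∑ l' : Fin n,
          ((starRingEnd ℂ) (x (i,l)) * x (i,l')) * (w (j,l) * (starRingEnd ℂ) (w (j,l'))))
          = ∑ l : Fin n, ∑ l' : Fin n, (∑ i : Fin m, (starRingEnd ℂ) (x (i,l)) * x (i,l'))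
              * (∑ j : Fin m, w (j,l) * (starRingEnd ℂ) (w (j,l'))) := by
        calc (∑ i : Fin m, ∑ j : Fin m, ∑ l : Fin n, ∑ l' : Fin n,
            ((starRingEnd ℂ) (x (i,l)) * x (i,l')) * (w (j,l) * (starRingEnd ℂ) (w (j,l'))))
            = ∑ i : Fin m, ∑ l : Fin n, ∑ j : Fin m, ∑ l' : Fin n,
              ((starRingEnd ℂ) (x (i,l)) * x (i,l')) * (w (j,l) * (starRingEnd ℂ) (w (j,l'))) :=
              Finset.sum_congr rfl fun i _ => Finset.sum_comm
          _ = ∑ l : Fin n, ∑ i : Fin m, ∑ j : Fin m, ∑ l' : Fin n,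
              ((starRingEnd ℂ) (x (i,l)) * x (i,l')) * (w (j,l) * (starRingEnd ℂ) (w (j,l'))) :=
              Finset.sum_comm
          _ = ∑ l : Fin n, ∑ i : Fin m, ∑ l' : Fin n, ∑ j : Fin m,
              ((starRingEnd ℂ) (x (i,l)) * x (i,l')) * (w (j,l) * (starRingEnd ℂ) (w (j,l'))) :=
              Finset.sum_congr rfl fun l _ => Finset.sum_congr rfl fun i _ =>
                Finset.sum_comm
          _ = ∑ l : Fin n, ∑ l' : Fin n, ∑ i : Fin m, ∑ j : Fin m,
              ((starRingEnd ℂ) (x (i,l)) * x (i,l')) * (w (j,l) * (starRingEnd ℂ) (w (j,l'))) :=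
              Finset.sum_congr rfl fun l _ => Finset.sum_comm
          _ = _ := by
              refine Finset.sum_congr rfl fun l _ => Finset.sum_congr rfl fun l' _ => ?_
              rw [Finset.sum_mul_sum]
      rw [swap]
      refine Finset.sum_congr rfl fun l _ => ?_
      rw [Finset.sum_eq_single l]
      · have h1 : (∑ i : Fin m, (starRingEnd ℂ) (x (i,l)) * x (i,l)) = (q l : ℂ) := by
          rw [hq]; push_cast
          exact Finset.sum_congr rfl fun i _ => Complex.normSq_eq_conj_mul_self.symm
        have h2 : (∑ j : Fin m, w (j,l) * (starRingEnd ℂ) (w (j,l))) = (d l : ℂ) := by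
          rw [hd]; push_cast
          exact Finset.sum_congr rfl fun j _ => Complex.mul_conj _
        rw [h1, h2]
      · intro l' _ hl'
        have h0 : (∑ j : Fin m, w (j,l) * (starRingEnd ℂ) (w (j,l'))) = 0 := by
          have := horth l l' (fun h => hl' h.symm)
          calc (∑ j : Fin m, w (j,l) * (starRingEnd ℂ) (w (j,l')))
              = (starRingEnd ℂ) (∑ j : Fin m, (starRingEnd ℂ) (w (j,l)) * w (j,l')) := by
                rw [map_sum]
                refine Finset.sum_congr rfl fun j _ => ?_
                simp only [_root_.map_mul, Complex.conj_conj]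
            _ = 0 := by rw [this, map_zero]
        rw [h0, mul_zero]
      · intro h; exact absurd (Finset.mem_univ l) h
    have := congrArg Complex.re hC
    simpa using this
  rw [hsum_d, hsum_q, ht, hR]
  -- now a purely real inequality in terms of d, q, c
  set a : Fin n → ℝ := fun l => norm (c l l) with ha
  have ha0 : ∀ l, 0 ≤ a l := fun l => norm_nonneg _
  have habs : Complex.normSq (∑ l, c l l) ≤ ∑ l, ∑ k, a l * a k := by
    have h1 : norm (∑ l, c l l) ≤ ∑ l, a l := by
      simpa [ha] using norm_sum_le (Finset.univ) (fun l => c l l)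
    calc Complex.normSq (∑ l, c l l) = norm (∑ l, c l l) ^ 2 := (Complex.sq_norm _).symm
      _ ≤ (∑ l, a l)^2 := pow_le_pow_left₀ (norm_nonneg _) h1 2
      _ = ∑ l, ∑ k, a l * a k := by rw [sq, Finset.sum_mul_sum]
  have hdq : (∑ l, d l) * (∑ l, q l) = ∑ l, ∑ k, d l * q k := by rw [Finset.sum_mul_sum]
  have hsym : (∑ l, ∑ k, d l * q k) = ∑ l, ∑ k, (d l * q k + d k * q l)/2 := by
    have h2 : (∑ l, ∑ k, d k * q l / 2) = ∑ l, ∑ k, d l * q k / 2 := Finset.sum_comm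
    simp_rw [add_div, Finset.sum_add_distrib, h2, ← Finset.sum_add_distrib]
    refine Finset.sum_congr rfl fun l _ => Finset.sum_congr rfl fun k _ => by ring
  have hdiag : (∑ l, q l * d l) = ∑ l, ∑ k, (if k = l then q l * d l else 0) := by
    refine Finset.sum_congr rfl fun l _ => ?_
    rw [Finset.sum_ite_eq' Finset.univ l (fun _ => q l * d l)]
    simp
  calc (∑ l, q l * d l) + Complex.normSq (∑ l, c l l)
      ≤ (∑ l, ∑ k, (if k = l then q l * d l else 0)) + ∑ l, ∑ k, a l * a k := by
        rw [← hdiag]; exact add_le_add_right habs _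
    _ = ∑ l, ∑ k, ((if k = l then q l * d l else 0) + a l * a k) := by
        rw [← Finset.sum_add_distrib]
        refine Finset.sum_congr rfl fun l _ => (Finset.sum_add_distrib).symm
    _ ≤ ∑ l, ∑ k, ((d l * q k + d k * q l)/2 + Complex.normSq (c l k)) := by
        refine Finset.sum_le_sum fun l _ => Finset.sum_le_sum fun k _ => ?_
        by_cases hk : k = l
        · subst hk
          have : a k * a k = Complex.normSq (c k k) := by
            rw [ha, ← Complex.sq_norm]; ring
          rw [if_pos rfl, this]
          nlinarith [Complex.normSq_nonneg (c k k)]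
        · rw [if_neg hk]
          have h1 : a l ^ 2 ≤ q l * d l := by
            rw [ha, Complex.sq_norm]; exact hcs l l
          have h2 : a k ^ 2 ≤ q k * d k := by
            rw [ha, Complex.sq_norm]; exact hcs k k
          have h3 : (a l * a k)^2 ≤ (d l * q k) * (d k * q l) := by
            calc (a l * a k)^2 = a l ^2 * a k ^2 := by ring
              _ ≤ (q l * d l) * (q k * d k) := by
                  apply mul_le_mul h1 h2 (sq_nonneg _)
                  exact mul_nonneg (hq0 l) (hd0 l)
              _ = (d l * q k) * (d k * q l) := by ring
          nlinarith [sq_nonneg (d l * q k - d k * q l), mul_nonneg (ha0 l) (ha0 k),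
            Complex.normSq_nonneg (c l k), mul_nonneg (hd0 l) (hq0 k),
            mul_nonneg (hd0 k) (hq0 l)]
    _ = (∑ l, ∑ k, (d l * q k + d k * q l)/2) + ∑ l, ∑ k, Complex.normSq (c l k) := by
        rw [← Finset.sum_add_distrib]
        refine Finset.sum_congr rfl fun l _ => Finset.sum_add_distrib
    _ = (∑ l, d l) * (∑ l, q l) + ∑ l, ∑ k, Complex.normSq (c l k) := by
        rw [hdq, hsym]

private lemma pair_sum {n : ℕ} (U : Matrix (Fin n) (Fin n) ℂ)
    (hU : ∀ a b, (∑ l, (starRingEnd ℂ) (U a l) * U b l) = if a = b then (1:ℂ) else 0)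
    (u v : Fin n → ℂ) :
    (∑ l, (starRingEnd ℂ) (∑ a, u a * U a l) * (∑ b, v b * U b l))
      = ∑ a, (starRingEnd ℂ) (u a) * v a := by
  calc (∑ l, (starRingEnd ℂ) (∑ a, u a * U a l) * (∑ b, v b * U b l))
      = ∑ l, ∑ a, ∑ b, ((starRingEnd ℂ) (u a) * v b) * ((starRingEnd ℂ) (U a l) * U b l) := by
        refine Finset.sum_congr rfl fun l _ => ?_
        rw [map_sum, Finset.sum_mul_sum]
        refine Finset.sum_congr rfl fun a _ => Finset.sum_congr rfl fun b _ => ?_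
        simp only [_root_.map_mul]; ring
    _ = ∑ a, ∑ b, ∑ l, ((starRingEnd ℂ) (u a) * v b) * ((starRingEnd ℂ) (U a l) * U b l) := by
        rw [Finset.sum_comm]
        exact Finset.sum_congr rfl fun a _ => Finset.sum_comm
    _ = ∑ a, ∑ b, ((starRingEnd ℂ) (u a) * v b) * ∑ l, ((starRingEnd ℂ) (U a l) * U b l) := by
        refine Finset.sum_congr rfl fun a _ => Finset.sum_congr rfl fun b _ => ?_
        rw [Finset.mul_sum]
    _ = ∑ a, (starRingEnd ℂ) (u a) * v a := by
        simp_rw [hU, mul_ite, mul_one, mul_zero]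
        refine Finset.sum_congr rfl fun a _ => ?_
        rw [Finset.sum_ite_eq]
        simp

private lemma core_general {m n : ℕ} (x w : Fin m × Fin n → ℂ) :
    (∑ i : Fin m, ∑ j : Fin m,
        Complex.normSq (∑ l : Fin n, (starRingEnd ℂ) (x (i,l)) * w (j,l)))
      + Complex.normSq (∑ a : Fin m × Fin n, (starRingEnd ℂ) (x a) * w a)
    ≤ (∑ a : Fin m × Fin n, Complex.normSq (w a)) * (∑ a : Fin m × Fin n, Complex.normSq (x a))
      + ∑ l : Fin n, ∑ l' : Fin n,
          Complex.normSq (∑ i : Fin m, (starRingEnd ℂ) (x (i,l)) * w (i,l')) := by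
  classical
  set G : Matrix (Fin n) (Fin n) ℂ :=
    Matrix.of (fun l l' => ∑ i, (starRingEnd ℂ) (w (i,l)) * w (i,l')) with hG_def
  have hG : G.IsHermitian := by
    ext l l'
    simp only [conjTranspose_apply, hG_def, Matrix.of_apply, map_sum, _root_.map_mul,
      Complex.conj_conj, Complex.star_def]
    exact Finset.sum_congr rfl fun i _ => by ring
  set U : Matrix (Fin n) (Fin n) ℂ := (hG.eigenvectorUnitary : Matrix (Fin n) (Fin n) ℂ) with hU_def
  have hU1 : U * Uᴴ = 1 := by
    rw [← Matrix.star_eq_conjTranspose]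
    exact Matrix.mem_unitaryGroup_iff.mp hG.eigenvectorUnitary.2
  have hUa : ∀ a b, (∑ l, U a l * (starRingEnd ℂ) (U b l)) = if a = b then (1:ℂ) else 0 := by
    intro a b
    have := congrFun (congrFun hU1 a) b
    simpa [Matrix.mul_apply, Matrix.one_apply, Matrix.conjTranspose_apply] using this
  have hUb : ∀ a b, (∑ l, (starRingEnd ℂ) (U a l) * U b l) = if a = b then (1:ℂ) else 0 := by
    intro a b
    have := congrArg (starRingEnd ℂ) (hUa a b)
    rw [map_sum] at this
    simp only [_root_.map_mul, Complex.conj_conj] at this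
    calc (∑ l, (starRingEnd ℂ) (U a l) * U b l)
        = ∑ l, U b l * (starRingEnd ℂ) (U a l) := Finset.sum_congr rfl fun l _ => by ring
      _ = if b = a then (1:ℂ) else 0 := hUa b a
      _ = if a = b then (1:ℂ) else 0 := by by_cases h : a = b <;> simp [h, Ne.symm]
  set x' : Fin m × Fin n → ℂ := fun p => ∑ a, x (p.1, a) * U a p.2 with hx'
  set w' : Fin m × Fin n → ℂ := fun p => ∑ a, w (p.1, a) * U a p.2 with hw'
  -- orthogonality of columns of w'
  have horth : ∀ l l' : Fin n, l ≠ l' →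
      (∑ i : Fin m, (starRingEnd ℂ) (w' (i,l)) * w' (i,l')) = 0 := by
    intro l l' hne
    have hcol : (∑ i : Fin m, (starRingEnd ℂ) (w' (i,l)) * w' (i,l'))
        = (Uᴴ * G * U) l l' := by
      calc (∑ i : Fin m, (starRingEnd ℂ) (w' (i,l)) * w' (i,l'))
          = ∑ i : Fin m, ∑ a, ∑ b, ((starRingEnd ℂ) (U a l) * U b l')
              * ((starRingEnd ℂ) (w (i,a)) * w (i,b)) := by
            refine Finset.sum_congr rfl fun i _ => ?_
            rw [hw']
            simp only [map_sum]
            rw [Finset.sum_mul_sum]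
            refine Finset.sum_congr rfl fun a _ => Finset.sum_congr rfl fun b _ => ?_
            simp only [_root_.map_mul]; ring
        _ = ∑ a, ∑ b, ((starRingEnd ℂ) (U a l) * U b l') * G a b := by
            rw [Finset.sum_comm]
            refine Finset.sum_congr rfl fun a _ => ?_
            rw [Finset.sum_comm]
            refine Finset.sum_congr rfl fun b _ => ?_
            rw [← Finset.mul_sum]
            rfl
        _ = (Uᴴ * G * U) l l' := by
            rw [Matrix.mul_apply]
            rw [Finset.sum_comm]
            refine Finset.sum_congr rfl fun a _ => ?_
            rw [Matrix.mul_apply, Finset.sum_mul]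
            refine Finset.sum_congr rfl fun b _ => ?_
            simp only [Matrix.conjTranspose_apply, Complex.star_def]
            ring
    have hdg := hG.conjStarAlgAut_star_eigenvectorUnitary
    rw [Unitary.conjStarAlgAut_apply, Unitary.coe_star, star_star] at hdg
    rw [hcol, ← Matrix.star_eq_conjTranspose, hdg]
    exact Matrix.diagonal_apply_ne _ hne
  have key := core_orth x' w' horth
  -- invariance 1 : the r-terms agree pointwise
  have hr : ∀ i j : Fin m, (∑ l : Fin n, (starRingEnd ℂ) (x' (i,l)) * w' (j,l))
      = ∑ l : Fin n, (starRingEnd ℂ) (x (i,l)) * w (j,l) :=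
    fun i j => pair_sum U hUb (fun a => x (i,a)) (fun a => w (j,a))
  -- invariance 2 : the t-term
  have ht : (∑ a : Fin m × Fin n, (starRingEnd ℂ) (x' a) * w' a)
      = ∑ a : Fin m × Fin n, (starRingEnd ℂ) (x a) * w a := by
    rw [Fintype.sum_prod_type, Fintype.sum_prod_type]
    exact Finset.sum_congr rfl fun i _ => pair_sum U hUb (fun a => x (i,a)) (fun a => w (i,a))
  -- invariance 3 : norms
  have hnorm : ∀ u u' : Fin m × Fin n → ℂ,
      (u' = fun p => ∑ a, u (p.1, a) * U a p.2) →
      (∑ a : Fin m × Fin n, Complex.normSq (u' a)) = ∑ a : Fin m × Fin n, Complex.normSq (u a) := by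
    intro u u' hdef
    have hC : (∑ a : Fin m × Fin n, (Complex.normSq (u' a) : ℂ))
        = ∑ a : Fin m × Fin n, (Complex.normSq (u a) : ℂ) := by
      simp_rw [Complex.normSq_eq_conj_mul_self]
      rw [Fintype.sum_prod_type, Fintype.sum_prod_type]
      refine Finset.sum_congr rfl fun i _ => ?_
      have := pair_sum U hUb (fun a => u (i,a)) (fun a => u (i,a))
      simpa [hdef] using this
    exact_mod_cast hC
  -- invariance 4 : the c-terms (Frobenius norm invariance)
  have hcinv : (∑ l : Fin n, ∑ l' : Fin n,
      Complex.normSq (∑ i : Fin m, (starRingEnd ℂ) (x' (i,l)) * w' (i,l')))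
      = ∑ l : Fin n, ∑ l' : Fin n,
        Complex.normSq (∑ i : Fin m, (starRingEnd ℂ) (x (i,l)) * w (i,l')) := by
    set C : Matrix (Fin n) (Fin n) ℂ :=
      Matrix.of (fun l l' => ∑ i, (starRingEnd ℂ) (x (i,l)) * w (i,l')) with hC_def
    have hC' : ∀ l l', (∑ i : Fin m, (starRingEnd ℂ) (x' (i,l)) * w' (i,l'))
        = (Uᴴ * C * U) l l' := by
      intro l l'
      calc (∑ i : Fin m, (starRingEnd ℂ) (x' (i,l)) * w' (i,l'))
          = ∑ i : Fin m, ∑ a, ∑ b, ((starRingEnd ℂ) (U a l) * U b l')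
              * ((starRingEnd ℂ) (x (i,a)) * w (i,b)) := by
            refine Finset.sum_congr rfl fun i _ => ?_
            rw [hx', hw']
            simp only [map_sum]
            rw [Finset.sum_mul_sum]
            refine Finset.sum_congr rfl fun a _ => Finset.sum_congr rfl fun b _ => ?_
            simp only [_root_.map_mul]; ring
        _ = ∑ a, ∑ b, ((starRingEnd ℂ) (U a l) * U b l') * C a b := by
            rw [Finset.sum_comm]
            refine Finset.sum_congr rfl fun a _ => ?_
            rw [Finset.sum_comm]
            refine Finset.sum_congr rfl fun b _ => ?_
            rw [← Finset.mul_sum]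
            rfl
        _ = (Uᴴ * C * U) l l' := by
            rw [Matrix.mul_apply]
            rw [Finset.sum_comm]
            refine Finset.sum_congr rfl fun a _ => ?_
            rw [Matrix.mul_apply, Finset.sum_mul]
            refine Finset.sum_congr rfl fun b _ => ?_
            simp only [Matrix.conjTranspose_apply, Complex.star_def]
            ring
    have frob : ∀ M : Matrix (Fin n) (Fin n) ℂ,
        (∑ l, ∑ l', (Complex.normSq (M l l') : ℂ)) = (M * Mᴴ).trace := by
      intro M
      rw [Matrix.trace]
      refine Finset.sum_congr rfl fun l _ => ?_
      rw [Matrix.diag_apply, Matrix.mul_apply]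
      refine Finset.sum_congr rfl fun l' _ => ?_
      rw [Matrix.conjTranspose_apply]; exact (Complex.mul_conj _).symm
    have htr : ((Uᴴ * C * U) * (Uᴴ * C * U)ᴴ).trace = (C * Cᴴ).trace := by
      have h1 : (Uᴴ * C * U)ᴴ = Uᴴ * Cᴴ * U := by
        simp [Matrix.conjTranspose_mul, Matrix.mul_assoc]
      rw [h1]
      have h2 : (Uᴴ * C * U) * (Uᴴ * Cᴴ * U) = Uᴴ * (C * Cᴴ) * U := by
        have hU2 : Uᴴ * U = 1 := by
          rw [← Matrix.star_eq_conjTranspose]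
          exact Matrix.mem_unitaryGroup_iff'.mp hG.eigenvectorUnitary.2
        calc (Uᴴ * C * U) * (Uᴴ * Cᴴ * U) = Uᴴ * C * (U * Uᴴ) * Cᴴ * U := by
              simp only [Matrix.mul_assoc]
          _ = Uᴴ * (C * Cᴴ) * U := by rw [hU1]; simp [Matrix.mul_assoc]
      rw [h2, Matrix.trace_mul_cycle, ← Matrix.mul_assoc, hU1, Matrix.one_mul]
    have hfinal : (∑ l, ∑ l', (Complex.normSq ((Uᴴ * C * U) l l') : ℂ))
        = ∑ l, ∑ l', (Complex.normSq (C l l') : ℂ) := by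
      rw [frob, frob, htr]
    simp_rw [hC'] 
    have : (∑ l, ∑ l', (Complex.normSq ((Uᴴ * C * U) l l') : ℂ)).re
        = (∑ l, ∑ l', (Complex.normSq (C l l') : ℂ)).re := by rw [hfinal]
    simpa [hC_def] using this
  have e1 : (∑ i : Fin m, ∑ j : Fin m,
      Complex.normSq (∑ l : Fin n, (starRingEnd ℂ) (x' (i,l)) * w' (j,l)))
      = ∑ i : Fin m, ∑ j : Fin m,
        Complex.normSq (∑ l : Fin n, (starRingEnd ℂ) (x (i,l)) * w (j,l)) :=
    Finset.sum_congr rfl fun i _ => Finset.sum_congr rfl fun j _ =>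
      congrArg Complex.normSq (hr i j)
  have e2 : Complex.normSq (∑ a : Fin m × Fin n, (starRingEnd ℂ) (x' a) * w' a)
      = Complex.normSq (∑ a : Fin m × Fin n, (starRingEnd ℂ) (x a) * w a) :=
    congrArg Complex.normSq ht
  have e3 := hnorm w w' hw'
  have e4 := hnorm x x' hx'
  rw [e1, e2, e3, e4, hcinv] at key
  exact key

private lemma sum_perm5a {α β γ δ ε : Type*} [Fintype α] [Fintype β] [Fintype γ] [Fintype δ]
    [Fintype ε] (F : α → β → γ → δ → ε → ℂ) :
    (∑ i : α, ∑ l : β, ∑ j : γ, ∑ l' : δ, ∑ k : ε, F i l j l' k)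
      = ∑ k : ε, ∑ l : β, ∑ l' : δ, ∑ i : α, ∑ j : γ, F i l j l' k := by
  have h1 : (∑ p : α × β × γ × δ × ε, F p.1 p.2.1 p.2.2.1 p.2.2.2.1 p.2.2.2.2)
      = ∑ i : α, ∑ l : β, ∑ j : γ, ∑ l' : δ, ∑ k : ε, F i l j l' k := by
    simp_rw [Fintype.sum_prod_type]
  have h2 : (∑ p : ε × β × δ × α × γ, F p.2.2.2.1 p.2.1 p.2.2.2.2 p.2.2.1 p.1)
      = ∑ k : ε, ∑ l : β, ∑ l' : δ, ∑ i : α, ∑ j : γ, F i l j l' k := by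
    simp_rw [Fintype.sum_prod_type]
  rw [← h1, ← h2]
  exact Fintype.sum_equiv
    ⟨fun p => (p.2.2.2.2, p.2.1, p.2.2.2.1, p.1, p.2.2.1),
     fun p => (p.2.2.2.1, p.2.1, p.2.2.2.2, p.2.2.1, p.1),
     fun p => rfl, fun p => rfl⟩ _ _ (fun p => rfl)

private lemma sum_perm5b {α β γ δ ε : Type*} [Fintype α] [Fintype β] [Fintype γ] [Fintype δ]
    [Fintype ε] (F : α → β → γ → δ → ε → ℂ) :
    (∑ i : α, ∑ l : β, ∑ m : γ, ∑ j : δ, ∑ k : ε, F i l m j k)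
      = ∑ k : ε, ∑ i : α, ∑ j : δ, ∑ l : β, ∑ m : γ, F i l m j k := by
  have h1 : (∑ p : α × β × γ × δ × ε, F p.1 p.2.1 p.2.2.1 p.2.2.2.1 p.2.2.2.2)
      = ∑ i : α, ∑ l : β, ∑ m : γ, ∑ j : δ, ∑ k : ε, F i l m j k := by
    simp_rw [Fintype.sum_prod_type]
  have h2 : (∑ p : ε × α × δ × β × γ, F p.2.1 p.2.2.2.1 p.2.2.2.2 p.2.2.1 p.1)
      = ∑ k : ε, ∑ i : α, ∑ j : δ, ∑ l : β, ∑ m : γ, F i l m j k := by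
    simp_rw [Fintype.sum_prod_type]
  rw [← h1, ← h2]
  exact Fintype.sum_equiv
    ⟨fun p => (p.2.2.2.2, p.1, p.2.2.2.1, p.2.1, p.2.2.1),
     fun p => (p.2.1, p.2.2.2.1, p.2.2.2.2, p.2.2.1, p.1),
     fun p => rfl, fun p => rfl⟩ _ _ (fun p => rfl)

/-- Li–Liu–Huang: (tr A)·I_{mn} + (tr₂A) ⊗ I_n ≥ A + I_m ⊗ tr₁A. -/
theorem stmt13 {m n : ℕ}
    (A : Matrix (Fin m × Fin n) (Fin m × Fin n) ℂ) (hA : A.PosSemidef) :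
    ((A.trace • (1 : Matrix (Fin m × Fin n) (Fin m × Fin n) ℂ) +
        ptrace2 A ⊗ₖ (1 : Matrix (Fin n) (Fin n) ℂ)) -
      (A + (1 : Matrix (Fin m) (Fin m) ℂ) ⊗ₖ ptrace1 A)).PosSemidef := by
  classical
  obtain ⟨B, hB⟩ : ∃ B : Matrix (Fin m × Fin n) (Fin m × Fin n) ℂ, A = star B * B := by
    open scoped MatrixOrder Matrix.Norms.L2Operator in
    exact CStarAlgebra.nonneg_iff_eq_star_mul_self.mp hA.nonneg
  set w : (Fin m × Fin n) → (Fin m × Fin n) → ℂ := fun k a => (starRingEnd ℂ) (B k a) with hw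
  have hAab : ∀ a b, A a b = ∑ k, w k a * (starRingEnd ℂ) (w k b) := by
    intro a b
    rw [hB, Matrix.mul_apply]
    refine Finset.sum_congr rfl fun k _ => ?_
    simp [Matrix.star_eq_conjTranspose, Matrix.conjTranspose_apply, hw, Complex.star_def]
  have hAsym : ∀ a b, (starRingEnd ℂ) (A b a) = A a b := by
    intro a b
    have := congrFun (congrFun hA.1 a) b
    simpa [Matrix.conjTranspose_apply, Complex.star_def] using this
  refine Matrix.PosSemidef.of_dotProduct_mulVec_nonneg ?_ ?_
  · -- Hermitian part
    have htrace : star A.trace = A.trace := by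
      rw [Matrix.trace, Complex.star_def, map_sum]
      exact Finset.sum_congr rfl fun a _ => hAsym a a
    have hH1 : (A.trace • (1 : Matrix (Fin m × Fin n) (Fin m × Fin n) ℂ)).IsHermitian := by
      show _ᴴ = _
      rw [Matrix.conjTranspose_smul, Matrix.conjTranspose_one, htrace]
    have hone : ∀ (N : ℕ) (l l' : Fin N), star ((1 : Matrix (Fin N) (Fin N) ℂ) l' l)
        = (1 : Matrix (Fin N) (Fin N) ℂ) l l' := by
      intro N l l'
      by_cases h : l = l'
      · subst h; simp
      · rw [Matrix.one_apply_ne h, Matrix.one_apply_ne (Ne.symm h), star_zero]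
    have hH2 : (ptrace2 A ⊗ₖ (1 : Matrix (Fin n) (Fin n) ℂ)).IsHermitian := by
      show _ᴴ = _
      ext ⟨i, l⟩ ⟨j, l'⟩
      have e1 : star (ptrace2 A j i) = ptrace2 A i j := by
        simp only [ptrace2, Matrix.of_apply, Complex.star_def, map_sum]
        exact Finset.sum_congr rfl fun s _ => hAsym (i,s) (j,s)
      simp only [Matrix.conjTranspose_apply, Matrix.kroneckerMap_apply, star_mul', e1,
        hone n l l']
    have hH4 : ((1 : Matrix (Fin m) (Fin m) ℂ) ⊗ₖ ptrace1 A).IsHermitian := by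
      show _ᴴ = _
      ext ⟨i, l⟩ ⟨j, l'⟩
      have e1 : star (ptrace1 A l' l) = ptrace1 A l l' := by
        simp only [ptrace1, Matrix.of_apply, Complex.star_def, map_sum]
        exact Finset.sum_congr rfl fun s _ => hAsym (s,l) (s,l')
      simp only [Matrix.conjTranspose_apply, Matrix.kroneckerMap_apply, star_mul', e1,
        hone m i j]
    exact (hH1.add hH2).sub (hA.1.add hH4)
  · -- quadratic form
    intro x
    have hx : star x = fun a => (starRingEnd ℂ) (x a) := by
      funext a; simp [Complex.star_def]
    -- Term 1
    have h1 : star x ⬝ᵥ ((A.trace • (1 : Matrix (Fin m × Fin n) (Fin m × Fin n) ℂ)) *ᵥ x)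
        = ∑ k, (((∑ a, Complex.normSq (w k a)) : ℝ) : ℂ)
            * (((∑ a, Complex.normSq (x a)) : ℝ) : ℂ) := by
      rw [smul_mulVec, one_mulVec, dotProduct_smul, smul_eq_mul]
      have etr : A.trace = ∑ k, (((∑ a, Complex.normSq (w k a)) : ℝ) : ℂ) := by
        rw [Matrix.trace]
        calc (∑ a, A.diag a) = ∑ a, ∑ k, w k a * (starRingEnd ℂ) (w k a) :=
              Finset.sum_congr rfl fun a _ => by rw [Matrix.diag_apply, hAab a a]
          _ = ∑ k, ∑ a, w k a * (starRingEnd ℂ) (w k a) := Finset.sum_comm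
          _ = ∑ k, (((∑ a, Complex.normSq (w k a)) : ℝ) : ℂ) := by
              refine Finset.sum_congr rfl fun k _ => ?_
              push_cast
              exact Finset.sum_congr rfl fun a _ => Complex.mul_conj _
      have ex : star x ⬝ᵥ x = (((∑ a, Complex.normSq (x a)) : ℝ) : ℂ) := by
        rw [dotProduct, hx]
        push_cast
        exact Finset.sum_congr rfl fun a _ => Complex.normSq_eq_conj_mul_self.symm
      rw [etr, ex, Finset.sum_mul]
    -- Term 3
    have h3 : star x ⬝ᵥ (A *ᵥ x)
        = ∑ k, ((Complex.normSq (∑ a, (starRingEnd ℂ) (x a) * w k a) : ℝ) : ℂ) := by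
      calc star x ⬝ᵥ (A *ᵥ x)
          = ∑ a, ∑ b, (starRingEnd ℂ) (x a) * (A a b * x b) := by
            rw [dotProduct, hx]
            refine Finset.sum_congr rfl fun a _ => ?_
            rw [mulVec, dotProduct, Finset.mul_sum]
        _ = ∑ a, ∑ b, ∑ k, ((starRingEnd ℂ) (x a) * w k a) * (x b * (starRingEnd ℂ) (w k b)) := by
            refine Finset.sum_congr rfl fun a _ => Finset.sum_congr rfl fun b _ => ?_
            rw [hAab a b, Finset.sum_mul, Finset.mul_sum]
            exact Finset.sum_congr rfl fun k _ => by ring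
        _ = ∑ k, ∑ a, ∑ b, ((starRingEnd ℂ) (x a) * w k a) * (x b * (starRingEnd ℂ) (w k b)) := by
            rw [show (∑ a, ∑ b, ∑ k, ((starRingEnd ℂ) (x a) * w k a) * (x b * (starRingEnd ℂ) (w k b)))
                = ∑ a, ∑ k, ∑ b, ((starRingEnd ℂ) (x a) * w k a) * (x b * (starRingEnd ℂ) (w k b))
              from Finset.sum_congr rfl fun a _ => Finset.sum_comm]
            exact Finset.sum_comm
        _ = ∑ k, (∑ a, (starRingEnd ℂ) (x a) * w k a) * (∑ b, x b * (starRingEnd ℂ) (w k b)) := by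
            refine Finset.sum_congr rfl fun k _ => ?_
            rw [Finset.sum_mul_sum]
        _ = ∑ k, ((Complex.normSq (∑ a, (starRingEnd ℂ) (x a) * w k a) : ℝ) : ℂ) := by
            refine Finset.sum_congr rfl fun k _ => ?_
            rw [← Complex.mul_conj]
            congr 1
            rw [map_sum]
            exact Finset.sum_congr rfl fun b _ => by
              simp only [_root_.map_mul, Complex.conj_conj]
    -- Term 2
    have h2 : star x ⬝ᵥ ((ptrace2 A ⊗ₖ (1 : Matrix (Fin n) (Fin n) ℂ)) *ᵥ x)
        = ∑ k, (((∑ l : Fin n, ∑ l' : Fin n,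
            Complex.normSq (∑ i : Fin m, (starRingEnd ℂ) (x (i,l)) * w k (i,l'))) : ℝ) : ℂ) := by
      calc star x ⬝ᵥ ((ptrace2 A ⊗ₖ (1 : Matrix (Fin n) (Fin n) ℂ)) *ᵥ x)
          = ∑ i : Fin m, ∑ l : Fin n, (starRingEnd ℂ) (x (i,l))
              * (∑ j : Fin m, ∑ l' : Fin n,
                  (ptrace2 A i j * (1 : Matrix (Fin n) (Fin n) ℂ) l l') * x (j,l')) := by
            rw [dotProduct, hx, Fintype.sum_prod_type]
            refine Finset.sum_congr rfl fun i _ => Finset.sum_congr rfl fun l _ => ?_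
            rw [mulVec, dotProduct, Fintype.sum_prod_type]
            rfl
        _ = ∑ i : Fin m, ∑ l : Fin n, ∑ j : Fin m,
              (starRingEnd ℂ) (x (i,l)) * (ptrace2 A i j * x (j,l)) := by
            refine Finset.sum_congr rfl fun i _ => Finset.sum_congr rfl fun l _ => ?_
            rw [Finset.mul_sum]
            refine Finset.sum_congr rfl fun j _ => ?_
            rw [Finset.mul_sum]
            rw [Finset.sum_eq_single l]
            · rw [Matrix.one_apply_eq, mul_one]
            · intro l' _ hl'
              rw [Matrix.one_apply_ne (Ne.symm hl'), mul_zero, zero_mul, mul_zero]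
            · intro h; exact absurd (Finset.mem_univ l) h
        _ = ∑ i : Fin m, ∑ l : Fin n, ∑ j : Fin m, ∑ l' : Fin n, ∑ k,
              ((starRingEnd ℂ) (x (i,l)) * w k (i,l')) * (x (j,l) * (starRingEnd ℂ) (w k (j,l'))) := by
            refine Finset.sum_congr rfl fun i _ => Finset.sum_congr rfl fun l _ =>
              Finset.sum_congr rfl fun j _ => ?_
            rw [ptrace2]
            simp only [Matrix.of_apply]
            rw [Finset.sum_mul, Finset.mul_sum]
            refine Finset.sum_congr rfl fun l' _ => ?_
            rw [hAab (i,l') (j,l'), Finset.sum_mul, Finset.mul_sum]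
            exact Finset.sum_congr rfl fun k _ => by ring
        _ = ∑ k, ∑ l : Fin n, ∑ l' : Fin n, ∑ i : Fin m, ∑ j : Fin m,
              ((starRingEnd ℂ) (x (i,l)) * w k (i,l')) * (x (j,l) * (starRingEnd ℂ) (w k (j,l'))) :=
            sum_perm5a _
        _ = ∑ k, ∑ l : Fin n, ∑ l' : Fin n,
              (∑ i : Fin m, (starRingEnd ℂ) (x (i,l)) * w k (i,l'))
                * (∑ j : Fin m, x (j,l) * (starRingEnd ℂ) (w k (j,l'))) := by
            refine Finset.sum_congr rfl fun k _ => Finset.sum_congr rfl fun l _ =>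
              Finset.sum_congr rfl fun l' _ => ?_
            rw [Finset.sum_mul_sum]
        _ = ∑ k, (((∑ l : Fin n, ∑ l' : Fin n,
            Complex.normSq (∑ i : Fin m, (starRingEnd ℂ) (x (i,l)) * w k (i,l'))) : ℝ) : ℂ) := by
            refine Finset.sum_congr rfl fun k _ => ?_
            push_cast
            refine Finset.sum_congr rfl fun l _ => Finset.sum_congr rfl fun l' _ => ?_
            rw [← Complex.mul_conj]
            congr 1
            rw [map_sum]
            exact Finset.sum_congr rfl fun j _ => by
              simp only [_root_.map_mul, Complex.conj_conj]
    -- Term 4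
    have h4 : star x ⬝ᵥ (((1 : Matrix (Fin m) (Fin m) ℂ) ⊗ₖ ptrace1 A) *ᵥ x)
        = ∑ k, (((∑ i : Fin m, ∑ j : Fin m,
            Complex.normSq (∑ l : Fin n, (starRingEnd ℂ) (x (i,l)) * w k (j,l))) : ℝ) : ℂ) := by
      calc star x ⬝ᵥ (((1 : Matrix (Fin m) (Fin m) ℂ) ⊗ₖ ptrace1 A) *ᵥ x)
          = ∑ i : Fin m, ∑ l : Fin n, (starRingEnd ℂ) (x (i,l))
              * (∑ j : Fin m, ∑ s : Fin n,
                  ((1 : Matrix (Fin m) (Fin m) ℂ) i j * ptrace1 A l s) * x (j,s)) := by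
            rw [dotProduct, hx, Fintype.sum_prod_type]
            refine Finset.sum_congr rfl fun i _ => Finset.sum_congr rfl fun l _ => ?_
            rw [mulVec, dotProduct, Fintype.sum_prod_type]
            rfl
        _ = ∑ i : Fin m, ∑ l : Fin n, ∑ s : Fin n,
              (starRingEnd ℂ) (x (i,l)) * (ptrace1 A l s * x (i,s)) := by
            refine Finset.sum_congr rfl fun i _ => Finset.sum_congr rfl fun l _ => ?_
            rw [Finset.mul_sum]
            rw [Finset.sum_eq_single i]
            · rw [Finset.mul_sum]
              refine Finset.sum_congr rfl fun s _ => ?_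
              rw [Matrix.one_apply_eq, one_mul]
            · intro j _ hj
              have : ∀ s : Fin n, ((1 : Matrix (Fin m) (Fin m) ℂ) i j * ptrace1 A l s) * x (j,s)
                  = 0 := by
                intro s
                rw [Matrix.one_apply_ne (Ne.symm hj), zero_mul, zero_mul]
              rw [Finset.sum_eq_zero fun s _ => this s, mul_zero]
            · intro h; exact absurd (Finset.mem_univ i) h
        _ = ∑ i : Fin m, ∑ l : Fin n, ∑ s : Fin n, ∑ j : Fin m, ∑ k,
              ((starRingEnd ℂ) (x (i,l)) * w k (j,l)) * (x (i,s) * (starRingEnd ℂ) (w k (j,s))) := by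
            refine Finset.sum_congr rfl fun i _ => Finset.sum_congr rfl fun l _ =>
              Finset.sum_congr rfl fun s _ => ?_
            rw [ptrace1]
            simp only [Matrix.of_apply]
            rw [Finset.sum_mul, Finset.mul_sum]
            refine Finset.sum_congr rfl fun j _ => ?_
            rw [hAab (j,l) (j,s), Finset.sum_mul, Finset.mul_sum]
            exact Finset.sum_congr rfl fun k _ => by ring
        _ = ∑ k, ∑ i : Fin m, ∑ j : Fin m, ∑ l : Fin n, ∑ s : Fin n,
              ((starRingEnd ℂ) (x (i,l)) * w k (j,l)) * (x (i,s) * (starRingEnd ℂ) (w k (j,s))) :=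
            sum_perm5b _
        _ = ∑ k, ∑ i : Fin m, ∑ j : Fin m,
              (∑ l : Fin n, (starRingEnd ℂ) (x (i,l)) * w k (j,l))
                * (∑ s : Fin n, x (i,s) * (starRingEnd ℂ) (w k (j,s))) := by
            refine Finset.sum_congr rfl fun k _ => Finset.sum_congr rfl fun i _ =>
              Finset.sum_congr rfl fun j _ => ?_
            rw [Finset.sum_mul_sum]
        _ = ∑ k, (((∑ i : Fin m, ∑ j : Fin m,
            Complex.normSq (∑ l : Fin n, (starRingEnd ℂ) (x (i,l)) * w k (j,l))) : ℝ) : ℂ) := by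
            refine Finset.sum_congr rfl fun k _ => ?_
            push_cast
            refine Finset.sum_congr rfl fun i _ => Finset.sum_congr rfl fun j _ => ?_
            rw [← Complex.mul_conj]
            congr 1
            rw [map_sum]
            exact Finset.sum_congr rfl fun s _ => by
              simp only [_root_.map_mul, Complex.conj_conj]
    -- assemble
    have hval : star x ⬝ᵥ (((A.trace • (1 : Matrix (Fin m × Fin n) (Fin m × Fin n) ℂ) +
          ptrace2 A ⊗ₖ (1 : Matrix (Fin n) (Fin n) ℂ)) -
        (A + (1 : Matrix (Fin m) (Fin m) ℂ) ⊗ₖ ptrace1 A)) *ᵥ x)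
        = (star x ⬝ᵥ ((A.trace • (1 : Matrix (Fin m × Fin n) (Fin m × Fin n) ℂ)) *ᵥ x)
            + star x ⬝ᵥ ((ptrace2 A ⊗ₖ (1 : Matrix (Fin n) (Fin n) ℂ)) *ᵥ x))
          - (star x ⬝ᵥ (A *ᵥ x)
            + star x ⬝ᵥ (((1 : Matrix (Fin m) (Fin m) ℂ) ⊗ₖ ptrace1 A) *ᵥ x)) := by
      rw [sub_mulVec, add_mulVec, add_mulVec, dotProduct_sub, dotProduct_add, dotProduct_add]
    rw [hval, h1, h2, h3, h4, ← Finset.sum_add_distrib, ← Finset.sum_add_distrib,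
      ← Finset.sum_sub_distrib]
    apply Finset.sum_nonneg
    intro k _
    have key := core_general x (w k)
    have hreal : (0:ℝ) ≤ ((∑ a, Complex.normSq (w k a)) * (∑ a, Complex.normSq (x a))
        + (∑ l : Fin n, ∑ l' : Fin n,
            Complex.normSq (∑ i : Fin m, (starRingEnd ℂ) (x (i,l)) * w k (i,l'))))
        - ((Complex.normSq (∑ a, (starRingEnd ℂ) (x a) * w k a))
          + (∑ i : Fin m, ∑ j : Fin m,
              Complex.normSq (∑ l : Fin n, (starRingEnd ℂ) (x (i,l)) * w k (j,l)))) := by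
      linarith [key]
    have : ((((∑ a, Complex.normSq (w k a)) : ℝ) : ℂ) * (((∑ a, Complex.normSq (x a)) : ℝ) : ℂ)
        + (((∑ l : Fin n, ∑ l' : Fin n,
            Complex.normSq (∑ i : Fin m, (starRingEnd ℂ) (x (i,l)) * w k (i,l'))) : ℝ) : ℂ))
        - (((Complex.normSq (∑ a, (starRingEnd ℂ) (x a) * w k a) : ℝ) : ℂ)
          + (((∑ i : Fin m, ∑ j : Fin m,
              Complex.normSq (∑ l : Fin n, (starRingEnd ℂ) (x (i,l)) * w k (j,l))) : ℝ) : ℂ))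
        = ((((∑ a, Complex.normSq (w k a)) * (∑ a, Complex.normSq (x a))
        + (∑ l : Fin n, ∑ l' : Fin n,
            Complex.normSq (∑ i : Fin m, (starRingEnd ℂ) (x (i,l)) * w k (i,l'))))
        - ((Complex.normSq (∑ a, (starRingEnd ℂ) (x a) * w k a))
          + (∑ i : Fin m, ∑ j : Fin m,
              Complex.normSq (∑ l : Fin n, (starRingEnd ℂ) (x (i,l)) * w k (j,l)))) : ℝ) : ℂ) := by
      push_cast
      ring
    rw [this]
    exact_mod_cast hreal
end

section
/- Let A ∈ M_m(M_n) be positive semidefinite and let A^τ = [A_{j,i}]_{i,j=1}^m denote its partial transpose (transposing the block structure without transposing individual blocks). Then (tr₂A^τ) ⊗ I_n ≥ A^τ and (tr₂A^τ) ⊗ I_n ≥ −A^τ in the Löwner order. -/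
open Matrix BigOperators Kronecker ComplexOrder

/-- Partial transpose: transpose the block structure without transposing blocks. -/
noncomputable def ptranspose {m n : ℕ} (A : Matrix (Fin m × Fin n) (Fin m × Fin n) ℂ) :
    Matrix (Fin m × Fin n) (Fin m × Fin n) ℂ :=
  Matrix.of fun p q => A (q.1, p.2) (p.1, q.2)

noncomputable def Emat {m n : ℕ} (B : Matrix (Fin m × Fin n) (Fin m × Fin n) ℂ)
    (x : Fin m × Fin n → ℂ) (k : Fin m × Fin n) (s t : Fin n) : ℂ :=
  ∑ j : Fin m, star (B k (j, s)) * x (j, t)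

lemma cs_step {n : ℕ} (E : Fin n → Fin n → ℂ) :
    ‖∑ s : Fin n, ∑ t : Fin n, star (E t s) * E s t‖ ≤
      ∑ s : Fin n, ∑ t : Fin n, ‖E s t‖ ^ 2 := by
  classical
  set u : EuclideanSpace ℂ (Fin n × Fin n) := WithLp.toLp 2 (fun p : Fin n × Fin n => E p.2 p.1) with hu
  set v : EuclideanSpace ℂ (Fin n × Fin n) := WithLp.toLp 2 (fun p : Fin n × Fin n => E p.1 p.2) with hv
  have h1 : (∑ s : Fin n, ∑ t : Fin n, star (E t s) * E s t) = inner ℂ u v := by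
    rw [PiLp.inner_apply, Fintype.sum_prod_type]
    simp [u, v, RCLike.inner_apply, mul_comm]
  have h2 : ‖u‖ = ‖v‖ := by
    rw [EuclideanSpace.norm_eq, EuclideanSpace.norm_eq]
    congr 1
    rw [Fintype.sum_prod_type, Fintype.sum_prod_type]
    exact Finset.sum_comm
  have h3 := norm_inner_le_norm (𝕜 := ℂ) u v
  rw [h1]
  calc ‖(inner ℂ u v : ℂ)‖ ≤ ‖u‖ * ‖v‖ := h3
    _ = ∑ s : Fin n, ∑ t : Fin n, ‖E s t‖ ^ 2 := by
        rw [h2, ← sq, EuclideanSpace.norm_eq, Real.sq_sqrt (by positivity),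
          Fintype.sum_prod_type]

lemma claim1 {m n : ℕ} (B : Matrix (Fin m × Fin n) (Fin m × Fin n) ℂ)
    (x : Fin m × Fin n → ℂ) :
    star x ⬝ᵥ (ptranspose (Bᴴ * B)) *ᵥ x =
      ∑ k : Fin m × Fin n, ∑ s : Fin n, ∑ t : Fin n,
        star (Emat B x k t s) * Emat B x k s t := by
  classical
  simp only [dotProduct, mulVec, ptranspose, Matrix.of_apply, Pi.star_apply,
    Matrix.mul_apply, Matrix.conjTranspose_apply, Emat, star_sum, star_mul',
    star_star, Finset.mul_sum, Finset.sum_mul]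
  have hL : (∑ p : Fin m × Fin n, ∑ q : Fin m × Fin n, ∑ k : Fin m × Fin n,
      star (x p) * (star (B k (q.1, p.2)) * B k (p.1, q.2) * x q)) =
      ∑ z : (Fin m × Fin n) × (Fin m × Fin n) × (Fin m × Fin n),
        star (x z.1) * (star (B z.2.2 (z.2.1.1, z.1.2)) * B z.2.2 (z.1.1, z.2.1.2) * x z.2.1) := by
    simp [Fintype.sum_prod_type]
  have hR : (∑ k : Fin m × Fin n, ∑ s : Fin n, ∑ t : Fin n, ∑ j : Fin m, ∑ i : Fin m,
      B k (i, t) * star (x (i, s)) * (star (B k (j, s)) * x (j, t))) =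
      ∑ w : (Fin m × Fin n) × Fin n × Fin n × Fin m × Fin m,
        B w.1 (w.2.2.2.2, w.2.2.1) * star (x (w.2.2.2.2, w.2.1)) *
          (star (B w.1 (w.2.2.2.1, w.2.1)) * x (w.2.2.2.1, w.2.2.1)) := by
    simp [Fintype.sum_prod_type]
  rw [hL, hR]
  refine Fintype.sum_equiv ⟨fun z => (z.2.2, z.1.2, z.2.1.2, z.2.1.1, z.1.1),
    fun w => ((w.2.2.2.2, w.2.1), (w.2.2.2.1, w.2.2.1), w.1),
    fun _ => rfl, fun _ => rfl⟩ _ _ fun z => by simp only [Equiv.coe_fn_mk]; ring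

lemma claim2 {m n : ℕ} (B : Matrix (Fin m × Fin n) (Fin m × Fin n) ℂ)
    (x : Fin m × Fin n → ℂ) :
    star x ⬝ᵥ ((ptrace2 (ptranspose (Bᴴ * B))) ⊗ₖ (1 : Matrix (Fin n) (Fin n) ℂ)) *ᵥ x =
      ∑ k : Fin m × Fin n, ∑ s : Fin n, ∑ t : Fin n,
        star (Emat B x k s t) * Emat B x k s t := by
  classical
  simp only [dotProduct, mulVec, ptrace2, ptranspose, kroneckerMap_apply,
    Matrix.of_apply, Pi.star_apply, Matrix.mul_apply, Matrix.conjTranspose_apply,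
    Emat, star_sum, star_mul', star_star, Matrix.one_apply, mul_ite, mul_one,
    mul_zero, ite_mul, zero_mul, Finset.mul_sum, Finset.sum_mul,
    Finset.sum_ite_eq, Finset.sum_ite_eq', Finset.mem_univ, if_true]
  have hL : (∑ p : Fin m × Fin n, ∑ q : Fin m × Fin n,
      if p.2 = q.2 then
        ∑ l : Fin n, ∑ k : Fin m × Fin n,
          star (x p) * (star (B k (q.1, l)) * B k (p.1, l) * x q)
      else 0) =
      ∑ z : Fin m × Fin n × Fin m × Fin n × (Fin m × Fin n),
        star (x (z.1, z.2.1)) * (star (B z.2.2.2.2 (z.2.2.1, z.2.2.2.1)) *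
          B z.2.2.2.2 (z.1, z.2.2.2.1) * x (z.2.2.1, z.2.1)) := by
    simp [Fintype.sum_prod_type, Finset.sum_ite_eq]
  have hR : (∑ k : Fin m × Fin n, ∑ l : Fin n, ∑ s : Fin n, ∑ j : Fin m, ∑ i : Fin m,
      B k (i, l) * star (x (i, s)) * (star (B k (j, l)) * x (j, s))) =
      ∑ w : (Fin m × Fin n) × Fin n × Fin n × Fin m × Fin m,
        B w.1 (w.2.2.2.2, w.2.1) * star (x (w.2.2.2.2, w.2.2.1)) *
          (star (B w.1 (w.2.2.2.1, w.2.1)) * x (w.2.2.2.1, w.2.2.1)) := by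
    simp [Fintype.sum_prod_type]
  rw [hL, hR]
  refine Fintype.sum_equiv ⟨fun z => (z.2.2.2.2, z.2.2.2.1, z.2.1, z.2.2.1, z.1),
    fun w => (w.2.2.2.2, w.2.2.1, w.2.2.2.1, w.2.1, w.1),
    fun _ => rfl, fun _ => rfl⟩ _ _ fun z => by simp only [Equiv.coe_fn_mk]; ring

lemma herm_tau {m n : ℕ} {A : Matrix (Fin m × Fin n) (Fin m × Fin n) ℂ}
    (hA : A.IsHermitian) : (ptranspose A).IsHermitian := by
  ext p q
  simp only [conjTranspose_apply, ptranspose, Matrix.of_apply]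
  exact hA.apply _ _

lemma herm_pt {m n : ℕ} {A : Matrix (Fin m × Fin n) (Fin m × Fin n) ℂ}
    (hA : A.IsHermitian) : (ptrace2 (ptranspose A)).IsHermitian := by
  have hτ := herm_tau hA
  ext i j
  simp only [conjTranspose_apply, ptrace2, Matrix.of_apply, star_sum]
  exact Finset.sum_congr rfl fun l _ => hτ.apply _ _

lemma herm_K {m n : ℕ} {A : Matrix (Fin m × Fin n) (Fin m × Fin n) ℂ}
    (hA : A.IsHermitian) :
    ((ptrace2 (ptranspose A)) ⊗ₖ (1 : Matrix (Fin n) (Fin n) ℂ)).IsHermitian := by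
  have h := herm_pt hA
  ext p q
  simp only [conjTranspose_apply, kroneckerMap_apply, star_mul', Matrix.one_apply]
  rw [h.apply]
  simp [eq_comm, apply_ite (star : ℂ → ℂ)]

lemma herm_quad_real {N : Type*} [Fintype N] {M : Matrix N N ℂ} (hM : M.IsHermitian)
    (x : N → ℂ) : star (star x ⬝ᵥ M *ᵥ x) = star x ⬝ᵥ M *ᵥ x := by
  simp only [dotProduct, mulVec, star_sum, star_mul', Pi.star_apply, star_star,
    Finset.mul_sum]
  rw [Finset.sum_comm]
  refine Finset.sum_congr rfl fun p _ => Finset.sum_congr rfl fun r _ => ?_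
  rw [← hM.apply p r]
  ring

open scoped MatrixOrder Matrix.Norms.L2Operator in
lemma psd_eq_star_mul {N : Type*} [Fintype N] [DecidableEq N] {A : Matrix N N ℂ}
    (hA : A.PosSemidef) : ∃ B : Matrix N N ℂ, A = Bᴴ * B := by
  obtain ⟨B, hB⟩ := CStarAlgebra.nonneg_iff_eq_star_mul_self.mp hA.nonneg
  exact ⟨B, hB⟩

/-- Choi's lemma: (tr₂A^τ) ⊗ I_n ≥ ± A^τ. -/
theorem stmt14 {m n : ℕ}
    (A : Matrix (Fin m × Fin n) (Fin m × Fin n) ℂ) (hA : A.PosSemidef) :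
    (ptrace2 (ptranspose A) ⊗ₖ (1 : Matrix (Fin n) (Fin n) ℂ) -
      ptranspose A).PosSemidef ∧
    (ptrace2 (ptranspose A) ⊗ₖ (1 : Matrix (Fin n) (Fin n) ℂ) +
      ptranspose A).PosSemidef := by
  classical
  have hH := hA.1
  obtain ⟨B, hB⟩ := psd_eq_star_mul hA
  have key : ∀ x : Fin m × Fin n → ℂ,
      0 ≤ star x ⬝ᵥ ((ptrace2 (ptranspose A)) ⊗ₖ (1 : Matrix (Fin n) (Fin n) ℂ)) *ᵥ x
            - star x ⬝ᵥ (ptranspose A) *ᵥ x ∧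
      0 ≤ star x ⬝ᵥ ((ptrace2 (ptranspose A)) ⊗ₖ (1 : Matrix (Fin n) (Fin n) ℂ)) *ᵥ x
            + star x ⬝ᵥ (ptranspose A) *ᵥ x := by
    intro x
    set q : ℂ := star x ⬝ᵥ (ptranspose A) *ᵥ x with hq
    set Q : ℂ := star x ⬝ᵥ ((ptrace2 (ptranspose A)) ⊗ₖ (1 : Matrix (Fin n) (Fin n) ℂ)) *ᵥ x
      with hQ
    have hqreal : star q = q := herm_quad_real (herm_tau hH) x
    -- the real bound S
    set S : ℝ := ∑ k : Fin m × Fin n, ∑ s : Fin n, ∑ t : Fin n, ‖Emat B x k s t‖ ^ 2 with hS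
    have hQS : Q = (S : ℂ) := by
      rw [hQ, hB, claim2]
      push_cast [hS]
      refine Finset.sum_congr rfl fun k _ => Finset.sum_congr rfl fun s _ =>
        Finset.sum_congr rfl fun t _ => ?_
      rw [Complex.star_def, Complex.conj_mul']
    have hqS : ‖q‖ ≤ S := by
      rw [hq, hB, claim1]
      calc ‖∑ k : Fin m × Fin n, ∑ s : Fin n, ∑ t : Fin n,
            star (Emat B x k t s) * Emat B x k s t‖
          ≤ ∑ k : Fin m × Fin n, ‖∑ s : Fin n, ∑ t : Fin n,
            star (Emat B x k t s) * Emat B x k s t‖ := norm_sum_le _ _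
        _ ≤ S := Finset.sum_le_sum fun k _ => cs_step (Emat B x k)
    have hqre : q = (q.re : ℂ) := by
      have := Complex.conj_eq_iff_re.mp hqreal
      exact this.symm
    have habs : |q.re| ≤ S := by
      have : ‖q‖ = |q.re| := by rw [hqre]; simp [Complex.norm_real]
      linarith [hqS, this.symm.le, this.le]
    constructor
    · rw [hQS, hqre, ← Complex.ofReal_sub]
      rw [Complex.zero_le_real]
      have := abs_le.mp habs
      linarith
    · rw [hQS, hqre, ← Complex.ofReal_add]
      rw [Complex.zero_le_real]
      have := abs_le.mp habs
      linarith
  refine ⟨PosSemidef.of_dotProduct_mulVec_nonneg ((herm_K hH).sub (herm_tau hH)) fun x => ?_,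
    PosSemidef.of_dotProduct_mulVec_nonneg ((herm_K hH).add (herm_tau hH)) fun x => ?_⟩
  · rw [Matrix.sub_mulVec, dotProduct_sub]
    exact (key x).1
  · rw [Matrix.add_mulVec, dotProduct_add]
    exact (key x).2
end

section
/- Let X, Y, W, Z be positive semidefinite matrices of the same order with X ≥ W, X ≥ Z, and X + Y ≥ W + Z (Löwner order). Then det X + det Y ≥ det W + det Z. -/
open Matrix BigOperators ComplexOrder

section LinAux

variable {m : Type*} [Fintype m] [DecidableEq m]

lemma det_real {A : Matrix m m ℂ} (hA : A.IsHermitian) : A.det = (A.det.re : ℂ) := by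
  have h : star A.det = A.det := by
    rw [← Matrix.det_conjTranspose, hA.eq]
  exact ((Complex.conj_eq_iff_re).mp h).symm

lemma detre_eq_prod {A : Matrix m m ℂ} (hA : A.IsHermitian) :
    A.det.re = ∏ i, hA.eigenvalues i := by
  have := hA.det_eq_prod_eigenvalues
  rw [this]
  norm_cast

lemma detre_nonneg {A : Matrix m m ℂ} (hA : A.PosSemidef) : 0 ≤ A.det.re := by
  rw [detre_eq_prod hA.1]
  exact Finset.prod_nonneg fun i _ => hA.eigenvalues_nonneg i


open scoped MatrixOrder in
lemma psd_sqrt_exists {A : Matrix m m ℂ} (hA : A.PosSemidef) :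
    ∃ S : Matrix m m ℂ, S.PosSemidef ∧ S * S = A :=
  ⟨CFC.sqrt A, Matrix.nonneg_iff_posSemidef.mp (CFC.sqrt_nonneg A),
    CFC.sqrt_mul_sqrt_self A (Matrix.nonneg_iff_posSemidef.mpr hA)⟩

lemma posDef_of_det_ne {A : Matrix m m ℂ} (hA : A.PosSemidef) (h : A.det ≠ 0) : A.PosDef := by
  refine posDef_iff_dotProduct_mulVec.mpr ⟨hA.1, fun x hx => ?_⟩
  rcases lt_or_eq_of_le (hA.dotProduct_mulVec_nonneg x) with h' | h'
  · exact h'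
  · exfalso
    have hAx : A *ᵥ x = 0 := (hA.dotProduct_mulVec_zero_iff x).mp h'.symm
    have : Function.Injective (A.mulVec) := by
      rw [Matrix.mulVec_injective_iff_isUnit]
      exact (Matrix.isUnit_iff_isUnit_det A).mpr h.isUnit
    exact hx (this (by simpa using hAx))

lemma det_one_add_herm {M : Matrix m m ℂ} (hM : M.IsHermitian) :
    (1 + M).det = ((∏ i, (1 + hM.eigenvalues i) : ℝ) : ℂ) := by
  set U : Matrix m m ℂ := (hM.eigenvectorUnitary : Matrix m m ℂ) with hUdef
  have hU : U * star U = 1 := Unitary.coe_mul_star_self _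
  set D : Matrix m m ℂ := Matrix.diagonal fun i => (1 : ℂ) + (hM.eigenvalues i : ℂ) with hD
  have hsplit : D = 1 + Matrix.diagonal (RCLike.ofReal ∘ hM.eigenvalues) := by
    rw [← Matrix.diagonal_one, Matrix.diagonal_add]
    rfl
  have key : U * D * star U = 1 + M := by
    rw [hsplit, Matrix.mul_add, Matrix.add_mul, mul_one, hU]
    congr 1
    exact hM.spectral_theorem.symm
  have hdetU : U.det * (star U).det = 1 := by rw [← Matrix.det_mul, hU, Matrix.det_one]
  have : (1 + M).det = D.det := by
    rw [← key, Matrix.det_mul, Matrix.det_mul]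
    calc U.det * D.det * (star U).det = D.det * (U.det * (star U).det) := by ring
    _ = D.det := by rw [hdetU, mul_one]
  rw [this, hD, Matrix.det_diagonal]
  push_cast
  rfl


-- scalar: ∏ (1+f) ≥ 1 + ∏ f on nonempty finsets, f ≥ 0
lemma prod_one_add_ge {ι : Type*} (s : Finset ι) (f : ι → ℝ) (hf : ∀ i ∈ s, 0 ≤ f i)
    (hs : s.Nonempty) : 1 + ∏ i ∈ s, f i ≤ ∏ i ∈ s, (1 + f i) := by
  induction s using Finset.cons_induction with
  | empty => exact absurd hs (by simp)
  | cons a s ha ih =>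
    rw [Finset.prod_cons, Finset.prod_cons]
    rcases s.eq_empty_or_nonempty with rfl | hs'
    · simp
    · have hfa : 0 ≤ f a := hf a (Finset.mem_cons_self a s)
      have hprod : 0 ≤ ∏ i ∈ s, f i :=
        Finset.prod_nonneg fun i hi => hf i (Finset.mem_cons_of_mem hi)
      have h1 := ih (fun i hi => hf i (Finset.mem_cons_of_mem hi)) hs'
      calc 1 + f a * ∏ i ∈ s, f i ≤ (1 + f a) * (1 + ∏ i ∈ s, f i) := by nlinarith
      _ ≤ (1 + f a) * ∏ i ∈ s, (1 + f i) := by nlinarith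



lemma detre_one_add_ge_one {M : Matrix m m ℂ} (hM : M.PosSemidef) : 1 ≤ (1 + M).det.re := by
  have h := det_one_add_herm hM.1
  have : (1 + M).det.re = ∏ i, (1 + hM.1.eigenvalues i) := by rw [h]; norm_cast
  rw [this]
  have := Finset.prod_le_prod (s := Finset.univ) (f := fun _ : m => (1:ℝ))
    (g := fun i => 1 + hM.1.eigenvalues i) (fun i _ => zero_le_one)
    (fun i _ => by show (1:ℝ) ≤ 1 + hM.1.eigenvalues i; linarith [hM.eigenvalues_nonneg i])
  simpa using this

lemma detre_one_add_ge [Nonempty m] {M : Matrix m m ℂ} (hM : M.PosSemidef) :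
    1 + M.det.re ≤ (1 + M).det.re := by
  have h := det_one_add_herm hM.1
  have h2 : (1 + M).det.re = ∏ i, (1 + hM.1.eigenvalues i) := by rw [h]; norm_cast
  rw [h2, detre_eq_prod hM.1]
  exact prod_one_add_ge Finset.univ _ (fun i _ => hM.eigenvalues_nonneg i) Finset.univ_nonempty

-- congruence decomposition
lemma conj_decomp {A D : Matrix m m ℂ} (hA : A.PosSemidef) (hdet : A.det ≠ 0)
    (hD : D.PosSemidef) :
    ∃ M : Matrix m m ℂ, M.PosSemidef ∧ (A + D).det.re = A.det.re * (1 + M).det.re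
      ∧ D.det.re = A.det.re * M.det.re := by
  set S : Matrix m m ℂ := (psd_sqrt_exists hA).choose with hSdef
  have hSps : S.PosSemidef := (psd_sqrt_exists hA).choose_spec.1
  have hSh : Sᴴ = S := hSps.1
  have hSS : S * S = A := (psd_sqrt_exists hA).choose_spec.2
  have hdetS : IsUnit S.det := by
    have : S.det * S.det = A.det := by rw [← Matrix.det_mul, hSS]
    exact isUnit_of_mul_isUnit_left (this ▸ hdet.isUnit)
  have hSunit : IsUnit S := (Matrix.isUnit_iff_isUnit_det S).mpr hdetS
  set T : Matrix m m ℂ := S⁻¹ with hTdef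
  have hTS : T * S = 1 := Matrix.nonsing_inv_mul S hdetS
  have hST : S * T = 1 := Matrix.mul_nonsing_inv S hdetS
  have hTh : Tᴴ = T := by rw [hTdef, Matrix.conjTranspose_nonsing_inv, hSh]
  refine ⟨T * D * T, ?_, ?_, ?_⟩
  · have := hD.mul_mul_conjTranspose_same T
    rwa [hTh] at this
  · have key : A + D = S * (1 + T * D * T) * S := by
      rw [Matrix.mul_add, Matrix.add_mul, mul_one, hSS]
      congr 1
      calc D = (S * T) * D * (T * S) := by rw [hST, hTS, one_mul, mul_one]
      _ = S * (T * D * T) * S := by noncomm_ring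
    rw [key, Matrix.det_mul, Matrix.det_mul]
    have h1 : S.det * S.det = A.det := by rw [← Matrix.det_mul, hSS]
    have hM : (1 + T * D * T).IsHermitian := by
      have := (hD.mul_mul_conjTranspose_same T).1
      rw [hTh] at this
      exact Matrix.isHermitian_one.add this
    calc (S.det * (1 + T * D * T).det * S.det).re
        = ((1 + T * D * T).det * A.det).re := by rw [← h1]; ring_nf
      _ = A.det.re * (1 + T * D * T).det.re := by
          rw [det_real hM, det_real hA.1]
          norm_cast
          ring
  · have key : D = S * (T * D * T) * S := by
      calc D = (S * T) * D * (T * S) := by rw [hST, hTS, one_mul, mul_one]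
      _ = S * (T * D * T) * S := by noncomm_ring
    conv_lhs => rw [key]
    rw [Matrix.det_mul, Matrix.det_mul]
    have h1 : S.det * S.det = A.det := by rw [← Matrix.det_mul, hSS]
    have hM : (T * D * T).IsHermitian := by
      have := (hD.mul_mul_conjTranspose_same T).1
      rwa [hTh] at this
    calc (S.det * (T * D * T).det * S.det).re
        = ((T * D * T).det * A.det).re := by rw [← h1]; ring_nf
      _ = A.det.re * (T * D * T).det.re := by
          rw [det_real hM, det_real hA.1]
          norm_cast
          ring



lemma detre_mono {A B : Matrix m m ℂ} (hA : A.PosSemidef) (hBA : (B - A).PosSemidef) :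
    A.det.re ≤ B.det.re := by
  have hB : B.PosSemidef := by
    have := hA.add hBA
    simpa using this
  by_cases hdet : A.det = 0
  · rw [hdet]
    simpa using detre_nonneg hB
  · obtain ⟨M, hM, h1, _⟩ := conj_decomp hA hdet hBA
    have hre : 0 ≤ A.det.re := detre_nonneg hA
    have : B.det.re = A.det.re * (1 + M).det.re := by
      rw [← h1]; congr 2; abel
    rw [this]
    nlinarith [detre_one_add_ge_one hM]

lemma detre_superadd [Nonempty m] {P Q : Matrix m m ℂ} (hP : P.PosSemidef) (hQ : Q.PosSemidef) :
    P.det.re + Q.det.re ≤ (P + Q).det.re := by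
  by_cases hdet : P.det = 0
  · have h0 : P.det.re = 0 := by rw [hdet]; rfl
    rw [h0, zero_add]
    exact detre_mono hQ (by simpa using hP)
  · obtain ⟨M, hM, h1, h2⟩ := conj_decomp hP hdet hQ
    have hre : 0 ≤ P.det.re := detre_nonneg hP
    nlinarith [detre_one_add_ge hM, detre_nonneg hM]


lemma det_piecewise_one (A : Matrix m m ℂ) (s : Finset m) :
    (Matrix.of (s.piecewise A (1 : Matrix m m ℂ))).det
      = (A.submatrix (Subtype.val : {i // i ∈ s} → m) Subtype.val).det := by
  classical
  set B : Matrix m m ℂ := Matrix.of (s.piecewise A (1 : Matrix m m ℂ)) with hB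
  rw [← Matrix.det_submatrix_equiv_self (Equiv.sumCompl (fun i => i ∈ s)) B]
  have hblock : B.submatrix (Equiv.sumCompl (fun i => i ∈ s)) (Equiv.sumCompl (fun i => i ∈ s)) =
      Matrix.fromBlocks (A.submatrix Subtype.val Subtype.val)
        (A.submatrix Subtype.val Subtype.val) 0 (1 : Matrix {i // ¬ i ∈ s} {i // ¬ i ∈ s} ℂ) := by
    ext i j
    cases i with
    | inl i =>
      cases j with
      | inl j => simp [hB, Finset.piecewise, i.2]
      | inr j => simp [hB, Finset.piecewise, i.2]
    | inr i =>
      cases j with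
      | inl j =>
        have hne : (i : m) ≠ (j : m) := fun h => i.2 (h ▸ j.2)
        simp [hB, Finset.piecewise, i.2, Matrix.one_apply, hne]
      | inr j =>
        by_cases hij : i = j
        · subst hij
          simp [hB, Finset.piecewise, i.2, Matrix.one_apply]
        · have hne : (i : m) ≠ (j : m) := fun h => hij (Subtype.ext h)
          simp [hB, Finset.piecewise, i.2, Matrix.one_apply, hne, hij]
  rw [hblock, Matrix.det_fromBlocks_zero₂₁, Matrix.det_one, mul_one]

lemma det_one_add_expansion (A : Matrix m m ℂ) :
    (1 + A).det = ∑ s : Finset m,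
      (A.submatrix (Subtype.val : {i // i ∈ s} → m) Subtype.val).det := by
  classical
  have h1 : (1 + A) = Matrix.of (A + (1 : Matrix m m ℂ)) := by
    ext i j; simp [add_comm]; rfl
  rw [h1]
  have hexp := (Matrix.detRowAlternating (R := ℂ) (n := m)).toMultilinearMap.map_add_univ
    (fun i => A i) (fun i => (1 : Matrix m m ℂ) i)
  calc (Matrix.of (A + (1:Matrix m m ℂ))).det
      = ∑ s : Finset m, (Matrix.of (s.piecewise A (1 : Matrix m m ℂ))).det := hexp
    _ = _ := Finset.sum_congr rfl fun s _ => det_piecewise_one A s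



lemma detre_one_add_sub_superadd {P Q : Matrix m m ℂ} (hP : P.PosSemidef) (hQ : Q.PosSemidef) :
    (1 + P).det.re + (1 + Q).det.re ≤ (1 + (P + Q)).det.re + 1 := by
  classical
  rw [det_one_add_expansion P, det_one_add_expansion Q, det_one_add_expansion (P + Q),
    Complex.re_sum, Complex.re_sum, Complex.re_sum, ← Finset.sum_add_distrib]
  have hsum1 : (1:ℝ) = ∑ s : Finset m, (if s = (∅ : Finset m) then (1:ℝ) else 0) := by
    rw [Finset.sum_ite_eq' Finset.univ (∅ : Finset m) (fun _ => (1:ℝ))]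
    simp
  conv_rhs => rw [hsum1]
  rw [← Finset.sum_add_distrib]
  refine Finset.sum_le_sum fun s _ => ?_
  rcases s.eq_empty_or_nonempty with rfl | hs
  · haveI : IsEmpty {i // i ∈ (∅ : Finset m)} := ⟨fun i => absurd i.2 (Finset.notMem_empty _)⟩
    simp [Matrix.det_isEmpty]
  · haveI : Nonempty {i // i ∈ s} := ⟨⟨hs.choose, hs.choose_spec⟩⟩
    have hPs := hP.submatrix (Subtype.val : {i // i ∈ s} → m)
    have hQs := hQ.submatrix (Subtype.val : {i // i ∈ s} → m)
    have h := detre_superadd hPs hQs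
    rw [Matrix.submatrix_add] at *
    have hne : s ≠ ∅ := hs.ne_empty
    simp only [hne, if_false, add_zero]
    exact h



lemma detre_supermod {H P Q : Matrix m m ℂ} (hH : H.PosDef) (hP : P.PosSemidef)
    (hQ : Q.PosSemidef) :
    (H + P).det.re + (H + Q).det.re ≤ (H + P + Q).det.re + H.det.re := by
  classical
  have hHps : H.PosSemidef := hH.posSemidef
  set S : Matrix m m ℂ := (psd_sqrt_exists hHps).choose with hSdef
  have hSps : S.PosSemidef := (psd_sqrt_exists hHps).choose_spec.1
  have hSh : Sᴴ = S := hSps.1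
  have hSS : S * S = H := (psd_sqrt_exists hHps).choose_spec.2
  have hdet : H.det ≠ 0 := hH.det_pos.ne'
  have hdetS : IsUnit S.det := by
    have : S.det * S.det = H.det := by rw [← Matrix.det_mul, hSS]
    exact isUnit_of_mul_isUnit_left (this ▸ hdet.isUnit)
  set T : Matrix m m ℂ := S⁻¹ with hTdef
  have hTS : T * S = 1 := Matrix.nonsing_inv_mul S hdetS
  have hST : S * T = 1 := Matrix.mul_nonsing_inv S hdetS
  have hTh : Tᴴ = T := by rw [hTdef, Matrix.conjTranspose_nonsing_inv, hSh]
  have hconjps : ∀ {D : Matrix m m ℂ}, D.PosSemidef → (T * D * T).PosSemidef := by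
    intro D hD
    have := hD.mul_mul_conjTranspose_same T
    rwa [hTh] at this
  have hback : ∀ D : Matrix m m ℂ, S * (T * D * T) * S = D := by
    intro D
    calc S * (T * D * T) * S = (S * T) * D * (T * S) := by noncomm_ring
    _ = D := by rw [hST, hTS, one_mul, mul_one]
  have hkey : ∀ D : Matrix m m ℂ, D.IsHermitian → (H + D).det.re = H.det.re * (1 + T * D * T).det.re := by
    intro D hD
    have key : H + D = S * (1 + T * D * T) * S := by
      rw [Matrix.mul_add, Matrix.add_mul, mul_one, hSS, hback]
    rw [key, Matrix.det_mul, Matrix.det_mul]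
    have h1 : S.det * S.det = H.det := by rw [← Matrix.det_mul, hSS]
    have hM : (1 + T * D * T).IsHermitian := by
      have := isHermitian_mul_mul_conjTranspose T hD
      rw [hTh] at this
      exact Matrix.isHermitian_one.add this
    calc (S.det * (1 + T * D * T).det * S.det).re
        = ((1 + T * D * T).det * H.det).re := by rw [← h1]; ring_nf
      _ = H.det.re * (1 + T * D * T).det.re := by
          rw [det_real hM, det_real hH.1]; norm_cast; ring
  set P' := T * P * T with hP'
  set Q' := T * Q * T with hQ'
  have hPQ' : T * (P + Q) * T = P' + Q' := by
    rw [Matrix.mul_add, Matrix.add_mul]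
  have e1 : (H + P).det.re = H.det.re * (1 + P').det.re := hkey P hP.1
  have e2 : (H + Q).det.re = H.det.re * (1 + Q').det.re := hkey Q hQ.1
  have e3 : (H + P + Q).det.re = H.det.re * (1 + (P' + Q')).det.re := by
    have := hkey (P + Q) (hP.add hQ).1
    rw [hPQ'] at this
    rw [← add_assoc] at this
    exact this
  rw [e1, e2, e3]
  have hpos : 0 < H.det.re := by
    have := hH.det_pos
    rw [RCLike.pos_iff] at this
    exact this.1
  have hcore := detre_one_add_sub_superadd (hconjps hP) (hconjps hQ)
  nlinarith [hcore, hpos]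


lemma detre_rayleigh {W : Matrix m m ℂ} (hW : W.PosSemidef)
    (h1W : ((1 : Matrix m m ℂ) - W).PosSemidef) (v : m → ℂ) :
    W.det.re * (dotProduct (star v) v).re
      ≤ (dotProduct (star v) (W *ᵥ v)).re := by
  classical
  set μ := hW.1.eigenvalues with hμ
  set U : Matrix m m ℂ := (hW.1.eigenvectorUnitary : Matrix m m ℂ) with hU
  have hUU : U * star U = 1 := Unitary.coe_mul_star_self _
  have hUU' : star U * U = 1 := Unitary.coe_star_mul_self _
  -- eigenvalues in [0,1]
  have hmu0 : ∀ i, 0 ≤ μ i := fun i => hW.eigenvalues_nonneg i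
  have hmu1 : ∀ i, μ i ≤ 1 := by
    intro i
    set u : m → ℂ := ⇑(hW.1.eigenvectorBasis i) with hu
    have hnorm : dotProduct (star u) u = 1 := by
      have h := congrFun (congrFun hUU' i) i
      simp only [Matrix.mul_apply, Matrix.one_apply_eq] at h
      rw [← h]
      simp [dotProduct, Matrix.star_apply, hu, hU, Matrix.IsHermitian.eigenvectorUnitary_apply,
        mul_comm]
    have hpos := h1W.dotProduct_mulVec_nonneg u
    have hsub : dotProduct (star u) (((1 : Matrix m m ℂ) - W) *ᵥ u)
        = 1 - dotProduct (star u) (W *ᵥ u) := by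
      rw [Matrix.sub_mulVec, dotProduct_sub, Matrix.one_mulVec, hnorm]
    rw [hsub] at hpos
    have hre := (Complex.le_def.mp hpos).1
    simp only [Complex.zero_re, Complex.sub_re, Complex.one_re] at hre
    have heig := hW.1.eigenvalues_eq i
    rw [← hu] at heig
    have : (dotProduct (star u) (W *ᵥ u)).re = μ i := by
      rw [hμ, heig]; rfl
    linarith [hre, this.symm.le]
  -- transfer to diagonal form
  set c : m → ℂ := star U *ᵥ v with hc
  have hstarc : star c = star v ᵥ* U := by
    rw [hc, Matrix.star_mulVec, Matrix.star_eq_conjTranspose, Matrix.conjTranspose_conjTranspose]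
  have h1 : dotProduct (star v) (W *ᵥ v)
      = dotProduct (star c) (Matrix.diagonal (RCLike.ofReal ∘ μ) *ᵥ c) := by
    conv_lhs => rw [hW.1.spectral_theorem, Unitary.conjStarAlgAut_apply]
    rw [← Matrix.mulVec_mulVec, Matrix.dotProduct_mulVec, ← Matrix.vecMul_vecMul,
      ← hstarc, ← Matrix.dotProduct_mulVec]
  have h2 : dotProduct (star v) v = dotProduct (star c) c := by
    rw [hstarc, hc, ← Matrix.dotProduct_mulVec, Matrix.mulVec_mulVec, hUU, Matrix.one_mulVec]
  rw [h1, h2]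
  have hdet : W.det.re = ∏ i, μ i := by
    have := hW.1.det_eq_prod_eigenvalues
    rw [this]; norm_cast
  rw [hdet]
  have hre1 : (dotProduct (star c) (Matrix.diagonal (RCLike.ofReal ∘ μ) *ᵥ c)).re
      = ∑ i, μ i * Complex.normSq (c i) := by
    rw [dotProduct, Complex.re_sum]
    refine Finset.sum_congr rfl fun i _ => ?_
    simp only [Pi.star_apply, Matrix.mulVec_diagonal]
    have : star (c i) * (((μ i : ℝ) : ℂ) * c i) = ((μ i : ℝ) : ℂ) * ((Complex.normSq (c i) : ℝ) : ℂ) := by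
      rw [← Complex.mul_conj (c i)]
      simp [Complex.star_def]
      ring
    rw [show ((RCLike.ofReal ∘ μ) i : ℂ) = ((μ i : ℝ) : ℂ) from rfl, this,
      ← Complex.ofReal_mul]
    exact Complex.ofReal_re _
  have hre2 : (dotProduct (star c) c).re = ∑ i, Complex.normSq (c i) := by
    rw [dotProduct, Complex.re_sum]
    refine Finset.sum_congr rfl fun i _ => ?_
    simp only [Pi.star_apply]
    rw [Complex.star_def, mul_comm, Complex.mul_conj]
    exact Complex.ofReal_re _
  rw [hre1, hre2, Finset.mul_sum]
  refine Finset.sum_le_sum fun i _ => ?_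
  have hple : ∏ j, μ j ≤ μ i := by
    rw [← Finset.mul_prod_erase Finset.univ μ (Finset.mem_univ i)]
    have h1' : ∏ j ∈ Finset.univ.erase i, μ j ≤ 1 :=
      Finset.prod_le_one (fun j _ => hmu0 j) (fun j _ => hmu1 j)
    nlinarith [hmu0 i]
  nlinarith [Complex.normSq_nonneg (c i), hple]



lemma contraction_sum_le {W Z : Matrix m m ℂ} (hW : W.PosSemidef) (hZ : Z.PosSemidef)
    (h1W : ((1 : Matrix m m ℂ) - W).PosSemidef) (h1Z : ((1 : Matrix m m ℂ) - Z).PosSemidef)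
    {v : m → ℂ} (hv0 : v ≠ 0)
    (hv : (dotProduct (star v) ((W + Z) *ᵥ v)).re ≤ (dotProduct (star v) v).re) :
    W.det.re + Z.det.re ≤ 1 := by
  set t := (dotProduct (star v) v).re with ht
  have htpos : 0 < t := by
    have h := (Matrix.dotProduct_star_self_pos_iff (v := v)).mpr hv0
    exact (Complex.lt_def.mp h).1
  have h1 := detre_rayleigh hW h1W v
  have h2 := detre_rayleigh hZ h1Z v
  rw [Matrix.add_mulVec, dotProduct_add, Complex.add_re] at hv
  have : (W.det.re + Z.det.re) * t ≤ 1 * t := by rw [one_mul]; nlinarith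
  exact le_of_mul_le_mul_right this htpos

lemma case2_core {X W Z : Matrix m m ℂ} (hXpd : X.PosDef) (hW : W.PosSemidef)
    (hZ : Z.PosSemidef) (hXW : (X - W).PosSemidef) (hXZ : (X - Z).PosSemidef)
    {v : m → ℂ} (hv0 : v ≠ 0)
    (hv : (dotProduct (star v) ((W + Z) *ᵥ v)).re
      ≤ (dotProduct (star v) (X *ᵥ v)).re) :
    W.det.re + Z.det.re ≤ X.det.re := by
  classical
  have hXps : X.PosSemidef := hXpd.posSemidef
  set S : Matrix m m ℂ := (psd_sqrt_exists hXps).choose with hSdef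
  have hSps : S.PosSemidef := (psd_sqrt_exists hXps).choose_spec.1
  have hSh : Sᴴ = S := hSps.1
  have hSS : S * S = X := (psd_sqrt_exists hXps).choose_spec.2
  have hdet : X.det ≠ 0 := hXpd.det_pos.ne'
  have hdetS : IsUnit S.det := by
    have : S.det * S.det = X.det := by rw [← Matrix.det_mul, hSS]
    exact isUnit_of_mul_isUnit_left (this ▸ hdet.isUnit)
  set T : Matrix m m ℂ := S⁻¹ with hTdef
  have hTS : T * S = 1 := Matrix.nonsing_inv_mul S hdetS
  have hST : S * T = 1 := Matrix.mul_nonsing_inv S hdetS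
  have hTh : Tᴴ = T := by rw [hTdef, Matrix.conjTranspose_nonsing_inv, hSh]
  have hconjps : ∀ {D : Matrix m m ℂ}, D.PosSemidef → (T * D * T).PosSemidef := by
    intro D hD
    have := hD.mul_mul_conjTranspose_same T
    rwa [hTh] at this
  have hback : ∀ D : Matrix m m ℂ, S * (T * D * T) * S = D := by
    intro D
    calc S * (T * D * T) * S = (S * T) * D * (T * S) := by noncomm_ring
    _ = D := by rw [hST, hTS, one_mul, mul_one]
  have hTXT : T * X * T = 1 := by
    rw [← hSS]
    calc T * (S * S) * T = (T * S) * (S * T) := by noncomm_ring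
    _ = 1 := by rw [hTS, hST, one_mul]
  set W' := T * W * T with hW'def
  set Z' := T * Z * T with hZ'def
  have h1W' : ((1 : Matrix m m ℂ) - W').PosSemidef := by
    have : (1 : Matrix m m ℂ) - W' = T * (X - W) * T := by
      rw [Matrix.mul_sub, Matrix.sub_mul, hTXT]
    rw [this]; exact hconjps hXW
  have h1Z' : ((1 : Matrix m m ℂ) - Z').PosSemidef := by
    have : (1 : Matrix m m ℂ) - Z' = T * (X - Z) * T := by
      rw [Matrix.mul_sub, Matrix.sub_mul, hTXT]
    rw [this]; exact hconjps hXZ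
  set v' : m → ℂ := S *ᵥ v with hv'def
  have hv'0 : v' ≠ 0 := by
    intro h
    apply hv0
    have : T *ᵥ (S *ᵥ v) = 0 := by rw [← hv'def, h, Matrix.mulVec_zero]
    rwa [Matrix.mulVec_mulVec, hTS, Matrix.one_mulVec] at this
  have hdot : ∀ M : Matrix m m ℂ, dotProduct (star v') (M *ᵥ v')
      = dotProduct (star v) ((S * M * S) *ᵥ v) := by
    intro M
    rw [hv'def, Matrix.star_mulVec, hSh, Matrix.mulVec_mulVec, Matrix.dotProduct_mulVec,
      Matrix.vecMul_vecMul, ← Matrix.dotProduct_mulVec, mul_assoc]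
  have hv' : (dotProduct (star v') ((W' + Z') *ᵥ v')).re
      ≤ (dotProduct (star v') v').re := by
    have e1 : S * (W' + Z') * S = W + Z := by
      rw [Matrix.mul_add, Matrix.add_mul, hback, hback]
    have e2 : dotProduct (star v') v' = dotProduct (star v) (X *ᵥ v) := by
      have := hdot 1
      rwa [Matrix.one_mulVec, mul_one, hSS] at this
    rw [hdot _, e1, e2]
    exact hv
  have hcore := contraction_sum_le (hconjps hW) (hconjps hZ) h1W' h1Z' hv'0 hv'
  have hdetid : ∀ D : Matrix m m ℂ, D.IsHermitian → (T * D * T).PosSemidef →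
      D.det.re = X.det.re * (T * D * T).det.re := by
    intro D hD hps
    conv_lhs => rw [← hback D]
    rw [Matrix.det_mul, Matrix.det_mul]
    have h1 : S.det * S.det = X.det := by rw [← Matrix.det_mul, hSS]
    calc (S.det * (T * D * T).det * S.det).re
        = ((T * D * T).det * X.det).re := by rw [← h1]; ring_nf
      _ = X.det.re * (T * D * T).det.re := by
          rw [det_real hps.1, det_real hXpd.1]; norm_cast; ring
  have hXre : 0 < X.det.re := (Complex.lt_def.mp hXpd.det_pos).1
  rw [hdetid W hW.1 (hconjps hW), hdetid Z hZ.1 (hconjps hZ)]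
  nlinarith [hcore, hXre]

end LinAux

/-- Lin's determinant lemma. -/
theorem stmt15 {n : ℕ} (X Y W Z : Matrix (Fin n) (Fin n) ℂ)
    (hX : X.PosSemidef) (hY : Y.PosSemidef) (hW : W.PosSemidef) (hZ : Z.PosSemidef)
    (hXW : (X - W).PosSemidef) (hXZ : (X - Z).PosSemidef)
    (hXY : ((X + Y) - (W + Z)).PosSemidef) :
    X.det.re + Y.det.re ≥ W.det.re + Z.det.re := by
  rw [ge_iff_le]
  set H : Matrix (Fin n) (Fin n) ℂ := W + Z - X with hHdef
  have hHherm : H.IsHermitian := (hW.1.add hZ.1).sub hX.1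
  by_cases hH : H.PosDef
  · -- Case 1 : H is positive definite, use supermodularity
    have hsup := detre_supermod hH hXW hXZ
    have h1 : H + (X - W) = Z := by rw [hHdef]; abel
    have h2 : H + (X - Z) = W := by rw [hHdef]; abel
    have h3 : H + (X - W) + (X - Z) = X := by rw [hHdef]; abel
    rw [h3, h1, h2] at hsup
    have hHY : (Y - H).PosSemidef := by
      have : Y - H = X + Y - (W + Z) := by rw [hHdef]; abel
      rw [this]; exact hXY
    have hmono := detre_mono hH.posSemidef hHY
    linarith
  · -- Case 2 : there is a direction where H is not positive
    have hnot : ¬ ∀ x : Fin n → ℂ, x ≠ 0 → 0 < dotProduct (star x) (H *ᵥ x) :=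
      fun h => hH (posDef_iff_dotProduct_mulVec.mpr ⟨hHherm, h⟩)
    push_neg at hnot
    obtain ⟨v, hv0, hvle⟩ := hnot
    set d : ℂ := dotProduct (star v) (H *ᵥ v) with hd
    have hdstar : star d = d := by
      have h1 : star d = (star v ᵥ* H) ⬝ᵥ v := by
        rw [hd, Matrix.star_dotProduct, star_star, Matrix.star_mulVec, hHherm.eq]
      rw [h1, ← Matrix.dotProduct_mulVec, hd]
    have hdim : d.im = 0 := Complex.conj_eq_iff_im.mp hdstar
    have hdre : d.re ≤ 0 := by
      by_contra h
      exact hvle (Complex.lt_def.mpr ⟨by simpa using lt_of_not_ge h, by simp [hdim]⟩)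
    clear hvle
    have hv : (dotProduct (star v) ((W + Z) *ᵥ v)).re
        ≤ (dotProduct (star v) (X *ᵥ v)).re := by
      have hsplit : d = dotProduct (star v) ((W + Z) *ᵥ v)
          - dotProduct (star v) (X *ᵥ v) := by
        rw [hd, hHdef, Matrix.sub_mulVec, dotProduct_sub]
      have := congrArg Complex.re hsplit
      rw [Complex.sub_re] at this
      linarith [hdre, this.symm.le, this.le]
    by_cases hXpd : X.PosDef
    · have hcase := case2_core hXpd hW hZ hXW hXZ hv0 hv
      linarith [detre_nonneg hY]
    · have hXdet : X.det.re = 0 := by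
        by_contra h
        refine hXpd (posDef_of_det_ne hX fun h0 => h ?_)
        rw [h0]; rfl
      linarith [detre_mono hW hXW, detre_mono hZ hXZ, detre_nonneg hY]
end

section
/- Let A, B, C be positive semidefinite matrices of the same order. Then det(A + B + C) + det C ≥ det(A + C) + det(B + C). -/
open Matrix BigOperators ComplexOrder

section Aux

variable {m : Type*} [Fintype m] [DecidableEq m]

lemma psd_det_eq (X : Matrix m m ℂ) (hX : X.PosSemidef) :
    X.det = (X.det.re : ℂ) ∧ 0 ≤ X.det.re := by
  have h := hX.1.det_eq_prod_eigenvalues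
  have h2 : X.det = ((∏ i, hX.1.eigenvalues i : ℝ) : ℂ) := by
    rw [h]; push_cast; rfl
  constructor
  · rw [h2, Complex.ofReal_re]
  · rw [h2, Complex.ofReal_re]
    exact Finset.prod_nonneg fun i _ => hX.eigenvalues_nonneg i

lemma one_le_det_add_one (M : Matrix m m ℂ) (hM : M.PosSemidef) :
    1 ≤ (M + 1).det.re := by
  have hH : (M + 1).PosSemidef := hM.add .one
  have hev : ∀ i, 1 ≤ hH.1.eigenvalues i := by
    intro i
    rw [hH.1.eigenvalues_eq i]
    set v : m → ℂ := ⇑(hH.1.eigenvectorBasis i) with hv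
    have h1 : (M + 1) *ᵥ v = M *ᵥ v + v := by
      rw [add_mulVec, one_mulVec]
    rw [h1, dotProduct_add]
    have h2 : 0 ≤ (dotProduct (star v) (M *ᵥ v)).re := by
      have := hM.dotProduct_mulVec_nonneg v
      rw [Complex.le_def] at this
      simpa using this.1
    have h3 : (dotProduct (star v) v) = (1 : ℂ) := by
      have hn := hH.1.eigenvectorBasis.orthonormal.1 i
      rw [hv, dotProduct_comm, ← EuclideanSpace.inner_eq_star_dotProduct,
        inner_self_eq_norm_sq_to_K, hn]
      norm_num
    rw [map_add, h3]
    simpa using h2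
  have hdet := hH.1.det_eq_prod_eigenvalues
  have h2 : (M+1).det = ((∏ i, hH.1.eigenvalues i : ℝ) : ℂ) := by
    rw [hdet]; push_cast; rfl
  rw [h2, Complex.ofReal_re]
  calc (1:ℝ) = ∏ _i : m, (1:ℝ) := by simp
    _ ≤ ∏ i, hH.1.eigenvalues i :=
      Finset.prod_le_prod (by simp) (by intro i _; simpa using hev i)


open scoped MatrixOrder in
lemma det_re_mono (B C : Matrix m m ℂ) (hB : B.PosSemidef)
    (hC : C.PosSemidef) : C.det.re ≤ (B + C).det.re := by
  by_cases hd : C.det = 0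
  · rw [hd]
    simpa using (psd_det_eq _ (hB.add hC)).2
  · set Q := CFC.sqrt C with hQdef
    have hQ : Q.PosSemidef := (CFC.sqrt_nonneg C).posSemidef
    have hQQ : Q * Q = C := CFC.sqrt_mul_sqrt_self C hC.nonneg
    have hdQ : IsUnit Q.det := by
      rw [isUnit_iff_ne_zero]
      intro h0
      apply hd
      rw [← hQQ, det_mul, h0, mul_zero]
    have hQi : Q⁻¹.PosSemidef := hQ.inv
    set M := Q⁻¹ * B * Q⁻¹ with hM
    have hMpsd : M.PosSemidef := by
      have := hB.conjTranspose_mul_mul_same Q⁻¹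
      rwa [hQi.1.eq] at this
    have hfact : B + C = Q * (M + 1) * Q := by
      rw [hM, mul_add, add_mul, mul_one]
      rw [← mul_assoc, ← mul_assoc, mul_nonsing_inv _ hdQ, one_mul,
        mul_assoc, nonsing_inv_mul _ hdQ, mul_one, hQQ]
    have hdet : (B + C).det = C.det * (M + 1).det := by
      rw [hfact, det_mul, det_mul, ← hQQ, det_mul]; ring
    obtain ⟨hCre, hCnn⟩ := psd_det_eq C hC
    have hM1 : (M + 1).PosSemidef := hMpsd.add .one
    obtain ⟨hMre, _⟩ := psd_det_eq _ hM1
    have h1 := one_le_det_add_one M hMpsd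
    have : (B + C).det.re = C.det.re * (M + 1).det.re := by
      rw [hdet, hCre, hMre, ← Complex.ofReal_mul, Complex.ofReal_re]; simp
    rw [this]
    exact le_mul_of_one_le_right hCnn h1

end Aux

section Diag

variable {n : ℕ}

lemma update_piecewise_not_mem {α : Type*} {β : α → Type*} [DecidableEq α]
    (S : Finset α) (f g : ∀ i, β i) (a : α) (ha : a ∉ S) (x : β a) :
    Function.update (S.piecewise f g) a x = S.piecewise f (Function.update g a x) := by
  funext i
  by_cases hi : i ∈ S
  · have : i ≠ a := fun h => ha (h ▸ hi)
    rw [Function.update_of_ne this, S.piecewise_eq_of_mem _ _ hi,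
      S.piecewise_eq_of_mem _ _ hi]
  · rw [S.piecewise_eq_of_notMem _ _ hi]
    by_cases hia : i = a
    · subst hia; simp
    · rw [Function.update_of_ne hia, Function.update_of_ne hia,
        S.piecewise_eq_of_notMem _ _ hi]

lemma det_piecewise_smul (c : Fin n → ℂ) (r M : Matrix (Fin n) (Fin n) ℂ)
    (S : Finset (Fin n)) :
    (Matrix.det (S.piecewise (fun i => c i • r i) M : Matrix (Fin n) (Fin n) ℂ))
      = (∏ i ∈ S, c i) * Matrix.det (S.piecewise r M : Matrix (Fin n) (Fin n) ℂ) := by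
  classical
  induction S using Finset.induction_on generalizing M with
  | empty => erw [Finset.piecewise_empty]; simp
  | @insert a S ha ih =>
    erw [Finset.piecewise_insert, Finset.piecewise_insert]
    have h1 : Matrix.det (Function.update (S.piecewise (fun i => c i • r i) M) a (c a • r a))
        = c a * Matrix.det (Function.update (S.piecewise (fun i => c i • r i) M) a (r a)) :=
      Matrix.det_updateRow_smul _ a (c a) (r a)
    erw [h1, update_piecewise_not_mem S _ _ a ha, ih,
      update_piecewise_not_mem S _ _ a ha, Finset.prod_insert ha]
    ring

lemma det_piecewise_one_s16 (S : Finset (Fin n)) (M : Matrix (Fin n) (Fin n) ℂ) :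
    Matrix.det (S.piecewise (1 : Matrix (Fin n) (Fin n) ℂ) M : Matrix (Fin n) (Fin n) ℂ)
      = (M.submatrix (fun a : {i // i ∉ S} => (a : Fin n)) (fun a : {i // i ∉ S} => (a : Fin n))).det := by
  classical
  let e : {i // i ∈ S} ⊕ {i // i ∉ S} ≃ Fin n := Equiv.sumCompl (fun i => i ∈ S)
  refine (Matrix.det_submatrix_equiv_self e _).symm.trans ?_
  have hblock : (Matrix.of (S.piecewise (1 : Matrix (Fin n) (Fin n) ℂ) M)).submatrix e e
      = Matrix.fromBlocks 1 0
        (M.submatrix (fun a : {i // i ∉ S} => (a : Fin n)) (fun a : {i // i ∈ S} => (a : Fin n)))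
        (M.submatrix (fun a : {i // i ∉ S} => (a : Fin n)) (fun a : {i // i ∉ S} => (a : Fin n))) := by
    ext i j
    cases i with
    | inl i =>
      cases j with
      | inl j =>
        simp only [e, submatrix_apply, Matrix.of_apply, Equiv.sumCompl_apply_inl,
          S.piecewise_eq_of_mem _ _ i.2, fromBlocks_apply₁₁, one_apply]
        erw [S.piecewise_eq_of_mem _ _ i.2]
        rw [one_apply]
        by_cases h : i = j
        · subst h; simp
        · rw [if_neg (fun hc => h (Subtype.ext hc)), if_neg h]
      | inr j =>
        simp only [e, submatrix_apply, Matrix.of_apply, Equiv.sumCompl_apply_inl,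
          Equiv.sumCompl_apply_inr, S.piecewise_eq_of_mem _ _ i.2,
          fromBlocks_apply₁₂, one_apply, Matrix.zero_apply]
        erw [S.piecewise_eq_of_mem _ _ i.2]
        rw [one_apply]
        rw [if_neg]
        intro hc
        exact j.2 (hc ▸ i.2)
    | inr i =>
      cases j with
      | inl j =>
        simp [e, S.piecewise_eq_of_notMem _ _ i.2]
        erw [S.piecewise_eq_of_notMem _ _ i.2]
      | inr j =>
        simp [e, S.piecewise_eq_of_notMem _ _ i.2]
        erw [S.piecewise_eq_of_notMem _ _ i.2]
  rw [show (S.piecewise (1 : Matrix (Fin n) (Fin n) ℂ) M : Matrix (Fin n) (Fin n) ℂ)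
      = Matrix.of (S.piecewise (1 : Matrix (Fin n) (Fin n) ℂ) M) from rfl, hblock,
    Matrix.det_fromBlocks_zero₁₂]
  simp

lemma det_diagonal_add (d : Fin n → ℂ) (M : Matrix (Fin n) (Fin n) ℂ) :
    (Matrix.diagonal d + M).det = ∑ S : Finset (Fin n), (∏ i ∈ S, d i) *
      (M.submatrix (fun a : {i // i ∉ S} => (a : Fin n)) (fun a : {i // i ∉ S} => (a : Fin n))).det := by
  classical
  have h0 : (Matrix.diagonal d + M).det
      = (detRowAlternating : (Fin n → ℂ) [⋀^Fin n]→ₗ[ℂ] ℂ)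
        ((Matrix.diagonal d : Fin n → Fin n → ℂ) + (M : Fin n → Fin n → ℂ)) := rfl
  rw [h0]
  refine Eq.trans ((detRowAlternating : (Fin n → ℂ) [⋀^Fin n]→ₗ[ℂ] ℂ).toMultilinearMap.map_add_univ
    (Matrix.diagonal d) M) ?_
  refine Finset.sum_congr rfl fun S _ => ?_
  have hdrow : (Matrix.diagonal d : Fin n → Fin n → ℂ)
      = fun i => d i • (1 : Matrix (Fin n) (Fin n) ℂ) i := by
    funext i j
    simp [Matrix.diagonal_apply, Matrix.one_apply, mul_ite]
  show Matrix.det (S.piecewise (Matrix.diagonal d) M : Matrix (Fin n) (Fin n) ℂ) = _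
  rw [hdrow, det_piecewise_smul, det_piecewise_one_s16]

set_option maxHeartbeats 1000000 in
lemma key_diag (d : Fin n → ℝ) (hd : ∀ i, 0 ≤ d i) (B C : Matrix (Fin n) (Fin n) ℂ)
    (hB : B.PosSemidef) (hC : C.PosSemidef) :
    (Matrix.diagonal (fun i => (d i : ℂ)) + C).det.re + (B + C).det.re
      ≤ (Matrix.diagonal (fun i => (d i : ℂ)) + (B + C)).det.re + C.det.re := by
  classical
  rw [det_diagonal_add, det_diagonal_add, Complex.re_sum, Complex.re_sum]
  -- each summand has the form (∏ d) * (minor det).re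
  have hterm : ∀ (M : Matrix (Fin n) (Fin n) ℂ) (S : Finset (Fin n)),
      ((∏ i ∈ S, ((d i : ℂ))) *
        (M.submatrix (fun a : {i // i ∉ S} => (a : Fin n)) (fun a : {i // i ∉ S} => (a : Fin n))).det).re
      = (∏ i ∈ S, d i) *
        (M.submatrix (fun a : {i // i ∉ S} => (a : Fin n)) (fun a : {i // i ∉ S} => (a : Fin n))).det.re := by
    intro M S
    rw [← Complex.ofReal_prod, Complex.re_ofReal_mul]
  simp only [hterm]
  -- split off the S = ∅ term
  have hmem : (∅ : Finset (Fin n)) ∈ (Finset.univ : Finset (Finset (Fin n))) := Finset.mem_univ _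
  rw [← Finset.add_sum_erase _ _ hmem, ← Finset.add_sum_erase _ _ hmem]
  have hfull : ∀ (M : Matrix (Fin n) (Fin n) ℂ),
      (M.submatrix (fun a : {i // i ∉ (∅ : Finset (Fin n))} => (a : Fin n))
        (fun a : {i // i ∉ (∅ : Finset (Fin n))} => (a : Fin n))).det = M.det := by
    intro M
    exact Matrix.det_submatrix_equiv_self (Equiv.subtypeUnivEquiv (by simp)) M
  rw [hfull, hfull]
  simp only [Finset.prod_empty, one_mul]
  have hsum : ∑ S ∈ (Finset.univ.erase (∅ : Finset (Fin n))),
        (∏ i ∈ S, d i) *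
          (C.submatrix (fun a : {i // i ∉ S} => (a : Fin n)) (fun a : {i // i ∉ S} => (a : Fin n))).det.re
      ≤ ∑ S ∈ (Finset.univ.erase (∅ : Finset (Fin n))),
        (∏ i ∈ S, d i) *
          ((B + C).submatrix (fun a : {i // i ∉ S} => (a : Fin n)) (fun a : {i // i ∉ S} => (a : Fin n))).det.re := by
    refine Finset.sum_le_sum fun S _ => ?_
    refine mul_le_mul_of_nonneg_left ?_ (Finset.prod_nonneg fun i _ => hd i)
    have heq : ((B + C).submatrix (fun a : {i // i ∉ S} => (a : Fin n)) (fun a : {i // i ∉ S} => (a : Fin n)))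
        = (B.submatrix (fun a : {i // i ∉ S} => (a : Fin n)) (fun a : {i // i ∉ S} => (a : Fin n)))
          + (C.submatrix (fun a : {i // i ∉ S} => (a : Fin n)) (fun a : {i // i ∉ S} => (a : Fin n))) := rfl
    rw [heq]
    exact det_re_mono _ _ (hB.submatrix _) (hC.submatrix _)
  linarith

end Diag

/-- det(A+B+C) + det C ≥ det(A+C) + det(B+C) for PSD A, B, C. -/
theorem stmt16 {n : ℕ} (A B C : Matrix (Fin n) (Fin n) ℂ)
    (hA : A.PosSemidef) (hB : B.PosSemidef) (hC : C.PosSemidef) :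
    (A + B + C).det.re + C.det.re ≥ (A + C).det.re + (B + C).det.re := by
  classical
  set U : Matrix (Fin n) (Fin n) ℂ := (hA.1.eigenvectorUnitary : Matrix (Fin n) (Fin n) ℂ) with hUdef
  have hU1 : U * star U = 1 := (Matrix.mem_unitaryGroup_iff).mp hA.1.eigenvectorUnitary.2
  have hU2 : star U * U = 1 := mul_eq_one_comm.mp hU1
  set d : Fin n → ℝ := hA.1.eigenvalues with hddef
  have hd : ∀ i, 0 ≤ d i := hA.eigenvalues_nonneg
  set D : Matrix (Fin n) (Fin n) ℂ := Matrix.diagonal (fun i => (d i : ℂ)) with hDdef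
  have hspec : A = U * D * star U := by
    have h := hA.1.spectral_theorem
    exact h
  have hdetU : U.det * (star U).det = 1 := by
    have h := congrArg Matrix.det hU1
    rwa [det_mul, det_one] at h
  have hdetconj : ∀ X : Matrix (Fin n) (Fin n) ℂ, (star U * X * U).det = X.det := by
    intro X
    rw [det_mul, det_mul]
    calc (star U).det * X.det * U.det = X.det * (U.det * (star U).det) := by ring
      _ = X.det := by rw [hdetU, mul_one]
  have hexpand : ∀ X : Matrix (Fin n) (Fin n) ℂ, (A + X).det = (D + star U * X * U).det := by
    intro X
    have hfact : A + X = U * (D + star U * X * U) * star U := by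
      have h2 : U * (star U * X * U) * star U = X := by
        rw [← mul_assoc, ← mul_assoc, hU1, one_mul, mul_assoc, hU1, mul_one]
      rw [mul_add, add_mul, h2]
      conv_lhs => rw [hspec]
    rw [hfact, det_mul, det_mul]
    calc U.det * (D + star U * X * U).det * (star U).det
        = (D + star U * X * U).det * (U.det * (star U).det) := by ring
      _ = (D + star U * X * U).det := by rw [hdetU, mul_one]
  set B' : Matrix (Fin n) (Fin n) ℂ := star U * B * U with hB'def
  set C' : Matrix (Fin n) (Fin n) ℂ := star U * C * U with hC'def
  have hB' : B'.PosSemidef := by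
    have := hB.conjTranspose_mul_mul_same U
    rwa [← Matrix.star_eq_conjTranspose] at this
  have hC' : C'.PosSemidef := by
    have := hC.conjTranspose_mul_mul_same U
    rwa [← Matrix.star_eq_conjTranspose] at this
  have hBC' : star U * (B + C) * U = B' + C' := by rw [mul_add, add_mul]
  have h1 : (A + B + C).det = (D + (B' + C')).det := by
    rw [add_assoc, hexpand (B + C), hBC']
  have h2 : (A + C).det = (D + C').det := hexpand C
  have h3 : C.det = C'.det := (hdetconj C).symm
  have h4 : (B + C).det = (B' + C').det := by rw [← hdetconj (B + C), hBC']
  rw [h1, h2, h3, h4]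
  exact key_diag d hd B' C' hB' hC'
end

section
/- Let A ∈ M_m(M_n) be positive semidefinite. Then (tr A)^{mn} + (det(tr₂A))^n ≥ n^{mn}·(det A + (det(tr₁A))^m). -/
open Matrix BigOperators ComplexOrder

open Kronecker

open scoped MatrixOrder

section auxgen

variable {ι : Type*} [Fintype ι] [DecidableEq ι]

lemma herm_det_eq {H : Matrix ι ι ℂ} (hH : H.IsHermitian) :
    H.det = ((∏ i, hH.eigenvalues i : ℝ) : ℂ) := by
  rw [hH.det_eq_prod_eigenvalues]; push_cast; rfl

lemma herm_trace_eq {H : Matrix ι ι ℂ} (hH : H.IsHermitian) :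
    H.trace = ((∑ i, hH.eigenvalues i : ℝ) : ℂ) := by
  rw [hH.trace_eq_sum_eigenvalues]; push_cast; rfl

omit [DecidableEq ι] in
lemma amgm_aux {d : ℕ} (hd : 0 < d) (l : ι → ℝ) (hl : ∀ i, 0 ≤ l i)
    (hcard : Fintype.card ι = d) :
    (d : ℝ) ^ d * ∏ i, l i ≤ (∑ i, l i) ^ d := by
  have hd' : (d : ℝ) ≠ 0 := Nat.cast_ne_zero.mpr hd.ne'
  have key := Real.geom_mean_le_arith_mean_weighted Finset.univ (fun _ => (d : ℝ)⁻¹) l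
    (fun _ _ => by positivity) (by simp [hcard]; field_simp) (fun i _ => hl i)
  rw [Real.finset_prod_rpow _ _ (fun i _ => hl i)] at key
  have key2 := Real.rpow_le_rpow (Real.rpow_nonneg (Finset.prod_nonneg fun i _ => hl i) _) key
    (le_of_lt (by positivity : (0:ℝ) < d))
  rw [← Real.rpow_mul (Finset.prod_nonneg fun i _ => hl i), inv_mul_cancel₀ hd',
    Real.rpow_one] at key2
  have hsum : ∑ i : ι, (d:ℝ)⁻¹ * l i = (d:ℝ)⁻¹ * ∑ i, l i := by rw [Finset.mul_sum]
  rw [hsum, Real.rpow_natCast, mul_pow, inv_pow] at key2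
  calc (d:ℝ)^d * ∏ i, l i ≤ (d:ℝ)^d * (((d:ℝ)^d)⁻¹ * (∑ i, l i)^d) := by
        apply mul_le_mul_of_nonneg_left key2 (by positivity)
    _ = (∑ i, l i)^d := by field_simp

lemma amgm_det {d : ℕ} (hd : 0 < d) {Y : Matrix ι ι ℂ} (hY : Y.PosSemidef)
    (hcard : Fintype.card ι = d) :
    (d : ℝ) ^ d * Y.det.re ≤ Y.trace.re ^ d := by
  have h1 : Y.det.re = ∏ i, hY.1.eigenvalues i := by
    rw [herm_det_eq hY.1, Complex.ofReal_re]
  have h2 : Y.trace.re = ∑ i, hY.1.eigenvalues i := by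
    rw [herm_trace_eq hY.1, Complex.ofReal_re]
  rw [h1, h2]
  exact amgm_aux hd _ (fun i => hY.eigenvalues_nonneg i) hcard

lemma psd_det_re_nonneg {H : Matrix ι ι ℂ} (hH : H.PosSemidef) : 0 ≤ H.det.re := by
  rw [herm_det_eq hH.1, Complex.ofReal_re]
  exact Finset.prod_nonneg fun i _ => hH.eigenvalues_nonneg i

lemma posDef_of_det_ne_zero {H : Matrix ι ι ℂ} (hH : H.PosSemidef) (h : H.det ≠ 0) :
    H.PosDef := by
  refine Matrix.PosDef.of_dotProduct_mulVec_pos hH.1 fun x hx =>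
    lt_of_le_of_ne (hH.dotProduct_mulVec_nonneg x) fun heq => hx ?_
  have h0 : H *ᵥ x = 0 := (hH.dotProduct_mulVec_zero_iff x).mp heq.symm
  have := congrArg (fun v => H⁻¹ *ᵥ v) h0
  simpa [Matrix.mulVec_mulVec, Matrix.nonsing_inv_mul H (isUnit_iff_ne_zero.mpr h)] using this

end auxgen

section pt

variable {m n : ℕ}

lemma dot_form (A : Matrix (Fin m × Fin n) (Fin m × Fin n) ℂ) (i : Fin m) (x : Fin n → ℂ) :
    star (fun p : Fin m × Fin n => if p.1 = i then x p.2 else 0) ⬝ᵥ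
      A *ᵥ (fun p : Fin m × Fin n => if p.1 = i then x p.2 else 0)
    = ∑ l, ∑ l', star (x l) * (A (i, l) (i, l') * x l') := by
  have key : ∀ p : Fin m × Fin n,
      (A *ᵥ fun q : Fin m × Fin n => if q.1 = i then x q.2 else 0) p
        = ∑ l', A p (i, l') * x l' := by
    intro p
    rw [mulVec, dotProduct, Fintype.sum_prod_type]
    rw [Finset.sum_eq_single i (fun j _ hj => by simp [hj]) (by simp)]
    simp
  rw [dotProduct, Fintype.sum_prod_type]
  rw [Finset.sum_eq_single i (fun j _ hj => by simp [hj]) (by simp)]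
  simp [key, Finset.mul_sum]

lemma ptrace1_form (A : Matrix (Fin m × Fin n) (Fin m × Fin n) ℂ) (x : Fin n → ℂ) :
    star x ⬝ᵥ (ptrace1 A) *ᵥ x =
      ∑ i : Fin m, star (fun p : Fin m × Fin n => if p.1 = i then x p.2 else 0) ⬝ᵥ
        A *ᵥ (fun p : Fin m × Fin n => if p.1 = i then x p.2 else 0) := by
  simp only [dot_form]
  rw [Finset.sum_comm]
  simp only [dotProduct, mulVec, ptrace1, of_apply, Finset.mul_sum, Finset.sum_mul]
  refine Finset.sum_congr rfl fun l _ => ?_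
  rw [Finset.sum_comm]
  refine Finset.sum_congr rfl fun l' _ => rfl

lemma dot_form2 (A : Matrix (Fin m × Fin n) (Fin m × Fin n) ℂ) (l : Fin n) (x : Fin m → ℂ) :
    star (fun p : Fin m × Fin n => if p.2 = l then x p.1 else 0) ⬝ᵥ
      A *ᵥ (fun p : Fin m × Fin n => if p.2 = l then x p.1 else 0)
    = ∑ i, ∑ j, star (x i) * (A (i, l) (j, l) * x j) := by
  have key : ∀ p : Fin m × Fin n,
      (A *ᵥ fun q : Fin m × Fin n => if q.2 = l then x q.1 else 0) p
        = ∑ j, A p (j, l) * x j := by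
    intro p
    rw [mulVec, dotProduct, Fintype.sum_prod_type_right]
    rw [Finset.sum_eq_single l (fun l' _ hl' => by simp [hl']) (by simp)]
    simp
  rw [dotProduct, Fintype.sum_prod_type_right]
  rw [Finset.sum_eq_single l (fun l' _ hl' => by simp [hl']) (by simp)]
  simp [key, Finset.mul_sum]

lemma ptrace2_form (A : Matrix (Fin m × Fin n) (Fin m × Fin n) ℂ) (x : Fin m → ℂ) :
    star x ⬝ᵥ (ptrace2 A) *ᵥ x =
      ∑ l : Fin n, star (fun p : Fin m × Fin n => if p.2 = l then x p.1 else 0) ⬝ᵥ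
        A *ᵥ (fun p : Fin m × Fin n => if p.2 = l then x p.1 else 0) := by
  simp only [dot_form2]
  rw [Finset.sum_comm]
  simp only [dotProduct, mulVec, ptrace2, of_apply, Finset.mul_sum, Finset.sum_mul]
  refine Finset.sum_congr rfl fun i _ => ?_
  rw [Finset.sum_comm]
  refine Finset.sum_congr rfl fun j _ => rfl

lemma ptrace1_isHermitian {A : Matrix (Fin m × Fin n) (Fin m × Fin n) ℂ}
    (hA : A.IsHermitian) : (ptrace1 A).IsHermitian := by
  ext l l'
  simp only [conjTranspose_apply, ptrace1, of_apply, star_sum]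
  exact Finset.sum_congr rfl fun i _ => congrFun (congrFun hA (i, l)) (i, l')

lemma ptrace2_isHermitian {A : Matrix (Fin m × Fin n) (Fin m × Fin n) ℂ}
    (hA : A.IsHermitian) : (ptrace2 A).IsHermitian := by
  ext i j
  simp only [conjTranspose_apply, ptrace2, of_apply, star_sum]
  exact Finset.sum_congr rfl fun l _ => congrFun (congrFun hA (i, l)) (j, l)

lemma ptrace1_posSemidef {A : Matrix (Fin m × Fin n) (Fin m × Fin n) ℂ}
    (hA : A.PosSemidef) : (ptrace1 A).PosSemidef :=
  Matrix.PosSemidef.of_dotProduct_mulVec_nonneg (ptrace1_isHermitian hA.1) (fun x => by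
    rw [ptrace1_form]
    exact Finset.sum_nonneg fun i _ => hA.dotProduct_mulVec_nonneg _)

lemma ptrace2_posSemidef {A : Matrix (Fin m × Fin n) (Fin m × Fin n) ℂ}
    (hA : A.PosSemidef) : (ptrace2 A).PosSemidef :=
  Matrix.PosSemidef.of_dotProduct_mulVec_nonneg (ptrace2_isHermitian hA.1) (fun x => by
    rw [ptrace2_form]
    exact Finset.sum_nonneg fun l _ => hA.dotProduct_mulVec_nonneg _)

lemma ptrace2_posDef (hn : 0 < n) {A : Matrix (Fin m × Fin n) (Fin m × Fin n) ℂ}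
    (hA : A.PosDef) : (ptrace2 A).PosDef := by
  refine Matrix.PosDef.of_dotProduct_mulVec_pos (ptrace2_isHermitian hA.1) fun x hx => ?_
  rw [ptrace2_form]
  refine Finset.sum_pos' (fun l _ => hA.posSemidef.dotProduct_mulVec_nonneg _) ⟨⟨0, hn⟩, Finset.mem_univ _, ?_⟩
  refine hA.dotProduct_mulVec_pos fun hy => ?_
  obtain ⟨i, hi⟩ := Function.ne_iff.mp hx
  exact hi (by simpa using congrFun hy (i, ⟨0, hn⟩))

lemma ptrace1_trace (A : Matrix (Fin m × Fin n) (Fin m × Fin n) ℂ) :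
    (ptrace1 A).trace = A.trace := by
  rw [Matrix.trace, Matrix.trace]
  simp only [Matrix.diag, ptrace1, of_apply, Fintype.sum_prod_type]
  rw [Finset.sum_comm]

lemma traceGA (A : Matrix (Fin m × Fin n) (Fin m × Fin n) ℂ)
    (B : Matrix (Fin m) (Fin m) ℂ) :
    ((B ⊗ₖ (1 : Matrix (Fin n) (Fin n) ℂ)) * A).trace = (B * ptrace2 A).trace := by
  rw [Matrix.trace, Matrix.trace]
  simp only [Matrix.diag, Matrix.mul_apply, Fintype.sum_prod_type, kroneckerMap_apply,
    Matrix.one_apply, mul_ite, mul_one, mul_zero, ite_mul, zero_mul, Finset.sum_ite_eq,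
    Finset.mem_univ, if_true, ptrace2, of_apply, Finset.mul_sum]
  refine Finset.sum_congr rfl fun i _ => ?_
  rw [Finset.sum_comm]

end pt

/-- Theorem 4.4 (second inequality):
(tr A)^{mn} + (det tr₂A)^n ≥ n^{mn}(det A + (det tr₁A)^m). -/
theorem stmt17 {m n : ℕ} (hm : 0 < m) (hn : 0 < n)
    (A : Matrix (Fin m × Fin n) (Fin m × Fin n) ℂ) (hA : A.PosSemidef) :
    A.trace.re ^ (m * n) + (ptrace2 A).det.re ^ n ≥
      (n : ℝ) ^ (m * n) * (A.det.re + (ptrace1 A).det.re ^ m) := by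
  have hS : (ptrace1 A).PosSemidef := ptrace1_posSemidef hA
  have hT : (ptrace2 A).PosSemidef := ptrace2_posSemidef hA
  -- Part 1 : n^(mn) * det(tr₁A)^m ≤ (tr A)^(mn)
  have part1 : (n : ℝ) ^ (m * n) * (ptrace1 A).det.re ^ m ≤ A.trace.re ^ (m * n) := by
    have h1 : (n : ℝ) ^ n * (ptrace1 A).det.re ≤ (ptrace1 A).trace.re ^ n :=
      amgm_det hn hS (Fintype.card_fin n)
    rw [ptrace1_trace] at h1
    have h2 := pow_le_pow_left₀ (mul_nonneg (by positivity) (psd_det_re_nonneg hS)) h1 m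
    calc (n : ℝ) ^ (m * n) * (ptrace1 A).det.re ^ m
        = ((n : ℝ) ^ n * (ptrace1 A).det.re) ^ m := by
          rw [mul_pow, ← pow_mul, Nat.mul_comm n m]
      _ ≤ (A.trace.re ^ n) ^ m := h2
      _ = A.trace.re ^ (m * n) := by rw [← pow_mul, Nat.mul_comm n m]
  -- Part 2 : n^(mn) * det A ≤ det(tr₂A)^n
  have part2 : (n : ℝ) ^ (m * n) * A.det.re ≤ (ptrace2 A).det.re ^ n := by
    rcases eq_or_lt_of_le (psd_det_re_nonneg hA) with h0 | hpos
    · rw [← h0, mul_zero]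
      exact pow_nonneg (psd_det_re_nonneg hT) n
    · have hdA : A.det ≠ 0 := fun h => by simp [h] at hpos
      have hApd : A.PosDef := posDef_of_det_ne_zero hA hdA
      have hTpd : (ptrace2 A).PosDef := ptrace2_posDef hn hApd
      set T := ptrace2 A with hTdef
      have htpos : (0 : ℝ) < T.det.re := by
        have := hTpd.det_pos
        rw [Complex.lt_def] at this
        simpa using this.1
      have hdetT : T.det = ((T.det.re : ℝ) : ℂ) := by
        rw [herm_det_eq hT.1, Complex.ofReal_re]
      have hdetA' : A.det = ((A.det.re : ℝ) : ℂ) := by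
        rw [herm_det_eq hA.1, Complex.ofReal_re]
      have hdT : IsUnit T.det := isUnit_iff_ne_zero.mpr hTpd.det_pos.ne'
      have hTi : (T⁻¹).PosSemidef := hTpd.inv.posSemidef
      set G := T⁻¹ ⊗ₖ (1 : Matrix (Fin n) (Fin n) ℂ) with hGdef
      have hGpsd : G.PosSemidef := by
        have h1 : ((CFC.sqrt T⁻¹) ⊗ₖ (1 : Matrix (Fin n) (Fin n) ℂ))ᴴ
            = CFC.sqrt T⁻¹ ⊗ₖ (1 : Matrix (Fin n) (Fin n) ℂ) := by
          ext p q
          have hs : star (CFC.sqrt T⁻¹ q.1 p.1) = CFC.sqrt T⁻¹ p.1 q.1 := by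
            rw [← conjTranspose_apply, (CFC.sqrt_nonneg _).posSemidef.1]
          by_cases h : p.2 = q.2
          · simp [conjTranspose_apply, Matrix.one_apply, h, hs]
          · simp [conjTranspose_apply, Matrix.one_apply_ne h, Matrix.one_apply_ne' h]
        have h2 : G = ((CFC.sqrt T⁻¹) ⊗ₖ (1 : Matrix (Fin n) (Fin n) ℂ))ᴴ
            * ((CFC.sqrt T⁻¹) ⊗ₖ (1 : Matrix (Fin n) (Fin n) ℂ)) := by
          rw [h1, ← Matrix.mul_kronecker_mul, Matrix.one_mul, CFC.sqrt_mul_sqrt_self _ hTi.nonneg]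
        rw [h2]
        exact posSemidef_conjTranspose_mul_self _
      have hQH : (CFC.sqrt G)ᴴ = CFC.sqrt G := (CFC.sqrt_nonneg G).posSemidef.1
      have hYpsd : (CFC.sqrt G * A * CFC.sqrt G).PosSemidef := by
        have := hA.mul_mul_conjTranspose_same (CFC.sqrt G)
        rwa [hQH] at this
      have htrY : (CFC.sqrt G * A * CFC.sqrt G).trace = (m : ℂ) := by
        rw [Matrix.trace_mul_cycle, CFC.sqrt_mul_sqrt_self _ hGpsd.nonneg, hGdef, traceGA,
          ← hTdef, Matrix.nonsing_inv_mul T hdT, Matrix.trace_one]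
        simp
      have hdetG : G.det = (T.det)⁻¹ ^ n := by
        rw [hGdef, Matrix.det_kronecker]
        simp [Matrix.det_nonsing_inv, Ring.inverse_eq_inv']
      have hQQ : (CFC.sqrt G).det * (CFC.sqrt G).det = G.det := by
        rw [← Matrix.det_mul, CFC.sqrt_mul_sqrt_self _ hGpsd.nonneg]
      have hdetY : (CFC.sqrt G * A * CFC.sqrt G).det = (T.det)⁻¹ ^ n * A.det := by
        rw [Matrix.det_mul, Matrix.det_mul,
          show (CFC.sqrt G).det * A.det * (CFC.sqrt G).det
            = (CFC.sqrt G).det * (CFC.sqrt G).det * A.det from by ring, hQQ, hdetG]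
      have hcard : Fintype.card (Fin m × Fin n) = m * n := by simp
      have key := amgm_det (Nat.mul_pos hm hn) hYpsd hcard
      set t := T.det.re
      set a := A.det.re
      have hdetYre : (CFC.sqrt G * A * CFC.sqrt G).det.re = t⁻¹ ^ n * a := by
        rw [hdetY, hdetT, hdetA']
        rw [← Complex.ofReal_inv, ← Complex.ofReal_pow, ← Complex.ofReal_mul,
          Complex.ofReal_re]
      have htrYre : (CFC.sqrt G * A * CFC.sqrt G).trace.re = (m : ℝ) := by
        rw [htrY]; simp
      rw [hdetYre, htrYre] at key
      push_cast at key
      -- key : ((m:ℝ) * n) ^ (m * n) * (t⁻¹ ^ n * a) ≤ (m:ℝ) ^ (m * n)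
      have hm0 : (0:ℝ) < (m:ℝ) ^ (m * n) := by positivity
      have calc1 : (n : ℝ) ^ (m * n) * a
          = ((m : ℝ) * n) ^ (m * n) * (t⁻¹ ^ n * a) * t ^ n / (m : ℝ) ^ (m * n) := by
        field_simp [mul_pow]
        rw [mul_assoc, ← mul_pow (1 / t), one_div, inv_mul_cancel₀ htpos.ne', one_pow, mul_one]
        ring
      rw [calc1]
      calc ((m : ℝ) * n) ^ (m * n) * (t⁻¹ ^ n * a) * t ^ n / (m : ℝ) ^ (m * n)
          ≤ (m : ℝ) ^ (m * n) * t ^ n / (m : ℝ) ^ (m * n) := by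
            gcongr
        _ = t ^ n := by field_simp
  have expand : (n : ℝ) ^ (m * n) * (A.det.re + (ptrace1 A).det.re ^ m)
      = (n : ℝ) ^ (m * n) * A.det.re + (n : ℝ) ^ (m * n) * (ptrace1 A).det.re ^ m := by ring
  rw [ge_iff_le, expand]
  linarith [part1, part2]
end
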